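/- arXiv:1204.4308 — 6 statements merged into one kernel-verified Lean document; each statement's English description precedes it below -/
import Mathlib

section
/- Let X and Y be Banach spaces and T : X → Y a bounded linear operator with adjoint T* : Y* → X*. Then (1/2)·χ_m(T*(B_{Y*})) ≤ cc_DP(T) ≤ 2·χ_m(T*(B_{Y*})). -/
open Filter Metric Set NormedSpace
open scoped Topology

noncomputable section

/-- The non-symmetrized Hausdorff distance `d̂(A,B) = sup_{a ∈ A} dist(a, B)`,
formulated with an abstract distance function `d`. -/
def hdD {Z : Type*} (d : Z → Z → ℝ) (A B : Set Z) : ℝ :=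
  ⨆ a : A, ⨅ b : B, d a b

/-- `χ₀(A) = inf { d̂(A,F) : F ⊆ A finite nonempty }`. -/
def chi0D {Z : Type*} (d : Z → Z → ℝ) (A : Set Z) : ℝ :=
  sInf {r | ∃ F : Set Z, F ⊆ A ∧ F.Finite ∧ F.Nonempty ∧ r = hdD d A F}

/-- A subset of a normed space is weakly compact if it is compact in the weak topology. -/
def IsWeaklyCompact (𝕜 : Type*) [RCLike 𝕜] {Z : Type*} [NormedAddCommGroup Z]
    [NormedSpace 𝕜 Z] (K : Set Z) : Prop :=
  IsCompact (toWeakSpace 𝕜 Z '' K)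

/-- `cc_DP(T) = sup { χ₀(T(L)) : L ⊆ B_X weakly compact }`. -/
def ccDP (𝕜 : Type*) [RCLike 𝕜] {X Y : Type*} [NormedAddCommGroup X] [NormedSpace 𝕜 X]
    [NormedAddCommGroup Y] [NormedSpace 𝕜 Y] (T : X →L[𝕜] Y) : ℝ :=
  sSup {r | ∃ L : Set X, L.Nonempty ∧ L ⊆ closedBall (0 : X) 1 ∧ IsWeaklyCompact 𝕜 L ∧
    r = chi0D dist (T '' L)}

/-- The measure of Mackey non-compactness of a bounded set `A ⊆ X*`:
`χ_m(A) = sup { χ₀(A|_L) : L ⊆ B_X weakly compact }`, where `A|_L ⊆ ℓ∞(L)`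
carries the supremum distance. -/
def chiMackey (𝕜 : Type*) [RCLike 𝕜] {X : Type*} [NormedAddCommGroup X] [NormedSpace 𝕜 X]
    (A : Set (StrongDual 𝕜 X)) : ℝ :=
  sSup {r | ∃ L : Set X, L ⊆ closedBall (0 : X) 1 ∧ IsWeaklyCompact 𝕜 L ∧
    r = chi0D (fun u v : ↥L → 𝕜 => ⨆ y : L, ‖u y - v y‖)
      ((fun φ : StrongDual 𝕜 X => fun y : L => φ (y : X)) '' A)}

/-- The image of the dual unit ball under the adjoint operator `T*`. -/
def adjointBallImage (𝕜 : Type*) [RCLike 𝕜] {X Y : Type*} [NormedAddCommGroup X]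
    [NormedSpace 𝕜 X] [NormedAddCommGroup Y] [NormedSpace 𝕜 Y] (T : X →L[𝕜] Y) :
    Set (StrongDual 𝕜 X) :=
  {φ | ∃ ψ : StrongDual 𝕜 Y, ‖ψ‖ ≤ 1 ∧ φ = ψ.comp T}


section Helpers

variable {Z : Type*} {d : Z → Z → ℝ} {A B F : Set Z} {c M : ℝ}

lemma hdD_nonneg (hd : ∀ a b, 0 ≤ d a b) (A B : Set Z) : 0 ≤ hdD d A B :=
  Real.iSup_nonneg fun a => Real.iInf_nonneg fun b => hd a b

lemma hdD_le (hd : ∀ a b, 0 ≤ d a b) (hc : 0 ≤ c)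
    (h : ∀ a ∈ A, ∃ b ∈ B, d a b ≤ c) : hdD d A B ≤ c := by
  refine Real.iSup_le (fun a => ?_) hc
  obtain ⟨b, hb, hle⟩ := h a a.2
  exact ciInf_le_of_le ⟨0, by rintro r ⟨b', rfl⟩; exact hd _ _⟩ ⟨b, hb⟩ hle

lemma chi0D_nonneg (hd : ∀ a b, 0 ≤ d a b) (A : Set Z) : 0 ≤ chi0D d A :=
  Real.sInf_nonneg fun r hr => by
    obtain ⟨F, _, _, _, rfl⟩ := hr
    exact hdD_nonneg hd _ _

lemma chi0D_le_hdD (hd : ∀ a b, 0 ≤ d a b) (hFA : F ⊆ A) (hfin : F.Finite)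
    (hne : F.Nonempty) : chi0D d A ≤ hdD d A F :=
  csInf_le ⟨0, fun r hr => by obtain ⟨F', _, _, _, rfl⟩ := hr; exact hdD_nonneg hd _ _⟩
    ⟨F, hFA, hfin, hne, rfl⟩

lemma exists_hdD_lt {a₀ : Z} (ha₀ : a₀ ∈ A) {ε : ℝ} (hε : 0 < ε) :
    ∃ F : Set Z, F ⊆ A ∧ F.Finite ∧ F.Nonempty ∧ hdD d A F < chi0D d A + ε := by
  have hne : {r | ∃ F : Set Z, F ⊆ A ∧ F.Finite ∧ F.Nonempty ∧ r = hdD d A F}.Nonempty :=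
    ⟨hdD d A {a₀}, {a₀}, singleton_subset_iff.2 ha₀, finite_singleton _,
      singleton_nonempty _, rfl⟩
  obtain ⟨r, ⟨F, hFA, hfin, hFne, rfl⟩, hlt⟩ :=
    exists_lt_of_csInf_lt hne (lt_add_of_pos_right (chi0D d A) hε)
  exact ⟨F, hFA, hfin, hFne, hlt⟩

lemma exists_lt_of_hdD_lt (hd : ∀ a b, 0 ≤ d a b) (hBne : B.Nonempty)
    (hM : ∀ a ∈ A, ∀ b ∈ B, d a b ≤ M) (h : hdD d A B < c) {a : Z} (ha : a ∈ A) :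
    ∃ b ∈ B, d a b < c := by
  have hba : BddAbove (range fun a : A => ⨅ b : B, d a b) := by
    refine ⟨M, ?_⟩
    rintro r ⟨a', rfl⟩
    exact ciInf_le_of_le ⟨0, by rintro r ⟨b', rfl⟩; exact hd _ _⟩
      ⟨hBne.choose, hBne.choose_spec⟩ (hM _ a'.2 _ hBne.choose_spec)
  have hlt : (⨅ b : B, d a b) < c := lt_of_le_of_lt (le_ciSup hba ⟨a, ha⟩) h
  haveI : Nonempty ↥B := hBne.to_subtype
  obtain ⟨b, hb⟩ := exists_lt_of_ciInf_lt hlt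
  exact ⟨b, b.2, hb⟩

lemma exists_net {𝕜 : Type*} [RCLike 𝕜] {Z : Type*} {ι : Type*} [Fintype ι]
    (Φ : Z → ι → 𝕜) {s : Set Z} (hs : s.Nonempty) {M : ℝ}
    (hM : ∀ z ∈ s, ∀ i, ‖Φ z i‖ ≤ M) {ε : ℝ} (hε : 0 < ε) :
    ∃ E : Set Z, E ⊆ s ∧ E.Finite ∧ E.Nonempty ∧
      ∀ z ∈ s, ∃ e ∈ E, ∀ i, ‖Φ z i - Φ e i‖ ≤ ε := by
  have hM0 : (0:ℝ) ≤ max M 0 := le_max_right _ _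
  have hsub : Φ '' s ⊆ closedBall (0 : ι → 𝕜) (max M 0) := by
    rintro f ⟨z, hz, rfl⟩
    rw [mem_closedBall_zero_iff]
    exact (pi_norm_le_iff_of_nonneg hM0).2 fun i => le_max_of_le_left (hM z hz i)
  have htb : TotallyBounded (Φ '' s) :=
    (isCompact_closedBall _ _).totallyBounded.subset hsub
  obtain ⟨t, hts, htfin, hcov⟩ := totallyBounded_iff_subset.1 htb _ (dist_mem_uniformity hε)
  haveI := htfin.to_subtype
  choose f hf hΦf using fun y : t => (mem_image _ _ _).1 (hts y.2)
  obtain ⟨z₀, hz₀⟩ := hs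
  obtain ⟨y₀, hy₀t, -⟩ := mem_iUnion₂.1 (hcov (mem_image_of_mem Φ hz₀))
  haveI : Nonempty ↥t := ⟨⟨y₀, hy₀t⟩⟩
  refine ⟨range f, range_subset_iff.2 hf, finite_range f, range_nonempty f, ?_⟩
  intro z hz
  obtain ⟨y, hyt, hyd⟩ := mem_iUnion₂.1 (hcov (mem_image_of_mem Φ hz))
  refine ⟨f ⟨y, hyt⟩, mem_range_self _, fun i => ?_⟩
  have h1 : dist (Φ z) y < ε := hyd
  have h2 : dist (Φ z i) (y i) ≤ dist (Φ z) y := dist_le_pi_dist _ _ i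
  have h3 : Φ (f ⟨y, hyt⟩) = y := hΦf ⟨y, hyt⟩
  rw [h3, ← dist_eq_norm]
  exact le_of_lt (lt_of_le_of_lt h2 h1)

end Helpers


section Core

variable {𝕜 : Type*} [RCLike 𝕜] {X Y : Type*}
    [NormedAddCommGroup X] [NormedSpace 𝕜 X]
    [NormedAddCommGroup Y] [NormedSpace 𝕜 Y]
    (T : X →L[𝕜] Y)

lemma restr_bound {L : Set X} (hL : L ⊆ closedBall (0 : X) 1) {u : ↥L → 𝕜}
    (hu : u ∈ (fun φ : StrongDual 𝕜 X => fun y : L => φ (y : X)) '' adjointBallImage 𝕜 T)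
    (y : ↥L) : ‖u y‖ ≤ ‖T‖ := by
  obtain ⟨φ, ⟨ψ, hψ, rfl⟩, rfl⟩ := hu
  have hy : ‖(y : X)‖ ≤ 1 := mem_closedBall_zero_iff.1 (hL y.2)
  calc ‖(ψ.comp T) (y : X)‖ ≤ ‖ψ‖ * ‖T (y : X)‖ := (ψ.le_opNorm _)
    _ ≤ 1 * (‖T‖ * ‖(y : X)‖) :=
      mul_le_mul hψ (T.le_opNorm _) (norm_nonneg _) zero_le_one
    _ ≤ 1 * (‖T‖ * 1) := by
      have := mul_le_mul_of_nonneg_left hy (norm_nonneg T)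
      linarith
    _ = ‖T‖ := by ring

lemma zero_mem_adjointBallImage : (0 : StrongDual 𝕜 X) ∈ adjointBallImage 𝕜 T :=
  ⟨0, by simp, by rw [ContinuousLinearMap.zero_comp]⟩

lemma core1 {L : Set X} (hL : L ⊆ closedBall (0 : X) 1) (hLne : L.Nonempty) :
    chi0D dist (T '' L) ≤
      2 * chi0D (fun u v : ↥L → 𝕜 => ⨆ y : L, ‖u y - v y‖)
        ((fun φ : StrongDual 𝕜 X => fun y : L => φ (y : X)) '' adjointBallImage 𝕜 T) := by
  set dL : (↥L → 𝕜) → (↥L → 𝕜) → ℝ := fun u v => ⨆ y : L, ‖u y - v y‖ with hdL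
  set RL : Set (↥L → 𝕜) :=
    (fun φ : StrongDual 𝕜 X => fun y : L => φ (y : X)) '' adjointBallImage 𝕜 T with hRL
  set β := chi0D dL RL with hβ
  have hdnn : ∀ u v, 0 ≤ dL u v := fun u v => Real.iSup_nonneg fun y => norm_nonneg _
  have hβ0 : 0 ≤ β := chi0D_nonneg hdnn _
  have hbd : ∀ u ∈ RL, ∀ y : ↥L, ‖u y‖ ≤ ‖T‖ := fun u hu => restr_bound T hL hu
  have hdM : ∀ u ∈ RL, ∀ v ∈ RL, dL u v ≤ 2 * ‖T‖ := by
    intro u hu v hv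
    refine Real.iSup_le (fun y => ?_) (by positivity)
    calc ‖u y - v y‖ ≤ ‖u y‖ + ‖v y‖ := norm_sub_le _ _
      _ ≤ ‖T‖ + ‖T‖ := add_le_add (hbd u hu y) (hbd v hv y)
      _ = 2 * ‖T‖ := by ring
  refine le_of_forall_pos_le_add fun δ hδ => ?_
  set ε := δ / 3 with hεdef
  have hε : 0 < ε := by positivity
  -- RL is nonempty
  have hRLne : RL.Nonempty :=
    ⟨_, mem_image_of_mem _ (zero_mem_adjointBallImage T)⟩
  obtain ⟨G, hGRL, hGfin, hGne, hGlt⟩ := exists_hdD_lt hRLne.choose_spec hε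
  have hpt : ∀ u ∈ RL, ∃ g ∈ G, dL u g < β + ε := fun u hu =>
    exists_lt_of_hdD_lt hdnn hGne (fun a ha b hb => hdM a ha b (hGRL hb)) hGlt hu
  -- finite net in L for the coordinates given by G
  haveI := hGfin.fintype
  haveI : Nonempty ↥L := hLne.to_subtype
  obtain ⟨E, -, hEfin, hEne, hEnet⟩ := exists_net (fun y : ↥L => fun g : ↥G => g.1 y)
    (univ_nonempty) (fun z _ g => hbd g.1 (hGRL g.2) z) hε
  -- the key claim
  have hclaim : ∀ x : ↥L, ∃ e ∈ E, dist (T (x : X)) (T (e : X)) ≤ 2 * β + δ := by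
    intro x
    obtain ⟨e, heE, hnet⟩ := hEnet x (mem_univ x)
    refine ⟨e, heE, ?_⟩
    by_cases hTxe : T (x : X) = T (e : X)
    · rw [hTxe, dist_self]; positivity
    · obtain ⟨ψ, hψnorm, hψval⟩ := exists_dual_vector 𝕜 _ (norm_ne_zero_iff.2 (sub_ne_zero.2 hTxe))
      have hφA : ψ.comp T ∈ adjointBallImage 𝕜 T := ⟨ψ, hψnorm.le, rfl⟩
      set u : ↥L → 𝕜 := fun y : L => (ψ.comp T) (y : X) with hu
      have humem : u ∈ RL := mem_image_of_mem _ hφA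
      obtain ⟨g, hgG, hgu⟩ := hpt u humem
      have hbdd : BddAbove (range fun y : ↥L => ‖u y - g y‖) := by
        refine ⟨2 * ‖T‖, ?_⟩
        rintro r ⟨y, rfl⟩
        calc ‖u y - g y‖ ≤ ‖u y‖ + ‖g y‖ := norm_sub_le _ _
          _ ≤ ‖T‖ + ‖T‖ := add_le_add (hbd u humem y) (hbd g (hGRL hgG) y)
          _ = 2 * ‖T‖ := by ring
      have hug : ∀ y : ↥L, ‖u y - g y‖ ≤ β + ε := fun y =>
        le_trans (le_ciSup hbdd y) hgu.le
      have hkey : dist (T (x : X)) (T (e : X)) = ‖u x - u e‖ := by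
        have : u x - u e = ((‖T (x : X) - T (e : X)‖ : ℝ) : 𝕜) := by
          rw [hu]
          simp only [ContinuousLinearMap.comp_apply]
          rw [← map_sub, hψval]
        rw [dist_eq_norm, this, RCLike.norm_ofReal, abs_of_nonneg (norm_nonneg _)]
      have htri : ‖u x - u e‖ ≤ ‖u x - g x‖ + ‖g x - g e‖ + ‖g e - u e‖ := by
        have := dist_triangle4 (u x) (g x) (g e) (u e)
        simpa [dist_eq_norm] using this
      have hge : ‖g e - u e‖ = ‖u e - g e‖ := norm_sub_rev _ _
      have hmid : ‖g x - g e‖ ≤ ε := hnet ⟨g, hgG⟩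
      rw [hkey]
      have h1 := hug x
      have h2 := hug e
      rw [hge] at htri
      have : ‖u x - u e‖ ≤ (β + ε) + ε + (β + ε) := by linarith
      linarith [this]
  -- conclude
  have hsub : Subtype.val '' E ⊆ L := by rintro _ ⟨y, -, rfl⟩; exact y.2
  calc chi0D dist (T '' L) ≤ hdD dist (T '' L) (T '' (Subtype.val '' E)) :=
        chi0D_le_hdD (fun _ _ => dist_nonneg) (image_mono (f := T) hsub)
          ((hEfin.image _).image _) ((hEne.image _).image _)
    _ ≤ 2 * β + δ := by
        refine hdD_le (fun _ _ => dist_nonneg) (by positivity) ?_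
        rintro a ⟨x, hx, rfl⟩
        obtain ⟨e, heE, hde⟩ := hclaim ⟨x, hx⟩
        exact ⟨T (e : X), mem_image_of_mem T (mem_image_of_mem _ heE), hde⟩

end Core

section Core2

variable {𝕜 : Type*} [RCLike 𝕜] {X Y : Type*}
    [NormedAddCommGroup X] [NormedSpace 𝕜 X]
    [NormedAddCommGroup Y] [NormedSpace 𝕜 Y]
    (T : X →L[𝕜] Y)

lemma image_bound {L : Set X} (hL : L ⊆ closedBall (0 : X) 1) {a : Y}
    (ha : a ∈ T '' L) : ‖a‖ ≤ ‖T‖ := by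
  obtain ⟨x, hx, rfl⟩ := ha
  have hx1 : ‖x‖ ≤ 1 := mem_closedBall_zero_iff.1 (hL hx)
  calc ‖T x‖ ≤ ‖T‖ * ‖x‖ := T.le_opNorm x
    _ ≤ ‖T‖ * 1 := mul_le_mul_of_nonneg_left hx1 (norm_nonneg T)
    _ = ‖T‖ := mul_one _

lemma core2 {L : Set X} (hL : L ⊆ closedBall (0 : X) 1) (hLne : L.Nonempty) :
    chi0D (fun u v : ↥L → 𝕜 => ⨆ y : L, ‖u y - v y‖)
        ((fun φ : StrongDual 𝕜 X => fun y : L => φ (y : X)) '' adjointBallImage 𝕜 T) ≤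
      2 * chi0D dist (T '' L) := by
  set dL : (↥L → 𝕜) → (↥L → 𝕜) → ℝ := fun u v => ⨆ y : L, ‖u y - v y‖ with hdL
  set RL : Set (↥L → 𝕜) :=
    (fun φ : StrongDual 𝕜 X => fun y : L => φ (y : X)) '' adjointBallImage 𝕜 T with hRL
  set α := chi0D dist (T '' L) with hα
  have hdnn : ∀ u v, 0 ≤ dL u v := fun u v => Real.iSup_nonneg fun y => norm_nonneg _
  have hα0 : 0 ≤ α := chi0D_nonneg (fun _ _ => dist_nonneg) _
  refine le_of_forall_pos_le_add fun δ hδ => ?_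
  set ε := δ / 3 with hεdef
  have hε : 0 < ε := by positivity
  -- finite F ⊆ T '' L almost realizing α
  obtain ⟨x₀, hx₀⟩ := hLne
  obtain ⟨F, hFTL, hFfin, hFne, hFlt⟩ :=
    exists_hdD_lt (mem_image_of_mem T hx₀) hε
  have hdM : ∀ a ∈ T '' L, ∀ b ∈ F, dist a b ≤ 2 * ‖T‖ := by
    intro a ha b hb
    calc dist a b ≤ ‖a‖ + ‖b‖ := dist_le_norm_add_norm _ _
      _ ≤ ‖T‖ + ‖T‖ :=
        add_le_add (image_bound T hL ha) (image_bound T hL (hFTL hb))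
      _ = 2 * ‖T‖ := by ring
  have hpt : ∀ a ∈ T '' L, ∃ f ∈ F, dist a f < α + ε := fun a ha =>
    exists_lt_of_hdD_lt (fun _ _ => dist_nonneg) hFne hdM hFlt ha
  -- finite net in the dual ball for the coordinates given by F
  haveI := hFfin.fintype
  obtain ⟨E, hEball, hEfin, hEne, hEnet⟩ := exists_net
    (fun ψ : StrongDual 𝕜 Y => fun f : ↥F => ψ (f : Y))
    (⟨0, mem_closedBall_self zero_le_one⟩ : (closedBall (0 : StrongDual 𝕜 Y) 1).Nonempty)
    (M := ‖T‖)
    (fun ψ hψ f => by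
      have hψ1 : ‖ψ‖ ≤ 1 := mem_closedBall_zero_iff.1 hψ
      calc ‖ψ (f : Y)‖ ≤ ‖ψ‖ * ‖(f : Y)‖ := ψ.le_opNorm _
        _ ≤ 1 * ‖T‖ :=
          mul_le_mul hψ1 (image_bound T hL (hFTL f.2)) (norm_nonneg _) zero_le_one
        _ = ‖T‖ := one_mul _) hε
  -- G : restrictions of ψ'.comp T for ψ' ∈ E
  set G : Set (↥L → 𝕜) :=
    (fun φ : StrongDual 𝕜 X => fun y : L => φ (y : X)) ''
      ((fun ψ : StrongDual 𝕜 Y => ψ.comp T) '' E) with hG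
  have hGsub : G ⊆ RL := by
    rintro _ ⟨_, ⟨ψ', hψ'E, rfl⟩, rfl⟩
    exact mem_image_of_mem _ ⟨ψ', mem_closedBall_zero_iff.1 (hEball hψ'E), rfl⟩
  have hGfin : G.Finite := (hEfin.image _).image _
  have hGne : G.Nonempty := (hEne.image _).image _
  calc chi0D dL RL ≤ hdD dL RL G := chi0D_le_hdD hdnn hGsub hGfin hGne
    _ ≤ 2 * α + δ := by
        refine hdD_le hdnn (by positivity) ?_
        rintro _ ⟨φ, ⟨ψ, hψ1, rfl⟩, rfl⟩
        obtain ⟨ψ', hψ'E, hnet⟩ := hEnet ψ (mem_closedBall_zero_iff.2 hψ1)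
        refine ⟨fun y : L => (ψ'.comp T) (y : X),
          mem_image_of_mem _ (mem_image_of_mem _ hψ'E), ?_⟩
        refine Real.iSup_le (fun y => ?_) (by positivity)
        obtain ⟨f, hfF, hdf⟩ := hpt (T (y : X)) (mem_image_of_mem T y.2)
        have hψ'1 : ‖ψ'‖ ≤ 1 := mem_closedBall_zero_iff.1 (hEball hψ'E)
        have h1 : ‖ψ (T (y : X)) - ψ f‖ ≤ α + ε := by
          rw [← map_sub]
          calc ‖ψ (T (y : X) - f)‖ ≤ ‖ψ‖ * ‖T (y : X) - f‖ := ψ.le_opNorm _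
            _ ≤ 1 * (α + ε) := by
              refine mul_le_mul hψ1 ?_ (norm_nonneg _) zero_le_one
              rw [← dist_eq_norm]; exact hdf.le
            _ = α + ε := one_mul _
        have h2 : ‖ψ f - ψ' f‖ ≤ ε := hnet ⟨f, hfF⟩
        have h3 : ‖ψ' f - ψ' (T (y : X))‖ ≤ α + ε := by
          rw [← map_sub]
          calc ‖ψ' (f - T (y : X))‖ ≤ ‖ψ'‖ * ‖f - T (y : X)‖ := ψ'.le_opNorm _
            _ ≤ 1 * (α + ε) := by
              refine mul_le_mul hψ'1 ?_ (norm_nonneg _) zero_le_one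
              rw [← dist_eq_norm, dist_comm]; exact hdf.le
            _ = α + ε := one_mul _
        have htri : ‖ψ (T (y : X)) - ψ' (T (y : X))‖ ≤
            ‖ψ (T (y : X)) - ψ f‖ + ‖ψ f - ψ' f‖ + ‖ψ' f - ψ' (T (y : X))‖ := by
          have := dist_triangle4 (ψ (T (y : X))) (ψ f) (ψ' f) (ψ' (T (y : X)))
          simpa [dist_eq_norm] using this
        simp only [ContinuousLinearMap.comp_apply]
        linarith

end Core2


section Main

variable {𝕜 : Type*} [RCLike 𝕜] {X Y : Type*}
    [NormedAddCommGroup X] [NormedSpace 𝕜 X]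
    [NormedAddCommGroup Y] [NormedSpace 𝕜 Y]
    (T : X →L[𝕜] Y)

lemma chi0D_TL_le (L : Set X) (hLb : L ⊆ closedBall (0 : X) 1) (hLne : L.Nonempty) :
    chi0D dist (T '' L) ≤ 2 * ‖T‖ := by
  obtain ⟨x₀, hx₀⟩ := hLne
  calc chi0D dist (T '' L) ≤ hdD dist (T '' L) {T x₀} :=
        chi0D_le_hdD (fun _ _ => dist_nonneg)
          (singleton_subset_iff.2 (mem_image_of_mem T hx₀)) (finite_singleton _)
          (singleton_nonempty _)
    _ ≤ 2 * ‖T‖ := by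
        refine hdD_le (fun _ _ => dist_nonneg) (by positivity) ?_
        intro a ha
        refine ⟨T x₀, rfl, ?_⟩
        calc dist a (T x₀) ≤ ‖a‖ + ‖T x₀‖ := dist_le_norm_add_norm _ _
          _ ≤ ‖T‖ + ‖T‖ := add_le_add (image_bound T hLb ha)
              (image_bound T hLb (mem_image_of_mem T hx₀))
          _ = 2 * ‖T‖ := by ring

lemma chi0D_RL_le (L : Set X) (hLb : L ⊆ closedBall (0 : X) 1) :
    chi0D (fun u v : ↥L → 𝕜 => ⨆ y : L, ‖u y - v y‖)
        ((fun φ : StrongDual 𝕜 X => fun y : L => φ (y : X)) '' adjointBallImage 𝕜 T) ≤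
      2 * ‖T‖ := by
  set u₀ : ↥L → 𝕜 := fun y : L => (0 : StrongDual 𝕜 X) (y : X) with hu₀
  have hu₀mem : u₀ ∈ (fun φ : StrongDual 𝕜 X => fun y : L => φ (y : X)) ''
      adjointBallImage 𝕜 T := mem_image_of_mem _ (zero_mem_adjointBallImage T)
  calc chi0D _ _ ≤ hdD _ _ {u₀} :=
        chi0D_le_hdD (fun u v => Real.iSup_nonneg fun y => norm_nonneg _)
          (singleton_subset_iff.2 hu₀mem) (finite_singleton _) (singleton_nonempty _)
    _ ≤ 2 * ‖T‖ := by
        refine hdD_le (fun u v => Real.iSup_nonneg fun y => norm_nonneg _)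
          (by positivity) ?_
        intro u hu
        refine ⟨u₀, rfl, ?_⟩
        refine Real.iSup_le (fun y => ?_) (by positivity)
        have : u₀ y = 0 := by simp [hu₀]
        rw [this, sub_zero]
        calc ‖u y‖ ≤ ‖T‖ := restr_bound T hLb hu y
          _ ≤ 2 * ‖T‖ := by linarith [norm_nonneg T]

theorem ccDP_equiv_chiMackey_adjoint'
    {𝕜 : Type*} [RCLike 𝕜] {X Y : Type*}
    [NormedAddCommGroup X] [NormedSpace 𝕜 X] [CompleteSpace X]
    [NormedAddCommGroup Y] [NormedSpace 𝕜 Y] [CompleteSpace Y]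
    (T : X →L[𝕜] Y) :
    (1 / 2) * chiMackey 𝕜 (adjointBallImage 𝕜 T) ≤ ccDP 𝕜 T ∧
      ccDP 𝕜 T ≤ 2 * chiMackey 𝕜 (adjointBallImage 𝕜 T) := by
  -- membership of L = {0} in the ccDP index set
  have hwc0 : IsWeaklyCompact 𝕜 ({0} : Set X) := by
    show IsCompact (toWeakSpace 𝕜 X '' {0})
    rw [image_singleton]; exact isCompact_singleton
  have hmem0 : chi0D dist (T '' ({0} : Set X)) ∈
      {r | ∃ L : Set X, L.Nonempty ∧ L ⊆ closedBall (0 : X) 1 ∧ IsWeaklyCompact 𝕜 L ∧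
        r = chi0D dist (T '' L)} :=
    ⟨{0}, singleton_nonempty _, singleton_subset_iff.2 (mem_closedBall_self zero_le_one),
      hwc0, rfl⟩
  have hccne : {r | ∃ L : Set X, L.Nonempty ∧ L ⊆ closedBall (0 : X) 1 ∧
      IsWeaklyCompact 𝕜 L ∧ r = chi0D dist (T '' L)}.Nonempty := ⟨_, hmem0⟩
  have hccbdd : BddAbove {r | ∃ L : Set X, L.Nonempty ∧ L ⊆ closedBall (0 : X) 1 ∧
      IsWeaklyCompact 𝕜 L ∧ r = chi0D dist (T '' L)} := by
    refine ⟨2 * ‖T‖, ?_⟩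
    rintro r ⟨L, hLne, hLb, -, rfl⟩
    exact chi0D_TL_le T L hLb hLne
  have hχne : {r | ∃ L : Set X, L ⊆ closedBall (0 : X) 1 ∧ IsWeaklyCompact 𝕜 L ∧
      r = chi0D (fun u v : ↥L → 𝕜 => ⨆ y : L, ‖u y - v y‖)
        ((fun φ : StrongDual 𝕜 X => fun y : L => φ (y : X)) '' adjointBallImage 𝕜 T)}.Nonempty := by
    refine ⟨_, ∅, empty_subset _, ?_, rfl⟩
    show IsCompact (toWeakSpace 𝕜 X '' ∅)
    rw [image_empty]; exact isCompact_empty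
  have hχbdd : BddAbove {r | ∃ L : Set X, L ⊆ closedBall (0 : X) 1 ∧ IsWeaklyCompact 𝕜 L ∧
      r = chi0D (fun u v : ↥L → 𝕜 => ⨆ y : L, ‖u y - v y‖)
        ((fun φ : StrongDual 𝕜 X => fun y : L => φ (y : X)) '' adjointBallImage 𝕜 T)} := by
    refine ⟨2 * ‖T‖, ?_⟩
    rintro r ⟨L, hLb, -, rfl⟩
    exact chi0D_RL_le T L hLb
  have hcc0 : 0 ≤ ccDP 𝕜 T :=
    le_trans (chi0D_nonneg (fun _ _ => dist_nonneg) _) (le_csSup hccbdd hmem0)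
  have hupper : ccDP 𝕜 T ≤ 2 * chiMackey 𝕜 (adjointBallImage 𝕜 T) := by
    refine csSup_le hccne ?_
    rintro r ⟨L, hLne, hLb, hLw, rfl⟩
    calc chi0D dist (T '' L) ≤
        2 * chi0D (fun u v : ↥L → 𝕜 => ⨆ y : L, ‖u y - v y‖)
          ((fun φ : StrongDual 𝕜 X => fun y : L => φ (y : X)) '' adjointBallImage 𝕜 T) :=
          core1 T hLb hLne
      _ ≤ 2 * chiMackey 𝕜 (adjointBallImage 𝕜 T) := by
          refine mul_le_mul_of_nonneg_left ?_ (by norm_num)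
          exact le_csSup hχbdd ⟨L, hLb, hLw, rfl⟩
  have hlower : chiMackey 𝕜 (adjointBallImage 𝕜 T) ≤ 2 * ccDP 𝕜 T := by
    refine csSup_le hχne ?_
    rintro r ⟨L, hLb, hLw, rfl⟩
    rcases L.eq_empty_or_nonempty with hLe | hLne
    · subst hLe
      have h0 : chi0D (fun u v : ↥(∅ : Set X) → 𝕜 => ⨆ y : (∅ : Set X), ‖u y - v y‖)
          ((fun φ : StrongDual 𝕜 X => fun y : (∅ : Set X) => φ (y : X)) ''
            adjointBallImage 𝕜 T) ≤ 0 := by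
        set u₀ : ↥(∅ : Set X) → 𝕜 := fun y : (∅ : Set X) => (0 : StrongDual 𝕜 X) (y : X)
        have hu₀mem : u₀ ∈ (fun φ : StrongDual 𝕜 X => fun y : (∅ : Set X) => φ (y : X)) ''
            adjointBallImage 𝕜 T := mem_image_of_mem _ (zero_mem_adjointBallImage T)
        calc chi0D _ _ ≤ hdD _ _ {u₀} :=
              chi0D_le_hdD (fun u v => Real.iSup_nonneg fun y => norm_nonneg _)
                (singleton_subset_iff.2 hu₀mem) (finite_singleton _)
                (singleton_nonempty _)
          _ ≤ 0 := by
              refine hdD_le (fun u v => Real.iSup_nonneg fun y => norm_nonneg _)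
                le_rfl ?_
              intro u hu
              refine ⟨u₀, rfl, le_of_eq ?_⟩
              haveI : IsEmpty ↥(∅ : Set X) := by
                simp only [isEmpty_subtype]; exact fun x => id
              exact Real.iSup_of_isEmpty _
      linarith
    · refine le_trans (core2 T hLb hLne) ?_
      refine mul_le_mul_of_nonneg_left ?_ (by norm_num)
      exact le_csSup hccbdd ⟨L, hLne, hLb, hLw, rfl⟩
  exact ⟨by linarith, hupper⟩

end Main

/-- Quantitative version of Grothendieck's lemma: for any operator `T : X → Y`
between Banach spaces, `(1/2)·χ_m(T*(B_{Y*})) ≤ cc_DP(T) ≤ 2·χ_m(T*(B_{Y*}))`. -/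
theorem ccDP_equiv_chiMackey_adjoint
    {𝕜 : Type*} [RCLike 𝕜] {X Y : Type*}
    [NormedAddCommGroup X] [NormedSpace 𝕜 X] [CompleteSpace X]
    [NormedAddCommGroup Y] [NormedSpace 𝕜 Y] [CompleteSpace Y]
    (T : X →L[𝕜] Y) :
    (1 / 2) * chiMackey 𝕜 (adjointBallImage 𝕜 T) ≤ ccDP 𝕜 T ∧
      ccDP 𝕜 T ≤ 2 * chiMackey 𝕜 (adjointBallImage 𝕜 T) := by
  exact ccDP_equiv_chiMackey_adjoint' T
end
end

section
/- Let A be a nonempty set and B a nonempty bounded subset of ℓ∞(A). Define φ : A → ℓ∞(B) by φ(a)(b) = b(a) for a ∈ A, b ∈ B. Then (1/2)·χ₀(B) ≤ χ₀(φ(A)) ≤ 2·χ₀(B), where χ₀(B) is computed in ℓ∞(A) and χ₀(φ(A)) in ℓ∞(B). -/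
open Filter Metric Set

noncomputable section

lemma bddA_of_le {ι : Type*} {f : ι → ℝ} {M : ℝ} (h : ∀ i, f i ≤ M) :
    BddAbove (range f) := ⟨M, by rintro y ⟨i, rfl⟩; exact h i⟩

lemma bddB_of_le {ι : Type*} {f : ι → ℝ} {M : ℝ} (h : ∀ i, M ≤ f i) :
    BddBelow (range f) := ⟨M, by rintro y ⟨i, rfl⟩; exact h i⟩

lemma norm_tri {𝕜 : Type*} [RCLike 𝕜] (x y z : 𝕜) : ‖x - z‖ ≤ ‖x - y‖ + ‖y - z‖ := by
  simpa [dist_eq_norm] using dist_triangle x y z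

/-- ε-net lemma: a finite family of uniformly bounded 𝕜-valued functions on `X`
admits a finite ε-net inside `X` for the induced pseudometric. -/
lemma net_lemma {X : Type*} [Nonempty X] {𝕜 : Type*} [RCLike 𝕜] {ι : Type*}
    [Fintype ι] [Nonempty ι] (g : ι → X → 𝕜) (C : ℝ) (hC : ∀ i x, ‖g i x‖ ≤ C)
    {ε : ℝ} (hε : 0 < ε) :
    ∃ X₀ : Finset X, X₀.Nonempty ∧ ∀ x : X, ∃ x₀ ∈ X₀, ∀ i, ‖g i x - g i x₀‖ ≤ ε := by
  classical
  set ψ : X → (ι → 𝕜) := fun x i => g i x with hψdef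
  have hC0 : 0 ≤ C := le_trans (norm_nonneg _) (hC (Classical.arbitrary ι) (Classical.arbitrary X))
  have hψ : ∀ x, ψ x ∈ closedBall (0 : ι → 𝕜) C := by
    intro x
    rw [mem_closedBall, dist_zero_right]
    exact (pi_norm_le_iff_of_nonneg hC0).mpr fun i => hC i x
  have htb : TotallyBounded (Set.range ψ) :=
    TotallyBounded.subset (range_subset_iff.mpr hψ) (isCompact_closedBall _ _).totallyBounded
  rw [totallyBounded_iff_subset] at htb
  obtain ⟨t, hts, htf, hcover⟩ := htb _ (dist_mem_uniformity hε)
  have hpick : ∀ y ∈ t, ∃ x : X, ψ x = y := fun y hy => hts hy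
  set pick : (ι → 𝕜) → X := fun y =>
    if h : ∃ x : X, ψ x = y then h.choose else Classical.arbitrary X with hpickdef
  refine ⟨htf.toFinset.image pick, ?_, ?_⟩
  · have htne : t.Nonempty := by
      rcases mem_iUnion₂.mp (hcover (mem_range_self (Classical.arbitrary X))) with ⟨y, hyt, -⟩
      exact ⟨y, hyt⟩
    obtain ⟨y, hy⟩ := htne
    exact ⟨pick y, Finset.mem_image_of_mem _ (htf.mem_toFinset.mpr hy)⟩
  · intro x
    rcases mem_iUnion₂.mp (hcover (mem_range_self x)) with ⟨y, hyt, hxy⟩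
    have hex : ∃ x' : X, ψ x' = y := hpick y hyt
    have hψpick : ψ (pick y) = y := by
      rw [hpickdef]; simp only [hex, dif_pos]; exact hex.choose_spec
    refine ⟨pick y, Finset.mem_image_of_mem _ (htf.mem_toFinset.mpr hyt), fun i => ?_⟩
    have h1 : dist (ψ x) (ψ (pick y)) < ε := by rw [hψpick]; exact hxy
    have h2 : dist (ψ x i) (ψ (pick y) i) ≤ dist (ψ x) (ψ (pick y)) := dist_le_pi_dist _ _ i
    have h3 : dist (g i x) (g i (pick y)) < ε := lt_of_le_of_lt h2 h1
    rw [dist_eq_norm] at h3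
    exact h3.le


/-- Let `A` be a nonempty set and `B` a nonempty bounded subset of `ℓ∞(A)`.
Define `φ : A → ℓ∞(B)` by `φ(a)(b) = b(a)`. Then
`(1/2)·χ₀(B) ≤ χ₀(φ(A)) ≤ 2·χ₀(B)`, where `χ₀(B)` is computed in the sup
distance of `ℓ∞(A)` and `χ₀(φ(A))` in the sup distance of `ℓ∞(B)`. -/
theorem chi0_canonical_embedding
    {A : Type*} [Nonempty A] {𝕜 : Type*} [RCLike 𝕜]
    (B : Set (A → 𝕜)) (hB : B.Nonempty)
    (hbdd : ∃ C : ℝ, ∀ b ∈ B, ∀ a : A, ‖b a‖ ≤ C) :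
    (1 / 2) * chi0D (fun u v : A → 𝕜 => ⨆ a : A, ‖u a - v a‖) B ≤
        chi0D (fun u v : ↥B → 𝕜 => ⨆ b : B, ‖u b - v b‖)
          (range fun a : A => fun b : B => (b : A → 𝕜) a) ∧
      chi0D (fun u v : ↥B → 𝕜 => ⨆ b : B, ‖u b - v b‖)
          (range fun a : A => fun b : B => (b : A → 𝕜) a) ≤
        2 * chi0D (fun u v : A → 𝕜 => ⨆ a : A, ‖u a - v a‖) B := by
  classical
  obtain ⟨C, hC⟩ := hbdd
  obtain ⟨b₀, hb₀⟩ := hB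
  haveI : Nonempty ↥B := ⟨⟨b₀, hb₀⟩⟩
  set dA : (A → 𝕜) → (A → 𝕜) → ℝ := fun u v => ⨆ a : A, ‖u a - v a‖ with hdAdef
  set dB : (↥B → 𝕜) → (↥B → 𝕜) → ℝ := fun u v => ⨆ b : B, ‖u b - v b‖ with hdBdef
  set φ : A → (↥B → 𝕜) := fun a => fun b : B => (b : A → 𝕜) a with hφdef
  set P : Set (↥B → 𝕜) := range φ with hPdef
  haveI : Nonempty ↥P := ⟨⟨φ (Classical.arbitrary A), mem_range_self _⟩⟩
  -- basic bounds
  have hdA_term : ∀ u ∈ B, ∀ v ∈ B, ∀ a : A, ‖u a - v a‖ ≤ 2 * C := by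
    intro u hu v hv a
    calc ‖u a - v a‖ ≤ ‖u a‖ + ‖v a‖ := norm_sub_le _ _
      _ ≤ 2 * C := by linarith [hC u hu a, hC v hv a]
  have hdA_le : ∀ u ∈ B, ∀ v ∈ B, dA u v ≤ 2 * C := fun u hu v hv =>
    ciSup_le fun a => hdA_term u hu v hv a
  have hdA_ge : ∀ u ∈ B, ∀ v ∈ B, ∀ a : A, ‖u a - v a‖ ≤ dA u v := fun u hu v hv a =>
    le_ciSup (bddA_of_le (hdA_term u hu v hv)) a
  have hdA_nonneg : ∀ u v, 0 ≤ dA u v := fun u v => Real.iSup_nonneg fun a => norm_nonneg _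
  have hdB_term : ∀ a a' : A, ∀ b : ↥B, ‖φ a b - φ a' b‖ ≤ 2 * C := by
    intro a a' b
    calc ‖φ a b - φ a' b‖ ≤ ‖φ a b‖ + ‖φ a' b‖ := norm_sub_le _ _
      _ ≤ 2 * C := by
        simp only [hφdef]
        linarith [hC b b.2 a, hC b b.2 a']
  have hdB_le : ∀ a a' : A, dB (φ a) (φ a') ≤ 2 * C := fun a a' =>
    ciSup_le fun b => hdB_term a a' b
  have hdB_ge : ∀ a a' : A, ∀ b : ↥B, ‖φ a b - φ a' b‖ ≤ dB (φ a) (φ a') := fun a a' b =>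
    le_ciSup (bddA_of_le (hdB_term a a')) b
  have hdB_nonneg : ∀ u v, 0 ≤ dB u v := fun u v => Real.iSup_nonneg fun b => norm_nonneg _
  -- the defining sets
  set SB : Set ℝ := {r | ∃ F : Set (A → 𝕜), F ⊆ B ∧ F.Finite ∧ F.Nonempty ∧ r = hdD dA B F}
    with hSBdef
  set SP : Set ℝ := {r | ∃ F : Set (↥B → 𝕜), F ⊆ P ∧ F.Finite ∧ F.Nonempty ∧ r = hdD dB P F}
    with hSPdef
  have hSBne : SB.Nonempty :=
    ⟨hdD dA B {b₀}, {b₀}, singleton_subset_iff.mpr hb₀, finite_singleton _,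
      singleton_nonempty _, rfl⟩
  have hSPne : SP.Nonempty :=
    ⟨hdD dB P {φ (Classical.arbitrary A)}, {φ (Classical.arbitrary A)},
      singleton_subset_iff.mpr (mem_range_self _), finite_singleton _, singleton_nonempty _, rfl⟩
  have hSBbdd : ∀ r ∈ SB, (0:ℝ) ≤ r := by
    rintro r ⟨F, hFB, hFfin, hFne, rfl⟩
    exact Real.iSup_nonneg fun b => Real.iInf_nonneg fun f => hdA_nonneg _ _
  have hSPbdd : ∀ r ∈ SP, (0:ℝ) ≤ r := by
    rintro r ⟨F, hFP, hFfin, hFne, rfl⟩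
    exact Real.iSup_nonneg fun p => Real.iInf_nonneg fun f => hdB_nonneg _ _
  have hchiB : chi0D dA B = sInf SB := rfl
  have hchiP : chi0D dB P = sInf SP := rfl
  -- MAIN LEMMA 1 : ∀ r ∈ SB, ∀ ε > 0, chi0D dB P ≤ 2r + ε
  have main1 : ∀ r ∈ SB, ∀ ε : ℝ, 0 < ε → chi0D dB P ≤ 2 * r + ε := by
    rintro r ⟨F, hFB, hFfin, hFne, rfl⟩ ε hε
    haveI := hFfin.fintype
    haveI : Nonempty ↥F := hFne.to_subtype
    obtain ⟨A₀, hA₀ne, hA₀⟩ := net_lemma (fun f : ↥F => (f : A → 𝕜)) C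
      (fun f a => hC f (hFB f.2) a) (show (0:ℝ) < ε / 2 by linarith)
    set G : Set (↥B → 𝕜) := φ '' ↑A₀ with hGdef
    have hGP : G ⊆ P := image_subset_range _ _
    have hGfin : G.Finite := A₀.finite_toSet.image _
    have hGne : G.Nonempty := (Finset.coe_nonempty.mpr hA₀ne).image _
    haveI : Nonempty ↥G := hGne.to_subtype
    have hmem : hdD dB P G ∈ SP := ⟨G, hGP, hGfin, hGne, rfl⟩
    have hbound : hdD dB P G ≤ 2 * hdD dA B F + ε := by
      apply ciSup_le
      rintro ⟨p, a, rfl⟩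
      obtain ⟨a₀, ha₀, hnear⟩ := hA₀ a
      have hin : φ a₀ ∈ G := mem_image_of_mem _ (by exact_mod_cast ha₀)
      have hstep : dB (φ a) (φ a₀) ≤ 2 * hdD dA B F + ε := by
        apply ciSup_le
        intro b
        have hinf_le : (⨅ f : F, dA ↑b ↑f) ≤ hdD dA B F :=
          le_ciSup (f := fun b' : ↥B => ⨅ f : F, dA ↑b' ↑f)
            (bddA_of_le fun b' =>
              ciInf_le_of_le (bddB_of_le fun f => hdA_nonneg _ _) (Classical.arbitrary ↥F)
                (hdA_le _ b'.2 _ (hFB (Classical.arbitrary ↥F).2))) b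
        obtain ⟨f, hf⟩ : ∃ f : ↥F, dA ↑b ↑f < hdD dA B F + ε / 4 :=
          exists_lt_of_ciInf_lt (lt_of_le_of_lt hinf_le (by linarith))
        have h1 : ‖(b : A → 𝕜) a - (f : A → 𝕜) a‖ ≤ dA ↑b ↑f := hdA_ge _ b.2 _ (hFB f.2) a
        have h2 : ‖(f : A → 𝕜) a - (f : A → 𝕜) a₀‖ ≤ ε / 2 := hnear f
        have h3 : ‖(b : A → 𝕜) a₀ - (f : A → 𝕜) a₀‖ ≤ dA ↑b ↑f := hdA_ge _ b.2 _ (hFB f.2) a₀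
        have tri1 := norm_tri ((b : A → 𝕜) a) ((f : A → 𝕜) a₀) ((b : A → 𝕜) a₀)
        have tri2 := norm_tri ((b : A → 𝕜) a) ((f : A → 𝕜) a) ((f : A → 𝕜) a₀)
        have h3' : ‖(f : A → 𝕜) a₀ - (b : A → 𝕜) a₀‖ ≤ dA ↑b ↑f := by
          rwa [norm_sub_rev] at h3
        have : ‖φ a b - φ a₀ b‖ ≤ 2 * hdD dA B F + ε := by
          simp only [hφdef]
          linarith [hf.le]
        exact this
      calc (⨅ g : G, dB (φ a) ↑g) ≤ dB (φ a) (φ a₀) :=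
            ciInf_le_of_le (bddB_of_le fun g => hdB_nonneg _ _) ⟨φ a₀, hin⟩ le_rfl
        _ ≤ 2 * hdD dA B F + ε := hstep
    calc chi0D dB P ≤ hdD dB P G := csInf_le ⟨0, hSPbdd⟩ hmem
      _ ≤ 2 * hdD dA B F + ε := hbound
  -- MAIN LEMMA 2 : ∀ s ∈ SP, ∀ ε > 0, chi0D dA B ≤ 2s + ε
  have main2 : ∀ s ∈ SP, ∀ ε : ℝ, 0 < ε → chi0D dA B ≤ 2 * s + ε := by
    rintro s ⟨G, hGP, hGfin, hGne, rfl⟩ ε hε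
    haveI := hGfin.fintype
    haveI : Nonempty ↥G := hGne.to_subtype
    have hpre : ∀ g : ↥G, ∃ a : A, φ a = (g : ↥B → 𝕜) := fun g => hGP g.2
    choose a_of ha_of using hpre
    obtain ⟨B₀, hB₀ne, hB₀⟩ := net_lemma (fun g : ↥G => fun b : ↥B => (b : A → 𝕜) (a_of g)) C
      (fun g b => hC b b.2 _) (show (0:ℝ) < ε / 2 by linarith)
    set F : Set (A → 𝕜) := (fun b : ↥B => (b : A → 𝕜)) '' ↑B₀ with hFdef
    have hFB : F ⊆ B := by rintro _ ⟨b, -, rfl⟩; exact b.2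
    have hFfin : F.Finite := B₀.finite_toSet.image _
    have hFne : F.Nonempty := (Finset.coe_nonempty.mpr hB₀ne).image _
    haveI : Nonempty ↥F := hFne.to_subtype
    have hmem : hdD dA B F ∈ SB := ⟨F, hFB, hFfin, hFne, rfl⟩
    have hbound : hdD dA B F ≤ 2 * hdD dB P G + ε := by
      apply ciSup_le
      intro b
      obtain ⟨b₁, hb₁, hnear⟩ := hB₀ b
      have hin : (b₁ : A → 𝕜) ∈ F := mem_image_of_mem _ (by exact_mod_cast hb₁)
      have hstep : dA ↑b ↑b₁ ≤ 2 * hdD dB P G + ε := by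
        apply ciSup_le
        intro a
        have hinf_le : (⨅ g : G, dB (φ a) ↑g) ≤ hdD dB P G :=
          le_ciSup (f := fun p : ↥P => ⨅ g : G, dB ↑p ↑g)
            (bddA_of_le (M := 2 * C) fun p => by
              obtain ⟨a', ha'⟩ := p.2
              refine ciInf_le_of_le (bddB_of_le fun g => hdB_nonneg _ _)
                (Classical.arbitrary ↥G) ?_
              have hg := ha_of (Classical.arbitrary ↥G)
              rw [show ((p : ↥B → 𝕜)) = φ a' from ha'.symm, ← hg]
              exact hdB_le a' _) ⟨φ a, mem_range_self a⟩
        obtain ⟨g, hg⟩ : ∃ g : ↥G, dB (φ a) ↑g < hdD dB P G + ε / 4 :=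
          exists_lt_of_ciInf_lt (lt_of_le_of_lt hinf_le (by linarith))
        have hga : φ (a_of g) = (g : ↥B → 𝕜) := ha_of g
        set a₀ := a_of g with ha₀def
        have h1 : ‖(b : A → 𝕜) a - (b : A → 𝕜) a₀‖ ≤ dB (φ a) ↑g := by
          rw [← hga]
          exact hdB_ge a a₀ b
        have h3 : ‖(b₁ : A → 𝕜) a - (b₁ : A → 𝕜) a₀‖ ≤ dB (φ a) ↑g := by
          rw [← hga]
          exact hdB_ge a a₀ b₁
        have h2 : ‖(b : A → 𝕜) a₀ - (b₁ : A → 𝕜) a₀‖ ≤ ε / 2 := hnear g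
        have tri1 := norm_tri ((b : A → 𝕜) a) ((b : A → 𝕜) a₀) ((b₁ : A → 𝕜) a)
        have tri2 := norm_tri ((b : A → 𝕜) a₀) ((b₁ : A → 𝕜) a₀) ((b₁ : A → 𝕜) a)
        have h3' : ‖(b₁ : A → 𝕜) a₀ - (b₁ : A → 𝕜) a‖ ≤ dB (φ a) ↑g := by
          rwa [norm_sub_rev] at h3
        linarith [hg.le]
      calc (⨅ f : F, dA ↑b ↑f) ≤ dA ↑b ↑b₁ :=
            ciInf_le_of_le (bddB_of_le fun f => hdA_nonneg _ _) ⟨(b₁ : A → 𝕜), hin⟩ le_rfl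
        _ ≤ 2 * hdD dB P G + ε := hstep
    calc chi0D dA B ≤ hdD dA B F := csInf_le ⟨0, hSBbdd⟩ hmem
      _ ≤ 2 * hdD dB P G + ε := hbound
  constructor
  · rw [hchiP]
    apply le_csInf hSPne
    intro s hs
    have h2s : chi0D dA B ≤ 2 * s :=
      le_of_forall_pos_le_add fun ε hε => main2 s hs ε hε
    rw [hchiB] at h2s ⊢
    linarith
  · have h : chi0D dB P / 2 ≤ sInf SB := by
      apply le_csInf hSBne
      intro r hr
      have h2r : chi0D dB P ≤ 2 * r :=
        le_of_forall_pos_le_add fun ε hε => main1 r hr ε hε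
      linarith
    rw [← hchiB] at h
    linarith
end
end

section
/- Let T : X → Y be a bounded linear operator between Banach spaces, let A ⊆ X be a nonempty bounded set, and let ψ : X* → ℓ∞(A) denote the restriction mapping ψ(x*) = x*|_A. Then (1/2)·χ₀(T(A)) ≤ χ₀(ψ(T*(B_{Y*}))) ≤ 2·χ₀(T(A)), where χ₀(T(A)) is computed in Y and χ₀(ψ(T*(B_{Y*}))) in ℓ∞(A). -/
open Filter Metric Set NormedSpace

noncomputable section

/-- Let `T : X → Y` be an operator between Banach spaces, `A ⊆ X` nonempty bounded,
and `ψ : X* → ℓ∞(A)` the restriction map. Then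
`(1/2)·χ₀(T(A)) ≤ χ₀(ψ(T*(B_{Y*}))) ≤ 2·χ₀(T(A))`. -/
theorem chi0_image_equiv_chi0_restricted_adjoint_ball
    {𝕜 : Type*} [RCLike 𝕜] {X Y : Type*}
    [NormedAddCommGroup X] [NormedSpace 𝕜 X] [CompleteSpace X]
    [NormedAddCommGroup Y] [NormedSpace 𝕜 Y] [CompleteSpace Y]
    (T : X →L[𝕜] Y) (A : Set X) (hA : A.Nonempty) (hbdd : Bornology.IsBounded A) :
    (1 / 2) * chi0D dist (T '' A) ≤
        chi0D (fun u v : ↥A → 𝕜 => ⨆ a : A, ‖u a - v a‖)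
          ((fun φ : StrongDual 𝕜 X => fun a : A => φ (a : X)) '' adjointBallImage 𝕜 T) ∧
      chi0D (fun u v : ↥A → 𝕜 => ⨆ a : A, ‖u a - v a‖)
          ((fun φ : StrongDual 𝕜 X => fun a : A => φ (a : X)) '' adjointBallImage 𝕜 T) ≤
        2 * chi0D dist (T '' A) := by
  classical
  obtain ⟨M, hM⟩ := hbdd.exists_norm_le
  set D : (↥A → 𝕜) → (↥A → 𝕜) → ℝ := fun u v => ⨆ a : A, ‖u a - v a‖ with hDdef
  set S : Set (↥A → 𝕜) :=
    (fun φ : StrongDual 𝕜 X => fun a : A => φ (a : X)) '' adjointBallImage 𝕜 T with hSdef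
  set C : Set Y := T '' A with hCdef
  obtain ⟨a₀, ha₀⟩ := hA
  have hM0 : 0 ≤ M := le_trans (norm_nonneg a₀) (hM a₀ ha₀)
  set M' : ℝ := ‖T‖ * M + 1 with hM'def
  have hM'pos : 0 < M' := by positivity
  -- basic membership facts
  have hSmem : ∀ u : ↥A → 𝕜, u ∈ S ↔
      ∃ ψ : StrongDual 𝕜 Y, ‖ψ‖ ≤ 1 ∧ u = fun a : A => ψ (T a) := by
    intro u
    constructor
    · rintro ⟨φ, ⟨ψ, hψ, rfl⟩, rfl⟩
      exact ⟨ψ, hψ, rfl⟩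
    · rintro ⟨ψ, hψ, rfl⟩
      exact ⟨ψ.comp T, ⟨ψ, hψ, rfl⟩, rfl⟩
  have hSne : S.Nonempty := ⟨_, (hSmem _).2 ⟨0, by simp, rfl⟩⟩
  have hCne : C.Nonempty := ⟨T a₀, mem_image_of_mem T ha₀⟩
  have hCub : ∀ y ∈ C, ‖y‖ ≤ M' := by
    rintro y ⟨x, hx, rfl⟩
    calc ‖T x‖ ≤ ‖T‖ * ‖x‖ := T.le_opNorm x
      _ ≤ ‖T‖ * M := by
          exact mul_le_mul_of_nonneg_left (hM x hx) (norm_nonneg T)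
      _ ≤ M' := by simp [hM'def]
  have hSub : ∀ u ∈ S, ∀ a : A, ‖u a‖ ≤ M' := by
    intro u hu a
    obtain ⟨ψ, hψ, rfl⟩ := (hSmem u).1 hu
    calc ‖ψ (T a)‖ ≤ ‖ψ‖ * ‖T (a : X)‖ := ψ.le_opNorm _
      _ ≤ 1 * M' := by
          have := hCub (T a) ⟨a, a.2, rfl⟩
          exact mul_le_mul hψ this (norm_nonneg _) zero_le_one
      _ = M' := one_mul _
  have hDnonneg : ∀ u v : ↥A → 𝕜, 0 ≤ D u v := fun u v =>
    Real.iSup_nonneg fun a => norm_nonneg _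
  have hDle : ∀ u ∈ S, ∀ v ∈ S, D u v ≤ 2 * M' := by
    intro u hu v hv
    refine Real.iSup_le (fun a => ?_) (by positivity)
    calc ‖u a - v a‖ ≤ ‖u a‖ + ‖v a‖ := norm_sub_le _ _
      _ ≤ M' + M' := add_le_add (hSub u hu a) (hSub v hv a)
      _ = 2 * M' := by ring
  have hDge : ∀ u ∈ S, ∀ v ∈ S, ∀ a : A, ‖u a - v a‖ ≤ D u v := by
    intro u hu v hv a
    refine le_ciSup (f := fun a : A => ‖u a - v a‖) ⟨2 * M', ?_⟩ a
    rintro _ ⟨b, rfl⟩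
    calc ‖u b - v b‖ ≤ ‖u b‖ + ‖v b‖ := norm_sub_le _ _
      _ ≤ M' + M' := add_le_add (hSub u hu b) (hSub v hv b)
      _ = 2 * M' := by ring
  have hCdist : ∀ y ∈ C, ∀ b ∈ C, dist y b ≤ 2 * M' := by
    intro y hy b hb
    calc dist y b ≤ ‖y‖ + ‖b‖ := dist_le_norm_add_norm _ _
      _ ≤ M' + M' := add_le_add (hCub y hy) (hCub b hb)
      _ = 2 * M' := by ring
  -- the defining sets of the two `chi0D` quantities
  set sC : Set ℝ :=
    {r | ∃ F : Set Y, F ⊆ C ∧ F.Finite ∧ F.Nonempty ∧ r = hdD dist C F} with hsCdef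
  set sS : Set ℝ :=
    {r | ∃ G : Set (↥A → 𝕜), G ⊆ S ∧ G.Finite ∧ G.Nonempty ∧ r = hdD D S G} with hsSdef
  have hchiC : chi0D dist C = sInf sC := rfl
  have hchiS : chi0D D S = sInf sS := rfl
  -- nonnegativity of hdD
  have hhC : ∀ F : Set Y, 0 ≤ hdD dist C F := fun F =>
    Real.iSup_nonneg fun y => Real.iInf_nonneg fun b => dist_nonneg
  have hhS : ∀ G : Set (↥A → 𝕜), 0 ≤ hdD D S G := fun G =>
    Real.iSup_nonneg fun u => Real.iInf_nonneg fun g => hDnonneg _ _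
  have hsCne : sC.Nonempty := by
    obtain ⟨y₀, hy₀⟩ := hCne
    exact ⟨hdD dist C {y₀}, {y₀}, singleton_subset_iff.2 hy₀, finite_singleton _,
      singleton_nonempty _, rfl⟩
  have hsSne : sS.Nonempty := by
    obtain ⟨u₀, hu₀⟩ := hSne
    exact ⟨hdD D S {u₀}, {u₀}, singleton_subset_iff.2 hu₀, finite_singleton _,
      singleton_nonempty _, rfl⟩
  have hsCbdd : BddBelow sC := by
    refine ⟨0, ?_⟩
    rintro r ⟨F, hF1, hF2, hF3, rfl⟩
    exact hhC F
  have hsSbdd : BddBelow sS := by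
    refine ⟨0, ?_⟩
    rintro r ⟨G, hG1, hG2, hG3, rfl⟩
    exact hhS G
  -- access to the sup: every point of the big set is within `hdD` of the finite set
  have hfactC : ∀ F : Set Y, F ⊆ C → F.Finite → F.Nonempty →
      ∀ y ∈ C, ∃ b ∈ F, dist y b ≤ hdD dist C F := by
    intro F hFC hFfin hFne y hy
    haveI : Finite ↥F := hFfin.to_subtype
    haveI : Nonempty ↥F := hFne.to_subtype
    obtain ⟨b₀, hb₀⟩ := hFne
    have hbddb : ∀ z ∈ C, BddBelow (Set.range fun b : F => dist z b) := fun z hz =>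
      (Set.finite_range _).bddBelow
    have h1 : (⨅ b : F, dist y b) ≤ hdD dist C F := by
      refine le_ciSup (f := fun y : C => ⨅ b : F, dist (y : Y) b) ⟨2 * M', ?_⟩
        (⟨y, hy⟩ : C)
      rintro _ ⟨z, rfl⟩
      exact ciInf_le_of_le (hbddb z z.2) ⟨b₀, hb₀⟩ (hCdist z z.2 b₀ (hFC hb₀))
    obtain ⟨b, hb⟩ := Finite.exists_min fun b : F => dist y b
    exact ⟨b, b.2, le_trans (le_ciInf hb) h1⟩
  have hfactS : ∀ G : Set (↥A → 𝕜), G ⊆ S → G.Finite → G.Nonempty →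
      ∀ u ∈ S, ∃ g ∈ G, D u g ≤ hdD D S G := by
    intro G hGS hGfin hGne u hu
    haveI : Finite ↥G := hGfin.to_subtype
    haveI : Nonempty ↥G := hGne.to_subtype
    obtain ⟨g₀, hg₀⟩ := hGne
    have hbddb : ∀ w ∈ S, BddBelow (Set.range fun g : G => D w g) := fun w hw =>
      (Set.finite_range _).bddBelow
    have h1 : (⨅ g : G, D u g) ≤ hdD D S G := by
      refine le_ciSup (f := fun w : S => ⨅ g : G, D (w : ↥A → 𝕜) g) ⟨2 * M', ?_⟩
        (⟨u, hu⟩ : S)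
      rintro _ ⟨w, rfl⟩
      exact ciInf_le_of_le (hbddb w w.2) ⟨g₀, hg₀⟩ (hDle w w.2 g₀ (hGS hg₀))
    obtain ⟨g, hg⟩ := Finite.exists_min fun g : G => D u g
    exact ⟨g, g.2, le_trans (le_ciInf hg) h1⟩
  ----------------------------------------------------------------
  -- PART 2 : chi0D D S ≤ 2 * chi0D dist C
  ----------------------------------------------------------------
  have key2 : ∀ r ∈ sC, ∀ ε > (0 : ℝ), sInf sS ≤ 2 * r + ε := by
    rintro r ⟨F, hFC, hFfin, hFne, rfl⟩ ε hε
    haveI : Fintype ↥F := hFfin.fintype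
    haveI : Nonempty ↥F := hFne.to_subtype
    set ρ : StrongDual 𝕜 Y → (↥F → 𝕜) := fun ψ => fun b => ψ b with hρdef
    set V : Set (↥F → 𝕜) := ρ '' {ψ : StrongDual 𝕜 Y | ‖ψ‖ ≤ 1} with hVdef
    have hVsub : V ⊆ closedBall 0 M' := by
      rintro _ ⟨ψ, hψ, rfl⟩
      rw [mem_closedBall, dist_zero_right]
      refine (pi_norm_le_iff_of_nonneg hM'pos.le).2 fun b => ?_
      calc ‖ψ (b : Y)‖ ≤ ‖ψ‖ * ‖(b : Y)‖ := ψ.le_opNorm _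
        _ ≤ 1 * M' := mul_le_mul hψ (hCub b (hFC b.2)) (norm_nonneg _) zero_le_one
        _ = M' := one_mul _
    have hVtb : TotallyBounded V :=
      (isCompact_closedBall (0 : ↥F → 𝕜) M').totallyBounded.subset hVsub
    obtain ⟨t, htV, htfin, htcov⟩ := finite_approx_of_totallyBounded hVtb (ε / 2)
      (by positivity)
    have hex : ∀ e ∈ t, ∃ ψ : StrongDual 𝕜 Y, ‖ψ‖ ≤ 1 ∧ ρ ψ = e := by
      intro e he
      obtain ⟨ψ, hψ, hψe⟩ := htV he
      exact ⟨ψ, hψ, hψe⟩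
    choose! Ψ hΨ1 hΨ2 using hex
    set G : Set (↥A → 𝕜) := (fun e => fun a : A => Ψ e (T a)) '' t with hGdef
    have hGS : G ⊆ S := by
      rintro _ ⟨e, he, rfl⟩
      exact (hSmem _).2 ⟨Ψ e, hΨ1 e he, rfl⟩
    have hGfin : G.Finite := htfin.image _
    have htne : t.Nonempty := by
      have h0 : ρ 0 ∈ V := ⟨0, by simp, rfl⟩
      obtain ⟨e, he, -⟩ := mem_iUnion₂.1 (htcov h0)
      exact ⟨e, he⟩
    have hGne : G.Nonempty := htne.image _
    have hbound : hdD D S G ≤ 2 * hdD dist C F + ε := by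
      have hr0 := hhC F
      refine Real.iSup_le (fun u => ?_) (by linarith)
      obtain ⟨ψ, hψ, hu⟩ := (hSmem u).1 u.2
      have hρV : ρ ψ ∈ V := ⟨ψ, hψ, rfl⟩
      obtain ⟨e, het, hball⟩ := mem_iUnion₂.1 (htcov hρV)
      have hgmem : (fun a : A => Ψ e (T a)) ∈ G := ⟨e, het, rfl⟩
      haveI : Finite ↥G := hGfin.to_subtype
      refine ciInf_le_of_le ((Set.finite_range _).bddBelow)
        (⟨_, hgmem⟩ : G) ?_
      rw [hu]
      refine Real.iSup_le (fun a => ?_) (by linarith)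
      obtain ⟨b, hbF, hbd⟩ := hfactC F hFC hFfin hFne (T a) ⟨a, a.2, rfl⟩
      have e1 : ‖ψ (T (a : X)) - ψ b‖ ≤ hdD dist C F := by
        rw [← map_sub]
        calc ‖ψ (T (a : X) - b)‖ ≤ ‖ψ‖ * ‖T (a : X) - b‖ := ψ.le_opNorm _
          _ ≤ 1 * ‖T (a : X) - b‖ :=
              mul_le_mul_of_nonneg_right hψ (norm_nonneg _)
          _ = dist (T (a : X)) b := by rw [one_mul, dist_eq_norm]
          _ ≤ hdD dist C F := hbd
      have e2 : ‖ψ b - Ψ e b‖ ≤ ε / 2 := by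
        have h1 : dist (ρ ψ ⟨b, hbF⟩) (ρ (Ψ e) ⟨b, hbF⟩) ≤ dist (ρ ψ) (ρ (Ψ e)) :=
          dist_le_pi_dist _ _ _
        have h2 : dist (ρ ψ) (ρ (Ψ e)) ≤ ε / 2 := by
          rw [hΨ2 e het]
          exact (mem_ball.1 hball).le
        have h3 : dist (ρ ψ ⟨b, hbF⟩) (ρ (Ψ e) ⟨b, hbF⟩) = ‖ψ b - Ψ e b‖ := by
          simp [hρdef, dist_eq_norm]
        rw [h3] at h1
        exact h1.trans h2
      have e3 : ‖Ψ e b - Ψ e (T (a : X))‖ ≤ hdD dist C F := by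
        rw [← map_sub]
        calc ‖Ψ e (b - T (a : X))‖ ≤ ‖Ψ e‖ * ‖b - T (a : X)‖ := (Ψ e).le_opNorm _
          _ ≤ 1 * ‖b - T (a : X)‖ :=
              mul_le_mul_of_nonneg_right (hΨ1 e het) (norm_nonneg _)
          _ = dist (T (a : X)) b := by
              rw [one_mul, norm_sub_rev, dist_eq_norm]
          _ ≤ hdD dist C F := hbd
      calc ‖ψ (T (a : X)) - Ψ e (T (a : X))‖
          = dist (ψ (T (a : X))) (Ψ e (T (a : X))) := (dist_eq_norm _ _).symm
        _ ≤ dist (ψ (T (a : X))) (ψ b) + dist (ψ b) (Ψ e b)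
              + dist (Ψ e b) (Ψ e (T (a : X))) := dist_triangle4 _ _ _ _
        _ ≤ hdD dist C F + ε / 2 + hdD dist C F := by
            rw [dist_eq_norm, dist_eq_norm, dist_eq_norm]
            exact add_le_add (add_le_add e1 e2) e3
        _ ≤ 2 * hdD dist C F + ε := by linarith
    have hmem : hdD D S G ∈ sS := ⟨G, hGS, hGfin, hGne, rfl⟩
    exact (csInf_le hsSbdd hmem).trans hbound
  have part2 : sInf sS ≤ 2 * sInf sC := by
    have h1 : ∀ r ∈ sC, sInf sS ≤ 2 * r := fun r hr =>
      le_of_forall_pos_le_add fun ε hε => key2 r hr ε hε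
    have h2 : sInf sS / 2 ≤ sInf sC :=
      le_csInf hsCne fun r hr => by linarith [h1 r hr]
    linarith
  ----------------------------------------------------------------
  -- PART 1 : chi0D dist C ≤ 2 * chi0D D S
  ----------------------------------------------------------------
  have key1 : ∀ s ∈ sS, ∀ ε > (0 : ℝ), sInf sC ≤ 2 * s + ε := by
    rintro s ⟨G, hGS, hGfin, hGne, rfl⟩ ε hε
    set s := hdD D S G with hsdef
    have hs0 : 0 ≤ s := hhS G
    by_contra hcon
    push_neg at hcon
    obtain ⟨y₀, hy₀⟩ := hCne
    -- separation: every finite subset of C misses some far away point of C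
    have hsep : ∀ F : Finset Y, ↑F ⊆ C → F.Nonempty →
        ∃ y ∈ C, ∀ b ∈ F, 2 * s + ε < dist y b := by
      intro F hFC hFne
      have hmem : hdD dist C ↑F ∈ sC :=
        ⟨↑F, hFC, F.finite_toSet, Finset.coe_nonempty.2 hFne, rfl⟩
      have hgt : 2 * s + ε < hdD dist C ↑F :=
        lt_of_lt_of_le hcon (csInf_le hsCbdd hmem)
      by_contra hno
      push_neg at hno
      have : hdD dist C ↑F ≤ 2 * s + ε := by
        refine Real.iSup_le (fun y => ?_) (by linarith)
        obtain ⟨b, hbF, hb⟩ := hno y y.2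
        haveI : Finite ↥(↑F : Set Y) := F.finite_toSet.to_subtype
        exact ciInf_le_of_le ((Set.finite_range _).bddBelow)
          (⟨b, Finset.mem_coe.2 hbF⟩ : (↑F : Set Y)) hb
      linarith
    have hsep' : ∀ F : Finset Y, ∃ y, (↑F ⊆ C ∧ F.Nonempty) →
        (y ∈ C ∧ ∀ b ∈ F, 2 * s + ε < dist y b) := by
      intro F
      by_cases h : ↑F ⊆ C ∧ F.Nonempty
      · obtain ⟨y, hy, hd⟩ := hsep F h.1 h.2
        exact ⟨y, fun _ => ⟨hy, hd⟩⟩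
      · exact ⟨y₀, fun hh => absurd hh h⟩
    choose nxt hnxt using hsep'
    -- a sequence of points of C that are pairwise (2s+ε)-separated
    set Fs : ℕ → Finset Y := fun n =>
      Nat.rec {y₀} (fun _ F => insert (nxt F) F) n with hFsdef
    have hFssucc : ∀ n, Fs (n + 1) = insert (nxt (Fs n)) (Fs n) := fun n => rfl
    have hFsC : ∀ n, ↑(Fs n) ⊆ C ∧ (Fs n).Nonempty := by
      intro n
      induction n with
      | zero =>
          have hFs0 : Fs 0 = ({y₀} : Finset Y) := rfl
          rw [hFs0]
          constructor
          · intro y hy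
            rw [Finset.coe_singleton, mem_singleton_iff] at hy
            rwa [hy]
          · exact Finset.singleton_nonempty _
      | succ n ih =>
          have hn := hnxt (Fs n) ih
          constructor
          · rw [hFssucc, Finset.coe_insert]
            exact insert_subset hn.1 ih.1
          · rw [hFssucc]
            exact Finset.insert_nonempty _ _
    set c : ℕ → Y := fun n => nxt (Fs n) with hcdef
    have hcC : ∀ n, c n ∈ C := fun n => (hnxt (Fs n) (hFsC n)).1
    have hcF : ∀ n, c n ∈ Fs (n + 1) := by
      intro n
      rw [hFssucc]
      exact Finset.mem_insert_self _ _
    have hmono : Monotone Fs := monotone_nat_of_le_succ fun n => by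
      rw [hFssucc]; exact Finset.subset_insert _ _
    have hcd : ∀ m n, m < n → 2 * s + ε < dist (c n) (c m) := by
      intro m n hmn
      have hcm : c m ∈ Fs n := hmono hmn (hcF m)
      exact (hnxt (Fs n) (hFsC n)).2 _ hcm
    -- pigeonhole in the finite-dimensional space 𝕜^G
    haveI : Fintype ↥G := hGfin.fintype
    haveI : Nonempty ↥G := hGne.to_subtype
    have hgex : ∀ g : ↥G, ∃ ψ : StrongDual 𝕜 Y, ‖ψ‖ ≤ 1 ∧
        (g : ↥A → 𝕜) = fun a : A => ψ (T a) := fun g => (hSmem g).1 (hGS g.2)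
    choose Ψ hΨ1 hΨ2 using hgex
    set v : ℕ → (↥G → 𝕜) := fun n => fun g => Ψ g (c n) with hvdef
    have hv : ∀ n, v n ∈ closedBall (0 : ↥G → 𝕜) M' := by
      intro n
      rw [mem_closedBall, dist_zero_right]
      refine (pi_norm_le_iff_of_nonneg hM'pos.le).2 fun g => ?_
      calc ‖Ψ g (c n)‖ ≤ ‖Ψ g‖ * ‖c n‖ := (Ψ g).le_opNorm _
        _ ≤ 1 * M' := mul_le_mul (hΨ1 g) (hCub _ (hcC n)) (norm_nonneg _) zero_le_one
        _ = M' := one_mul _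
    obtain ⟨t, htsub, htfin, htcov⟩ := finite_approx_of_totallyBounded
      ((isCompact_closedBall (0 : ↥G → 𝕜) M').totallyBounded) (ε / 4) (by positivity)
    have hcenter : ∀ n, ∃ e, e ∈ t ∧ v n ∈ ball e (ε / 4) := by
      intro n
      obtain ⟨e, he, hb⟩ := mem_iUnion₂.1 (htcov (hv n))
      exact ⟨e, he, hb⟩
    choose ctr hctr1 hctr2 using hcenter
    haveI : Finite ↥t := htfin.to_subtype
    have main : ∀ p q : ℕ, q < p → ctr p = ctr q → False := by
      intro p q hqp hceq
      have hvd : dist (v p) (v q) < ε / 2 := by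
        have h1 : dist (v p) (ctr p) < ε / 4 := mem_ball.1 (hctr2 p)
        have h2 : dist (v q) (ctr q) < ε / 4 := mem_ball.1 (hctr2 q)
        have h3 : dist (v p) (v q) ≤ dist (v p) (ctr p) + dist (ctr p) (v q) :=
          dist_triangle _ _ _
        have h4 : dist (ctr p) (v q) = dist (v q) (ctr q) := by rw [hceq, dist_comm]
        linarith
      have hdistpq : 2 * s + ε < dist (c p) (c q) := hcd q p hqp
      have hne0 : c p - c q ≠ 0 := by
        rw [sub_ne_zero]
        intro h
        rw [h, dist_self] at hdistpq
        linarith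
      obtain ⟨ψ, hψn, hψx⟩ := exists_dual_vector 𝕜 (c p - c q) (norm_ne_zero_iff.2 hne0)
      have huS : (fun a : A => ψ (T a)) ∈ S := (hSmem _).2 ⟨ψ, le_of_eq hψn, rfl⟩
      obtain ⟨g, hgG, hDug⟩ := hfactS G hGS hGfin hGne _ huS
      -- the coordinates where c p, c q live
      obtain ⟨xp, hxp, hTxp⟩ := hcC p
      obtain ⟨xq, hxq, hTxq⟩ := hcC q
      set ψ' : StrongDual 𝕜 Y := Ψ ⟨g, hgG⟩ with hψ'def
      have hg : g = fun a : A => ψ' (T a) := hΨ2 ⟨g, hgG⟩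
      have h1 : ‖ψ (c p) - ψ' (c p)‖ ≤ s := by
        have h := (hDge _ huS _ (hGS hgG) ⟨xp, hxp⟩).trans hDug
        rw [hsdef]
        simp only [hg] at h
        simpa [hTxp] using h
      have h2 : ‖ψ (c q) - ψ' (c q)‖ ≤ s := by
        have h := (hDge _ huS _ (hGS hgG) ⟨xq, hxq⟩).trans hDug
        rw [hsdef]
        simp only [hg] at h
        simpa [hTxq] using h
      have h3 : ‖ψ' (c p) - ψ' (c q)‖ < ε / 2 := by
        have h := dist_le_pi_dist (v p) (v q) ⟨g, hgG⟩
        have hvp : v p ⟨g, hgG⟩ = ψ' (c p) := rfl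
        have hvq : v q ⟨g, hgG⟩ = ψ' (c q) := rfl
        rw [hvp, hvq, dist_eq_norm] at h
        exact lt_of_le_of_lt h hvd
      have hnorm : ‖c p - c q‖ ≤ ‖ψ (c p) - ψ (c q)‖ := by
        have : ψ (c p) - ψ (c q) = ((‖c p - c q‖ : ℝ) : 𝕜) := by
          rw [← map_sub, hψx]
        rw [this, RCLike.norm_ofReal, abs_of_nonneg (norm_nonneg _)]
      have htri : ‖ψ (c p) - ψ (c q)‖ ≤ s + ε / 2 + s := by
        calc ‖ψ (c p) - ψ (c q)‖ = dist (ψ (c p)) (ψ (c q)) := (dist_eq_norm _ _).symm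
          _ ≤ dist (ψ (c p)) (ψ' (c p)) + dist (ψ' (c p)) (ψ' (c q))
                + dist (ψ' (c q)) (ψ (c q)) := dist_triangle4 _ _ _ _
          _ ≤ s + ε / 2 + s := by
              rw [dist_eq_norm, dist_eq_norm, dist_eq_norm]
              exact add_le_add (add_le_add h1 h3.le) (by rw [norm_sub_rev]; exact h2)
      have : dist (c p) (c q) ≤ 2 * s + ε / 2 := by
        rw [dist_eq_norm]
        linarith [hnorm.trans htri]
      linarith
    obtain ⟨p, q, hpq, heq⟩ := Finite.exists_ne_map_eq_of_infinite
      (fun n : ℕ => (⟨ctr n, hctr1 n⟩ : ↥t))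
    have heq' : ctr p = ctr q := congrArg Subtype.val heq
    rcases hpq.lt_or_gt with h | h
    · exact main q p h heq'.symm
    · exact main p q h heq'
  have part1 : sInf sC ≤ 2 * sInf sS := by
    have h1 : ∀ s ∈ sS, sInf sC ≤ 2 * s := fun s hs =>
      le_of_forall_pos_le_add fun ε hε => key1 s hs ε hε
    have h2 : sInf sC / 2 ≤ sInf sS :=
      le_csInf hsSne fun s hs => by linarith [h1 s hs]
    linarith
  rw [hchiC, hchiS]
  constructor
  · linarith
  · linarith
end
end

section
/- Let Ω be a Hausdorff locally compact space and A ⊆ M(Ω) a nonempty bounded set of finite complex Radon measures. Then sup{ limsup_{k→∞} sup_{μ∈A} |μ(U_k)| : (U_k) is a sequence of pairwise disjoint open subsets of Ω } ≤ sup{ limsup_{k→∞} sup_{μ∈A} |∫ f_k dμ| : (f_k) is a weakly null sequence in the closed unit ball of C₀(Ω) }. -/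
open Filter Metric Set MeasureTheory
open scoped ZeroAtInfty Topology
open scoped Function

noncomputable section

/-- The total variation `|μ|(H)` of a vector measure `μ` on a set `H`:
the supremum of `∑ ‖μ(D_i)‖` over finite disjoint families of measurable
subsets of `H`. -/
def variation {α : Type*} [MeasurableSpace α] {E : Type*} [NormedAddCommGroup E]
    (μ : VectorMeasure α E) (H : Set α) : ℝ :=
  sSup {r | ∃ (n : ℕ) (D : Fin n → Set α), (∀ i, MeasurableSet (D i)) ∧
    Pairwise (Disjoint on D) ∧ (∀ i, D i ⊆ H) ∧ r = ∑ i, ‖μ (D i)‖}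

/-- A vector measure on a topological measurable space is Radon if it is
inner regular by compact sets and outer regular by open sets, in variation. -/
def IsRadonVM {Ω : Type*} [TopologicalSpace Ω] [MeasurableSpace Ω] {E : Type*}
    [NormedAddCommGroup E] (μ : VectorMeasure Ω E) : Prop :=
  ∀ A : Set Ω, MeasurableSet A → ∀ ε > 0,
    (∃ K, K ⊆ A ∧ IsCompact K ∧ variation μ (A \ K) < ε) ∧
    (∃ U, A ⊆ U ∧ IsOpen U ∧ variation μ (U \ A) < ε)

/-- The integral `∫ f ds` of a (bounded continuous) function against a signed
measure, via the Jordan decomposition. -/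
def signedPairing {Ω : Type*} [MeasurableSpace Ω] (s : SignedMeasure Ω) (f : Ω → ℂ) : ℂ :=
  ∫ x, f x ∂s.toJordanDecomposition.posPart - ∫ x, f x ∂s.toJordanDecomposition.negPart

/-- The integral `∫ f dμ` of a function against a complex measure `μ`,
via real and imaginary parts. -/
def complexPairing {Ω : Type*} [MeasurableSpace Ω] (μ : ComplexMeasure Ω) (f : Ω → ℂ) : ℂ :=
  signedPairing (ComplexMeasure.re μ) f + Complex.I * signedPairing (ComplexMeasure.im μ) f

namespace ForProof

section Variation

variable {Ω : Type*} [MeasurableSpace Ω]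

def vset {E : Type*} [NormedAddCommGroup E] (μ : VectorMeasure Ω E) (H : Set Ω) : Set ℝ :=
  {r | ∃ (n : ℕ) (D : Fin n → Set Ω), (∀ i, MeasurableSet (D i)) ∧
    Pairwise (Disjoint on D) ∧ (∀ i, D i ⊆ H) ∧ r = ∑ i, ‖μ (D i)‖}

lemma variation_eq {E : Type*} [NormedAddCommGroup E] (μ : VectorMeasure Ω E) (H : Set Ω) :
    variation μ H = sSup (vset μ H) := rfl

lemma zero_mem_vset {E : Type*} [NormedAddCommGroup E] (μ : VectorMeasure Ω E) (H : Set Ω) :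
    (0 : ℝ) ∈ vset μ H :=
  ⟨0, fun i => i.elim0, fun i => i.elim0, fun i => i.elim0, fun i => i.elim0, by simp⟩

lemma sum_toReal_measure_le (ν : Measure Ω) [IsFiniteMeasure ν] {n : ℕ} (D : Fin n → Set Ω)
    (hm : ∀ i, MeasurableSet (D i)) (hd : Pairwise (Disjoint on D)) :
    ∑ i, (ν (D i)).toReal ≤ (ν univ).toReal := by
  rw [← ENNReal.toReal_sum (fun a _ => measure_ne_top ν _)]
  refine ENNReal.toReal_mono (measure_ne_top ν _) ?_
  calc ∑ i, ν (D i) = ∑' i, ν (D i) := (tsum_fintype _).symm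
    _ = ν (⋃ i, D i) := (measure_iUnion hd hm).symm
    _ ≤ ν univ := measure_mono (subset_univ _)

lemma re_apply' (μ : ComplexMeasure Ω) (E : Set Ω) :
    ComplexMeasure.re μ E = (μ E).re := by
  rw [ComplexMeasure.re_apply]; rfl

lemma im_apply' (μ : ComplexMeasure Ω) (E : Set Ω) :
    ComplexMeasure.im μ E = (μ E).im := by
  rw [ComplexMeasure.im_apply]; rfl

lemma signed_eq_jordan (s : SignedMeasure Ω) {E : Set Ω} (hE : MeasurableSet E) :
    s E = (s.toJordanDecomposition.posPart E).toReal
      - (s.toJordanDecomposition.negPart E).toReal := by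
  conv_lhs => rw [← s.toSignedMeasure_toJordanDecomposition]
  exact MeasureTheory.Measure.toSignedMeasure_sub_apply hE

lemma abs_signed_le_jordan (s : SignedMeasure Ω) {E : Set Ω} (hE : MeasurableSet E) :
    |s E| ≤ (s.toJordanDecomposition.posPart E).toReal
      + (s.toJordanDecomposition.negPart E).toReal := by
  rw [signed_eq_jordan s hE]
  exact (abs_sub _ _).trans (by
    rw [abs_of_nonneg ENNReal.toReal_nonneg, abs_of_nonneg ENNReal.toReal_nonneg])

/-- global bound for elements of the variation set -/
def Mb (μ : ComplexMeasure Ω) : ℝ :=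
  ((ComplexMeasure.re μ).toJordanDecomposition.posPart univ).toReal
  + ((ComplexMeasure.re μ).toJordanDecomposition.negPart univ).toReal
  + ((ComplexMeasure.im μ).toJordanDecomposition.posPart univ).toReal
  + ((ComplexMeasure.im μ).toJordanDecomposition.negPart univ).toReal

lemma vset_le_Mb (μ : ComplexMeasure Ω) (H : Set Ω) {r : ℝ} (hr : r ∈ vset μ H) : r ≤ Mb μ := by
  obtain ⟨n, D, hm, hd, hsub, rfl⟩ := hr
  have step : ∀ i, ‖μ (D i)‖ ≤
      ((ComplexMeasure.re μ).toJordanDecomposition.posPart (D i)).toReal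
      + ((ComplexMeasure.re μ).toJordanDecomposition.negPart (D i)).toReal
      + (((ComplexMeasure.im μ).toJordanDecomposition.posPart (D i)).toReal
      + ((ComplexMeasure.im μ).toJordanDecomposition.negPart (D i)).toReal) := by
    intro i
    have h1 : ‖μ (D i)‖ ≤ |(μ (D i)).re| + |(μ (D i)).im| := by
      exact Complex.norm_le_abs_re_add_abs_im _
    refine h1.trans (add_le_add ?_ ?_)
    · rw [← re_apply']; exact abs_signed_le_jordan _ (hm i)
    · rw [← im_apply']; exact abs_signed_le_jordan _ (hm i)
  calc ∑ i, ‖μ (D i)‖ ≤ ∑ i, (((ComplexMeasure.re μ).toJordanDecomposition.posPart (D i)).toReal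
      + ((ComplexMeasure.re μ).toJordanDecomposition.negPart (D i)).toReal
      + (((ComplexMeasure.im μ).toJordanDecomposition.posPart (D i)).toReal
      + ((ComplexMeasure.im μ).toJordanDecomposition.negPart (D i)).toReal)) :=
        Finset.sum_le_sum (fun i _ => step i)
    _ ≤ Mb μ := by
        rw [Finset.sum_add_distrib, Finset.sum_add_distrib, Finset.sum_add_distrib]
        have h1 := sum_toReal_measure_le ((ComplexMeasure.re μ).toJordanDecomposition.posPart) D hm hd
        have h2 := sum_toReal_measure_le ((ComplexMeasure.re μ).toJordanDecomposition.negPart) D hm hd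
        have h3 := sum_toReal_measure_le ((ComplexMeasure.im μ).toJordanDecomposition.posPart) D hm hd
        have h4 := sum_toReal_measure_le ((ComplexMeasure.im μ).toJordanDecomposition.negPart) D hm hd
        unfold Mb; linarith

lemma vset_bddAbove (μ : ComplexMeasure Ω) (H : Set Ω) : BddAbove (vset μ H) :=
  ⟨Mb μ, fun _ hr => vset_le_Mb μ H hr⟩

lemma variation_nonneg (μ : ComplexMeasure Ω) (H : Set Ω) : 0 ≤ variation μ H :=
  le_csSup (vset_bddAbove μ H) (zero_mem_vset μ H)

lemma norm_le_variation (μ : ComplexMeasure Ω) {E H : Set Ω} (hE : MeasurableSet E)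
    (hEH : E ⊆ H) : ‖μ E‖ ≤ variation μ H :=
  le_csSup (vset_bddAbove μ H) ⟨1, fun _ => E, fun _ => hE, Subsingleton.pairwise,
    fun _ => hEH, by simp⟩

lemma jordan_le_variation (μ : ComplexMeasure Ω) (s : SignedMeasure Ω)
    (hs : ∀ E : Set Ω, MeasurableSet E → |s E| ≤ ‖μ E‖) {E H : Set Ω}
    (hE : MeasurableSet E) (hEH : E ⊆ H) :
    (s.toJordanDecomposition.posPart E).toReal + (s.toJordanDecomposition.negPart E).toReal
      ≤ 2 * variation μ H := by
  obtain ⟨i, hi₁, hi₂, hi₃, hpos, hneg⟩ := s.toJordanDecomposition_spec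
  have h1 : (s.toJordanDecomposition.posPart E).toReal = s (i ∩ E) := by
    rw [hpos, SignedMeasure.toMeasureOfZeroLE_apply _ hi₂ hi₁ hE]; simp
  have h2 : (s.toJordanDecomposition.negPart E).toReal = -s (iᶜ ∩ E) := by
    rw [hneg, SignedMeasure.toMeasureOfLEZero_apply _ hi₃ hi₁.compl hE]; simp
  have b1 : s (i ∩ E) ≤ variation μ H := by
    refine (le_abs_self _).trans ((hs _ (hi₁.inter hE)).trans ?_)
    exact norm_le_variation μ (hi₁.inter hE) ((inter_subset_right).trans hEH)
  have b2 : -s (iᶜ ∩ E) ≤ variation μ H := by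
    refine (neg_le_abs _).trans ((hs _ (hi₁.compl.inter hE)).trans ?_)
    exact norm_le_variation μ (hi₁.compl.inter hE) ((inter_subset_right).trans hEH)
  rw [h1, h2]; linarith

lemma abs_re_le_norm (μ : ComplexMeasure Ω) :
    ∀ E : Set Ω, MeasurableSet E → |ComplexMeasure.re μ E| ≤ ‖μ E‖ := fun E _ => by
  rw [re_apply']; exact Complex.abs_re_le_norm _

lemma abs_im_le_norm (μ : ComplexMeasure Ω) :
    ∀ E : Set Ω, MeasurableSet E → |ComplexMeasure.im μ E| ≤ ‖μ E‖ := fun E _ => by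
  rw [im_apply']; exact Complex.abs_im_le_norm _

end Variation

section C0
variable {Ω : Type*} [TopologicalSpace Ω]

lemma norm_apply_le (f : C₀(Ω, ℂ)) (x : Ω) : ‖f x‖ ≤ ‖f‖ := by
  rw [← ZeroAtInftyContinuousMap.norm_toBCF_eq_norm]
  exact BoundedContinuousFunction.norm_coe_le_norm f.toBCF x

lemma c0_norm_le (f : C₀(Ω, ℂ)) {C : ℝ} (hC : 0 ≤ C) (h : ∀ x, ‖f x‖ ≤ C) : ‖f‖ ≤ C := by
  rw [← ZeroAtInftyContinuousMap.norm_toBCF_eq_norm]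
  exact (BoundedContinuousFunction.norm_le hC).mpr h

end C0

section Pairing

variable {Ω : Type*} [MeasurableSpace Ω] [TopologicalSpace Ω] [OpensMeasurableSpace Ω]

lemma integral_close (ν : Measure Ω) [IsFiniteMeasure ν]
    {U K : Set Ω} (hU : IsOpen U) (hKm : MeasurableSet K) (hKU : K ⊆ U) (f0 : C(Ω, ℝ))
    (hf1 : EqOn ⇑f0 1 K) (hf0 : EqOn ⇑f0 0 Uᶜ) (h01 : ∀ x, f0 x ∈ Icc (0:ℝ) 1) :
    |(∫ x, f0 x ∂ν) - (ν U).toReal| ≤ (ν (U \ K)).toReal := by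
  have hUm := hU.measurableSet
  have hfi : Integrable (⇑f0) ν := by
    refine Integrable.mono' (integrable_const 1) f0.continuous.aestronglyMeasurable
      (ae_of_all _ fun x => ?_)
    rw [Real.norm_eq_abs, abs_of_nonneg (h01 x).1]; exact (h01 x).2
  have hind : Integrable (U.indicator (fun _ => (1:ℝ))) ν := (integrable_const 1).indicator hUm
  have hind2 : Integrable ((U \ K).indicator (fun _ => (1:ℝ))) ν :=
    (integrable_const 1).indicator (hUm.diff hKm)
  have h2 : ∫ x, U.indicator (fun _ => (1:ℝ)) x ∂ν = (ν U).toReal := by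
    rw [integral_indicator_const (1:ℝ) hUm]; simp; rfl
  have h3 : ∫ x, (U \ K).indicator (fun _ => (1:ℝ)) x ∂ν = (ν (U \ K)).toReal := by
    rw [integral_indicator_const (1:ℝ) (hUm.diff hKm)]; simp; rfl
  rw [← h2, ← integral_sub hfi hind]
  calc |∫ x, (f0 x - U.indicator (fun _ => (1:ℝ)) x) ∂ν|
      ≤ ∫ x, |f0 x - U.indicator (fun _ => (1:ℝ)) x| ∂ν := by
        simpa [Real.norm_eq_abs] using
          norm_integral_le_integral_norm (fun x => f0 x - U.indicator (fun _ => (1:ℝ)) x) (μ := ν)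
    _ ≤ ∫ x, (U \ K).indicator (fun _ => (1:ℝ)) x ∂ν := by
        refine integral_mono (hfi.sub hind).abs hind2 (fun x => ?_)
        by_cases hxK : x ∈ K
        · have hxU : x ∈ U := hKU hxK
          have : f0 x = 1 := hf1 hxK
          simp only [indicator_of_mem hxU, this, sub_self, abs_zero]
          exact indicator_nonneg (fun _ _ => zero_le_one) _
        · by_cases hxU : x ∈ U
          · have hmem : x ∈ U \ K := ⟨hxU, hxK⟩
            rw [indicator_of_mem hxU, indicator_of_mem hmem]
            exact abs_le.mpr ⟨by linarith [(h01 x).1], by linarith [(h01 x).2]⟩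
          · rw [indicator_of_notMem hxU]
            have : f0 x = 0 := hf0 hxU
            simp only [this, sub_zero, abs_zero]
            exact indicator_nonneg (fun _ _ => zero_le_one) _
    _ = (ν (U \ K)).toReal := h3

lemma signedPairing_close (s : SignedMeasure Ω)
    {U K : Set Ω} (hU : IsOpen U) (hKm : MeasurableSet K) (hKU : K ⊆ U) (f0 : C(Ω, ℝ))
    (hf1 : EqOn ⇑f0 1 K) (hf0 : EqOn ⇑f0 0 Uᶜ) (h01 : ∀ x, f0 x ∈ Icc (0:ℝ) 1) :
    ‖signedPairing s (fun x => (f0 x : ℂ)) - (s U : ℂ)‖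
      ≤ (s.toJordanDecomposition.posPart (U \ K)).toReal
        + (s.toJordanDecomposition.negPart (U \ K)).toReal := by
  have hsU : s U = (s.toJordanDecomposition.posPart U).toReal
      - (s.toJordanDecomposition.negPart U).toReal := by
    conv_lhs => rw [← s.toSignedMeasure_toJordanDecomposition]
    exact MeasureTheory.Measure.toSignedMeasure_sub_apply hU.measurableSet
  have key : signedPairing s (fun x => (f0 x : ℂ)) - (s U : ℂ)
      = ((((∫ x, f0 x ∂s.toJordanDecomposition.posPart)
            - (s.toJordanDecomposition.posPart U).toReal)
          - ((∫ x, f0 x ∂s.toJordanDecomposition.negPart)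
            - (s.toJordanDecomposition.negPart U).toReal) : ℝ) : ℂ) := by
    have e1 : ∫ x, ((f0 x : ℝ) : ℂ) ∂s.toJordanDecomposition.posPart
        = ((∫ x, f0 x ∂s.toJordanDecomposition.posPart : ℝ) : ℂ) := integral_ofReal
    have e2 : ∫ x, ((f0 x : ℝ) : ℂ) ∂s.toJordanDecomposition.negPart
        = ((∫ x, f0 x ∂s.toJordanDecomposition.negPart : ℝ) : ℂ) := integral_ofReal
    rw [signedPairing, e1, e2, hsU]
    push_cast
    ring
  rw [key, Complex.norm_real, Real.norm_eq_abs]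
  refine (abs_sub _ _).trans (add_le_add ?_ ?_)
  · exact integral_close _ hU hKm hKU f0 hf1 hf0 h01
  · exact integral_close _ hU hKm hKU f0 hf1 hf0 h01

lemma complexPairing_close (μ : ComplexMeasure Ω)
    {U K : Set Ω} (hU : IsOpen U) (hKm : MeasurableSet K) (hKU : K ⊆ U) (f0 : C(Ω, ℝ))
    (hf1 : EqOn ⇑f0 1 K) (hf0 : EqOn ⇑f0 0 Uᶜ) (h01 : ∀ x, f0 x ∈ Icc (0:ℝ) 1) :
    ‖complexPairing μ (fun x => (f0 x : ℂ)) - μ U‖ ≤ 4 * variation μ (U \ K) := by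
  have hre := signedPairing_close (ComplexMeasure.re μ) hU hKm hKU f0 hf1 hf0 h01
  have him := signedPairing_close (ComplexMeasure.im μ) hU hKm hKU f0 hf1 hf0 h01
  have hreV := jordan_le_variation μ (ComplexMeasure.re μ) (abs_re_le_norm μ)
    (hU.measurableSet.diff hKm) (subset_refl (U \ K))
  have himV := jordan_le_variation μ (ComplexMeasure.im μ) (abs_im_le_norm μ)
    (hU.measurableSet.diff hKm) (subset_refl (U \ K))
  have key : complexPairing μ (fun x => (f0 x : ℂ)) - μ U
      = (signedPairing (ComplexMeasure.re μ) (fun x => (f0 x : ℂ))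
          - ((ComplexMeasure.re μ) U : ℂ))
        + Complex.I * (signedPairing (ComplexMeasure.im μ) (fun x => (f0 x : ℂ))
          - ((ComplexMeasure.im μ) U : ℂ)) := by
    rw [complexPairing, re_apply', im_apply']
    obtain ⟨x, y⟩ := μ U
    simp [Complex.ext_iff]
    ring_nf
    simp
  rw [key]
  calc ‖_ + _‖ ≤ ‖signedPairing (ComplexMeasure.re μ) (fun x => (f0 x : ℂ))
          - ((ComplexMeasure.re μ) U : ℂ)‖
        + ‖Complex.I * (signedPairing (ComplexMeasure.im μ) (fun x => (f0 x : ℂ))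
          - ((ComplexMeasure.im μ) U : ℂ))‖ := norm_add_le _ _
    _ = ‖signedPairing (ComplexMeasure.re μ) (fun x => (f0 x : ℂ))
          - ((ComplexMeasure.re μ) U : ℂ)‖
        + ‖signedPairing (ComplexMeasure.im μ) (fun x => (f0 x : ℂ))
          - ((ComplexMeasure.im μ) U : ℂ)‖ := by rw [norm_mul, Complex.norm_I, one_mul]
    _ ≤ 2 * variation μ (U \ K) + 2 * variation μ (U \ K) :=
        add_le_add (hre.trans hreV) (him.trans himV)
    _ = 4 * variation μ (U \ K) := by ring

lemma signedPairing_norm_le (μ : ComplexMeasure Ω) (s : SignedMeasure Ω)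
    (hs : ∀ E : Set Ω, MeasurableSet E → |s E| ≤ ‖μ E‖)
    (f : C₀(Ω, ℂ)) (hf : ‖f‖ ≤ 1) : ‖signedPairing s ⇑f‖ ≤ 2 * variation μ univ := by
  have h1 : ‖∫ x, f x ∂s.toJordanDecomposition.posPart‖
      ≤ 1 * (s.toJordanDecomposition.posPart univ).toReal :=
    norm_integral_le_of_norm_le_const (ae_of_all _ fun x => (norm_apply_le f x).trans hf)
  have h2 : ‖∫ x, f x ∂s.toJordanDecomposition.negPart‖
      ≤ 1 * (s.toJordanDecomposition.negPart univ).toReal :=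
    norm_integral_le_of_norm_le_const (ae_of_all _ fun x => (norm_apply_le f x).trans hf)
  have h3 := jordan_le_variation μ s hs MeasurableSet.univ (subset_refl univ)
  calc ‖signedPairing s ⇑f‖
      ≤ ‖∫ x, f x ∂s.toJordanDecomposition.posPart‖
        + ‖∫ x, f x ∂s.toJordanDecomposition.negPart‖ := norm_sub_le _ _
    _ ≤ 2 * variation μ univ := by linarith

lemma complexPairing_norm_le (μ : ComplexMeasure Ω) (f : C₀(Ω, ℂ)) (hf : ‖f‖ ≤ 1) :
    ‖complexPairing μ ⇑f‖ ≤ 4 * variation μ univ := by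
  have h1 := signedPairing_norm_le μ (ComplexMeasure.re μ) (abs_re_le_norm μ) f hf
  have h2 := signedPairing_norm_le μ (ComplexMeasure.im μ) (abs_im_le_norm μ) f hf
  calc ‖complexPairing μ ⇑f‖
      ≤ ‖signedPairing (ComplexMeasure.re μ) ⇑f‖
        + ‖Complex.I * signedPairing (ComplexMeasure.im μ) ⇑f‖ := norm_add_le _ _
    _ = ‖signedPairing (ComplexMeasure.re μ) ⇑f‖
        + ‖signedPairing (ComplexMeasure.im μ) ⇑f‖ := by rw [norm_mul, Complex.norm_I, one_mul]
    _ ≤ 4 * variation μ univ := by linarith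

lemma complexPairing_zero (μ : ComplexMeasure Ω) :
    complexPairing μ ⇑(0 : C₀(Ω, ℂ)) = 0 := by
  have : ⇑(0 : C₀(Ω, ℂ)) = fun _ => (0 : ℂ) := rfl
  rw [this]
  simp [complexPairing, signedPairing]

end Pairing

section WeaklyNull

variable {Ω : Type*} [TopologicalSpace Ω]

lemma coe_finset_sum {ι : Type*} (S : Finset ι) (g : ι → C₀(Ω, ℂ)) (x : Ω) :
    (∑ k ∈ S, g k) x = ∑ k ∈ S, g k x := by
  classical
  induction S using Finset.induction_on with
  | empty => simp
  | insert a s h ih => rw [Finset.sum_insert h, Finset.sum_insert h, ZeroAtInftyContinuousMap.coe_add,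
      Pi.add_apply, ih]

/-- A sequence of disjointly supported functions in the unit ball of `C₀` is weakly null. -/
lemma weaklyNull_of_disjoint (f : ℕ → C₀(Ω, ℂ)) (hnorm : ∀ k, ‖f k‖ ≤ 1)
    (hdisj : ∀ k l, k ≠ l → ∀ x, f k x = 0 ∨ f l x = 0)
    (φ : StrongDual ℂ C₀(Ω, ℂ)) : Tendsto (fun k => φ (f k)) atTop (𝓝 0) := by
  rw [tendsto_zero_iff_norm_tendsto_zero]
  classical
  have key : ∀ S : Finset ℕ, ∑ k ∈ S, ‖φ (f k)‖ ≤ ‖φ‖ := by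
    intro S
    set c : ℕ → ℂ := fun k => if φ (f k) = 0 then 0 else (‖φ (f k)‖ : ℂ) / φ (f k) with hc
    have hcnorm : ∀ k, ‖c k‖ ≤ 1 := by
      intro k
      by_cases h : φ (f k) = 0
      · simp [hc, h]
      · simp only [hc, if_neg h, norm_div, Complex.norm_real, norm_norm]
        exact (div_self (by simpa using h : ‖φ (f k)‖ ≠ 0)).le
    have hmul : ∀ k, c k * φ (f k) = (‖φ (f k)‖ : ℂ) := by
      intro k
      by_cases h : φ (f k) = 0
      · simp [hc, h]
      · simp only [hc, if_neg h]; exact div_mul_cancel₀ _ h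
    set g : C₀(Ω, ℂ) := ∑ k ∈ S, c k • f k with hg
    have hgnorm : ‖g‖ ≤ 1 := by
      refine c0_norm_le g zero_le_one (fun x => ?_)
      have hgx : g x = ∑ k ∈ S, c k * f k x := by
        rw [hg, coe_finset_sum]
        exact Finset.sum_congr rfl (fun k _ => by
          rw [ZeroAtInftyContinuousMap.coe_smul]; rfl)
      rw [hgx]
      by_cases hex : ∃ j ∈ S, f j x ≠ 0
      · obtain ⟨j, hjS, hj⟩ := hex
        rw [Finset.sum_eq_single_of_mem j hjS (fun b _ hb => by
          rcases hdisj b j hb x with h | h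
          · rw [h, mul_zero]
          · exact absurd h hj)]
        calc ‖c j * f j x‖ = ‖c j‖ * ‖f j x‖ := norm_mul _ _
          _ ≤ 1 * 1 := by
              refine mul_le_mul (hcnorm j) ((norm_apply_le (f j) x).trans (hnorm j))
                (norm_nonneg _) zero_le_one
          _ = 1 := one_mul 1
      · push_neg at hex
        rw [Finset.sum_eq_zero (fun k hk => by rw [hex k hk, mul_zero])]
        simp
    have step : (∑ k ∈ S, ‖φ (f k)‖ : ℝ) = ‖φ g‖ := by
      have : φ g = ((∑ k ∈ S, ‖φ (f k)‖ : ℝ) : ℂ) := by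
        rw [hg, map_sum]
        push_cast
        exact Finset.sum_congr rfl (fun k _ => by rw [φ.map_smul, smul_eq_mul, hmul k])
      rw [this, Complex.norm_real, Real.norm_eq_abs,
        abs_of_nonneg (Finset.sum_nonneg (fun k _ => norm_nonneg _))]
    rw [step]
    calc ‖φ g‖ ≤ ‖φ‖ * ‖g‖ := φ.le_opNorm g
      _ ≤ ‖φ‖ * 1 := mul_le_mul_of_nonneg_left hgnorm (norm_nonneg φ)
      _ = ‖φ‖ := mul_one _
  exact (summable_of_sum_le (fun k => norm_nonneg _) key).tendsto_atTop_zero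

end WeaklyNull

end ForProof

/-- For a nonempty bounded set `A ⊆ M(Ω)` of finite complex Radon measures:
`sup { limsup_k sup_{μ∈A} |μ(U_k)| : (U_k) pairwise disjoint open } ≤
 sup { limsup_k sup_{μ∈A} |∫ f_k dμ| : (f_k) weakly null in B_{C₀(Ω)} }`. -/
theorem sup_disjoint_open_le_sup_weaklyNull
    {Ω : Type*} [TopologicalSpace Ω] [T2Space Ω] [LocallyCompactSpace Ω]
    [MeasurableSpace Ω] [BorelSpace Ω]
    (A : Set (ComplexMeasure Ω)) (hA : A.Nonempty)
    (hRadon : ∀ μ ∈ A, IsRadonVM μ)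
    (hbdd : ∃ C : ℝ, ∀ μ ∈ A, variation μ univ ≤ C) :
    sSup {r | ∃ U : ℕ → Set Ω, (∀ k, IsOpen (U k)) ∧ Pairwise (Disjoint on U) ∧
        r = Filter.limsup (fun k => ⨆ μ : A, ‖(μ : ComplexMeasure Ω) (U k)‖) atTop} ≤
      sSup {r | ∃ f : ℕ → C₀(Ω, ℂ), (∀ k, f k ∈ closedBall (0 : C₀(Ω, ℂ)) 1) ∧
        (∀ φ : StrongDual ℂ C₀(Ω, ℂ), Tendsto (fun k => φ (f k)) atTop (nhds 0)) ∧
        r = Filter.limsup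
          (fun k => ⨆ μ : A, ‖complexPairing (μ : ComplexMeasure Ω) (f k)‖) atTop} := by
  classical
  open ForProof in
  haveI hAne : Nonempty ↥A := hA.to_subtype
  obtain ⟨C, hC⟩ := hbdd
  obtain ⟨μ₀, hμ₀A⟩ := hA
  have hCnn : 0 ≤ C := (ForProof.variation_nonneg μ₀ univ).trans (hC μ₀ hμ₀A)
  set RS := {r | ∃ f : ℕ → C₀(Ω, ℂ), (∀ k, f k ∈ closedBall (0 : C₀(Ω, ℂ)) 1) ∧
        (∀ φ : StrongDual ℂ C₀(Ω, ℂ), Tendsto (fun k => φ (f k)) atTop (nhds 0)) ∧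
        r = Filter.limsup
          (fun k => ⨆ μ : A, ‖complexPairing (μ : ComplexMeasure Ω) (f k)‖) atTop} with hRS
  -- uniform bound on pairings
  have hpb : ∀ μ ∈ A, ∀ f : C₀(Ω, ℂ), ‖f‖ ≤ 1 → ‖complexPairing μ ⇑f‖ ≤ 4 * C := by
    intro μ hμ f hf
    refine (ForProof.complexPairing_norm_le μ f hf).trans ?_
    have := hC μ hμ
    linarith
  -- RS is bounded above
  have hRbdd : BddAbove RS := by
    refine ⟨4 * C, ?_⟩
    rintro r ⟨f, hball, _, rfl⟩
    refine limsup_le_of_le ?_ (Filter.Eventually.of_forall fun k => ?_)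
    · have : IsBoundedUnder (· ≥ ·) atTop
          (fun k => ⨆ μ : A, ‖complexPairing (μ : ComplexMeasure Ω) ⇑(f k)‖) :=
        isBoundedUnder_of ⟨0, fun k => Real.iSup_nonneg fun μ => norm_nonneg _⟩
      exact this.isCoboundedUnder_le
    · exact ciSup_le fun μ => hpb μ μ.2 (f k) (mem_closedBall_zero_iff.mp (hball k))
  -- 0 ∈ RS
  have h0mem : (0 : ℝ) ∈ RS := by
    refine ⟨fun _ => 0, fun k => mem_closedBall_zero_iff.mpr (by simp), ?_, ?_⟩
    · intro φ; simpa using tendsto_const_nhds (x := (0 : ℂ)) (f := atTop (α := ℕ))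
    · have : (fun k : ℕ => ⨆ μ : A, ‖complexPairing (μ : ComplexMeasure Ω) ⇑(0 : C₀(Ω, ℂ))‖)
          = fun _ => (0 : ℝ) := by
        funext k
        rw [show (fun μ : A => ‖complexPairing (μ : ComplexMeasure Ω) ⇑(0 : C₀(Ω, ℂ))‖)
            = fun _ : A => (0:ℝ) from funext fun μ => by
          rw [ForProof.complexPairing_zero]; simp, ciSup_const]
      rw [this, limsup_const]
  have hsSupR0 : (0 : ℝ) ≤ sSup RS := le_csSup hRbdd h0mem
  refine Real.sSup_le ?_ hsSupR0
  rintro r ⟨U, hUopen, hUdisj, rfl⟩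
  refine le_of_forall_pos_le_add fun ε hε => ?_
  -- choose near-optimal measures
  have hchoose : ∀ k, ∃ μ : A,
      (⨆ μ : A, ‖(μ : ComplexMeasure Ω) (U k)‖) - ε/4 < ‖(μ : ComplexMeasure Ω) (U k)‖ :=
    fun k => exists_lt_of_lt_ciSup (by linarith :
      (⨆ μ : A, ‖(μ : ComplexMeasure Ω) (U k)‖) - ε/4
        < ⨆ μ : A, ‖(μ : ComplexMeasure Ω) (U k)‖)
  choose μs hμs using hchoose
  -- inner-regularity: compact K_k ⊆ U_k with small variation on the difference
  have hKex : ∀ k, ∃ K, K ⊆ U k ∧ IsCompact K ∧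
      variation (μs k : ComplexMeasure Ω) (U k \ K) < ε/8 :=
    fun k => ((hRadon _ (μs k).2) (U k) (hUopen k).measurableSet (ε/8) (by linarith)).1
  choose K hKU hKcomp hKvar using hKex
  -- Urysohn functions
  have hfex : ∀ k, ∃ f0 : C(Ω, ℝ), EqOn ⇑f0 1 (K k) ∧ EqOn ⇑f0 0 (U k)ᶜ ∧
      HasCompactSupport ⇑f0 ∧ ∀ x, f0 x ∈ Icc (0:ℝ) 1 :=
    fun k => exists_continuous_one_zero_of_isCompact (hKcomp k) (hUopen k).isClosed_compl
      (disjoint_compl_right_iff_subset.mpr (hKU k))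
  choose f0 hf1 hf0 hfcs hf01 using hfex
  -- the C₀ functions
  have fzero : ∀ k, Tendsto (fun x => ((f0 k x : ℝ) : ℂ)) (cocompact Ω) (𝓝 0) := by
    intro k
    have hmem : (tsupport ⇑(f0 k))ᶜ ∈ cocompact Ω :=
      Filter.mem_cocompact.mpr ⟨tsupport ⇑(f0 k), hfcs k, subset_refl _⟩
    have hev : ∀ᶠ x in cocompact Ω, ((f0 k x : ℝ) : ℂ) = 0 := by
      filter_upwards [hmem] with x hx
      rw [image_eq_zero_of_notMem_tsupport hx]; simp
    exact tendsto_const_nhds.congr' (by filter_upwards [hev] with x h using h.symm)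
  set f : ℕ → C₀(Ω, ℂ) := fun k =>
    ⟨⟨fun x => ((f0 k x : ℝ) : ℂ), Complex.continuous_ofReal.comp (f0 k).continuous⟩,
      fzero k⟩ with hf
  have hfx : ∀ k x, f k x = ((f0 k x : ℝ) : ℂ) := fun k x => rfl
  have hfnorm : ∀ k, ‖f k‖ ≤ 1 := by
    intro k
    refine ForProof.c0_norm_le _ zero_le_one fun x => ?_
    rw [hfx, Complex.norm_real, Real.norm_eq_abs, abs_of_nonneg (hf01 k x).1]
    exact (hf01 k x).2
  have hball : ∀ k, f k ∈ closedBall (0 : C₀(Ω, ℂ)) 1 :=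
    fun k => mem_closedBall_zero_iff.mpr (hfnorm k)
  have hdisjf : ∀ k l, k ≠ l → ∀ x, f k x = 0 ∨ f l x = 0 := by
    intro k l hkl x
    by_cases hx : x ∈ U k
    · right
      have hxl : x ∉ U l := Set.disjoint_left.mp (hUdisj hkl) hx
      rw [hfx, hf0 l hxl]; simp
    · left
      rw [hfx, hf0 k hx]; simp
  have hweak : ∀ φ : StrongDual ℂ C₀(Ω, ℂ), Tendsto (fun k => φ (f k)) atTop (𝓝 0) :=
    ForProof.weaklyNull_of_disjoint f hfnorm hdisjf
  -- the comparison of the two suprema, for each k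
  set g := fun k => ⨆ μ : A, ‖(μ : ComplexMeasure Ω) (U k)‖ with hg
  set h := fun k => ⨆ μ : A, ‖complexPairing (μ : ComplexMeasure Ω) ⇑(f k)‖ with hh
  have hrangebdd : ∀ k, BddAbove (range fun μ : A =>
      ‖complexPairing (μ : ComplexMeasure Ω) ⇑(f k)‖) := by
    intro k
    refine ⟨4 * C, ?_⟩
    rintro y ⟨μ, rfl⟩
    exact hpb μ μ.2 (f k) (hfnorm k)
  have hbound : ∀ k, h k ≤ 4 * C := fun k => ciSup_le fun μ => hpb μ μ.2 (f k) (hfnorm k)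
  have hhnn : ∀ k, 0 ≤ h k := fun k => Real.iSup_nonneg fun μ => norm_nonneg _
  have keyk : ∀ k, g k ≤ h k + ε := by
    intro k
    have hA1 : g k - ε/4 < ‖(μs k : ComplexMeasure Ω) (U k)‖ := hμs k
    have hclose : ‖complexPairing (μs k : ComplexMeasure Ω) ⇑(f k)
        - (μs k : ComplexMeasure Ω) (U k)‖
        ≤ 4 * variation (μs k : ComplexMeasure Ω) (U k \ K k) :=
      ForProof.complexPairing_close (μs k : ComplexMeasure Ω) (hUopen k)
        ((hKcomp k).isClosed.measurableSet) (hKU k) (f0 k) (hf1 k) (hf0 k) (hf01 k)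
    have hv : 4 * variation ((μs k : ComplexMeasure Ω)) (U k \ K k) ≤ ε/2 := by
      linarith [hKvar k]
    have htri : ‖(μs k : ComplexMeasure Ω) (U k)‖
        - ‖complexPairing (μs k : ComplexMeasure Ω) ⇑(f k)‖
        ≤ ‖complexPairing (μs k : ComplexMeasure Ω) ⇑(f k)
            - (μs k : ComplexMeasure Ω) (U k)‖ := by
      rw [norm_sub_rev]
      exact norm_sub_norm_le _ _
    have h3 : ‖complexPairing (μs k : ComplexMeasure Ω) ⇑(f k)‖ ≤ h k :=
      le_ciSup (hrangebdd k) (μs k)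
    linarith
  -- pass to the limsup
  have hgcb : IsCoboundedUnder (· ≤ ·) atTop g := by
    have : IsBoundedUnder (· ≥ ·) atTop g :=
      isBoundedUnder_of ⟨0, fun k => Real.iSup_nonneg fun μ => norm_nonneg _⟩
    exact this.isCoboundedUnder_le
  have hhb : IsBoundedUnder (· ≤ ·) atTop h := isBoundedUnder_of ⟨4 * C, hbound⟩
  have hhcb : IsCoboundedUnder (· ≤ ·) atTop h := by
    have : IsBoundedUnder (· ≥ ·) atTop h := isBoundedUnder_of ⟨0, hhnn⟩
    exact this.isCoboundedUnder_le
  have lim1 : limsup g atTop ≤ limsup (fun k => h k + ε) atTop :=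
    limsup_le_limsup (Filter.Eventually.of_forall keyk) hgcb
      (isBoundedUnder_of ⟨4 * C + ε, fun k => add_le_add_left (hbound k) ε⟩)
  have lim2 : limsup (fun k => h k + ε) atTop = limsup h atTop + ε :=
    limsup_add_const atTop h ε hhb hhcb
  have hmem : limsup h atTop ∈ RS := ⟨f, hball, hweak, rfl⟩
  calc limsup g atTop ≤ limsup h atTop + ε := by rw [← lim2]; exact lim1
    _ ≤ sSup RS + ε := add_le_add_left (le_csSup hRbdd hmem) ε
end
end

section
/- Let Ω be a Hausdorff locally compact space, let (μ_k) be a bounded sequence of finite complex Radon measures on Ω, let (F_k) be a sequence of pairwise disjoint compact subsets of Ω, and let c > 0 be such that |μ_k(F_k)| > c for each k ∈ ℕ. Then for every ε > 0 there exist a subsequence (μ_{k_n}) and a sequence (U_n) of pairwise disjoint open subsets of Ω such that |μ_{k_n}(U_n)| > c − ε for each n ∈ ℕ. -/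
open Filter Metric Set MeasureTheory
open scoped Topology Function

noncomputable section

namespace VarAux

variable {α : Type*} [MeasurableSpace α]

/-- The defining set of the variation. -/
def vSet (μ : ComplexMeasure α) (H : Set α) : Set ℝ :=
  {r | ∃ (n : ℕ) (D : Fin n → Set α), (∀ i, MeasurableSet (D i)) ∧
    Pairwise (Disjoint on D) ∧ (∀ i, D i ⊆ H) ∧ r = ∑ i, ‖μ (D i)‖}

lemma variation_eq (μ : ComplexMeasure α) (H : Set α) :
    variation μ H = sSup (vSet μ H) := rfl

lemma zero_mem_vSet (μ : ComplexMeasure α) (H : Set α) : (0 : ℝ) ∈ vSet μ H :=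
  ⟨0, Fin.elim0, fun i => i.elim0, Subsingleton.pairwise, fun i => i.elim0, by simp⟩

lemma vSet_nonempty (μ : ComplexMeasure α) (H : Set α) : (vSet μ H).Nonempty :=
  ⟨0, zero_mem_vSet μ H⟩

lemma vSet_mono (μ : ComplexMeasure α) {H₁ H₂ : Set α} (h : H₁ ⊆ H₂) :
    vSet μ H₁ ⊆ vSet μ H₂ := by
  rintro r ⟨n, D, hm, hd, hs, rfl⟩
  exact ⟨n, D, hm, hd, fun i => (hs i).trans h, rfl⟩

lemma abs_apply_le_totalVariation (s : SignedMeasure α) {D : Set α}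
    (hD : MeasurableSet D) : |s D| ≤ (s.totalVariation D).toReal := by
  conv_lhs => rw [← s.toSignedMeasure_toJordanDecomposition]
  rw [JordanDecomposition.toSignedMeasure, VectorMeasure.sub_apply,
    Measure.toSignedMeasure_apply_measurable hD, Measure.toSignedMeasure_apply_measurable hD,
    SignedMeasure.totalVariation, Measure.add_apply,
    ENNReal.toReal_add (measure_ne_top _ _) (measure_ne_top _ _)]
  have h1 := ENNReal.toReal_nonneg (a := s.toJordanDecomposition.posPart D)
  have h2 := ENNReal.toReal_nonneg (a := s.toJordanDecomposition.negPart D)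
  rw [abs_le, measureReal_def, measureReal_def]; constructor <;> linarith

lemma sum_abs_signed_le (s : SignedMeasure α) {n : ℕ} (D : Fin n → Set α)
    (hm : ∀ i, MeasurableSet (D i)) (hd : Pairwise (Disjoint on D)) :
    ∑ i, |s (D i)| ≤ (s.totalVariation Set.univ).toReal := by
  have tvfin : ∀ A : Set α, s.totalVariation A ≠ ⊤ := by
    intro A
    rw [SignedMeasure.totalVariation, Measure.add_apply]
    exact ENNReal.add_ne_top.2 ⟨measure_ne_top _ _, measure_ne_top _ _⟩
  calc ∑ i, |s (D i)| ≤ ∑ i, (s.totalVariation (D i)).toReal :=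
        Finset.sum_le_sum fun i _ => abs_apply_le_totalVariation s (hm i)
    _ = (∑ i, s.totalVariation (D i)).toReal := by
        rw [ENNReal.toReal_sum]; intro a _; exact tvfin _
    _ = (s.totalVariation (⋃ i, D i)).toReal := by
        rw [measure_iUnion hd hm, tsum_fintype]
    _ ≤ (s.totalVariation Set.univ).toReal :=
        ENNReal.toReal_mono (tvfin _) (measure_mono (Set.subset_univ _))

lemma sum_norm_le_bound (μ : ComplexMeasure α) {n : ℕ} (D : Fin n → Set α)
    (hm : ∀ i, MeasurableSet (D i)) (hd : Pairwise (Disjoint on D)) :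
    ∑ i, ‖μ (D i)‖ ≤
      ((ComplexMeasure.re μ).totalVariation Set.univ).toReal +
        ((ComplexMeasure.im μ).totalVariation Set.univ).toReal := by
  have hre : ∀ A : Set α, (ComplexMeasure.re μ) A = (μ A).re := by
    intro A; rw [ComplexMeasure.re_apply]; rfl
  have him : ∀ A : Set α, (ComplexMeasure.im μ) A = (μ A).im := by
    intro A; rw [ComplexMeasure.im_apply]; rfl
  calc ∑ i, ‖μ (D i)‖
      ≤ ∑ i, (|(ComplexMeasure.re μ) (D i)| + |(ComplexMeasure.im μ) (D i)|) := by
        refine Finset.sum_le_sum fun i _ => ?_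
        rw [hre, him]
        exact Complex.norm_le_abs_re_add_abs_im _
    _ = ∑ i, |(ComplexMeasure.re μ) (D i)| + ∑ i, |(ComplexMeasure.im μ) (D i)| :=
        Finset.sum_add_distrib
    _ ≤ _ := add_le_add (sum_abs_signed_le _ D hm hd) (sum_abs_signed_le _ D hm hd)

lemma bddAbove_vSet (μ : ComplexMeasure α) (H : Set α) : BddAbove (vSet μ H) := by
  refine ⟨((ComplexMeasure.re μ).totalVariation Set.univ).toReal +
    ((ComplexMeasure.im μ).totalVariation Set.univ).toReal, ?_⟩
  rintro r ⟨n, D, hm, hd, _, rfl⟩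
  exact sum_norm_le_bound μ D hm hd

lemma le_variation (μ : ComplexMeasure α) {H : Set α} {r : ℝ} (hr : r ∈ vSet μ H) :
    r ≤ variation μ H :=
  le_csSup (bddAbove_vSet μ H) hr

lemma variation_nonneg (μ : ComplexMeasure α) (H : Set α) : 0 ≤ variation μ H :=
  le_variation μ (zero_mem_vSet μ H)

lemma norm_le_variation (μ : ComplexMeasure α) {D H : Set α} (hD : MeasurableSet D)
    (hDH : D ⊆ H) : ‖μ D‖ ≤ variation μ H := by
  refine le_variation μ ⟨1, fun _ => D, fun _ => hD, Subsingleton.pairwise,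
    fun _ => hDH, ?_⟩
  simp

lemma variation_mono (μ : ComplexMeasure α) {H₁ H₂ : Set α} (h : H₁ ⊆ H₂) :
    variation μ H₁ ≤ variation μ H₂ :=
  csSup_le_csSup (bddAbove_vSet μ H₂) (vSet_nonempty μ H₁) (vSet_mono μ h)

lemma variation_empty (μ : ComplexMeasure α) : variation μ (∅ : Set α) = 0 := by
  refine le_antisymm (Real.sSup_le ?_ le_rfl) (variation_nonneg μ ∅)
  rintro r ⟨n, D, hm, hd, hs, rfl⟩
  have : ∀ i, D i = ∅ := fun i => Set.subset_empty_iff.1 (hs i)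
  simp [this]

lemma variation_union_le (μ : ComplexMeasure α) {A B : Set α} (hA : MeasurableSet A) :
    variation μ (A ∪ B) ≤ variation μ A + variation μ B := by
  refine Real.sSup_le ?_ (add_nonneg (variation_nonneg μ A) (variation_nonneg μ B))
  rintro r ⟨n, D, hm, hd, hs, rfl⟩
  have hsplit : ∀ i, ‖μ (D i)‖ ≤ ‖μ (D i ∩ A)‖ + ‖μ (D i \ A)‖ := by
    intro i
    have hdisj : Disjoint (D i ∩ A) (D i \ A) := by
      rw [Set.disjoint_left]; rintro x ⟨-, hx⟩ ⟨-, hx'⟩; exact hx' hx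
    have hu : (D i ∩ A) ∪ (D i \ A) = D i := Set.inter_union_diff _ _
    calc ‖μ (D i)‖ = ‖μ ((D i ∩ A) ∪ (D i \ A))‖ := by rw [hu]
      _ = ‖μ (D i ∩ A) + μ (D i \ A)‖ := by
          rw [VectorMeasure.of_union hdisj ((hm i).inter hA) ((hm i).diff hA)]
      _ ≤ _ := norm_add_le _ _
  calc ∑ i, ‖μ (D i)‖ ≤ ∑ i, (‖μ (D i ∩ A)‖ + ‖μ (D i \ A)‖) :=
        Finset.sum_le_sum fun i _ => hsplit i
    _ = ∑ i, ‖μ (D i ∩ A)‖ + ∑ i, ‖μ (D i \ A)‖ := Finset.sum_add_distrib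
    _ ≤ variation μ A + variation μ B := by
        refine add_le_add ?_ ?_
        · exact le_variation μ ⟨n, fun i => D i ∩ A, fun i => (hm i).inter hA,
            hd.mono fun i j h => h.mono Set.inter_subset_left Set.inter_subset_left,
            fun i => Set.inter_subset_right, rfl⟩
        · refine le_variation μ ⟨n, fun i => D i \ A, fun i => (hm i).diff hA,
            hd.mono fun i j h => h.mono Set.diff_subset Set.diff_subset,
            fun i x hx => ?_, rfl⟩
          rcases hs i hx.1 with h | h
          · exact absurd h hx.2
          · exact h

lemma add_mem_vSet (μ : ComplexMeasure α) {A B : Set α} (h : Disjoint A B) {r r' : ℝ}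
    (hr : r ∈ vSet μ A) (hr' : r' ∈ vSet μ B) : r + r' ∈ vSet μ (A ∪ B) := by
  obtain ⟨n, D, hmD, hdD, hsD, rfl⟩ := hr
  obtain ⟨m, E, hmE, hdE, hsE, rfl⟩ := hr'
  refine ⟨n + m, Fin.addCases D E, ?_, ?_, ?_, ?_⟩
  · intro i
    induction i using Fin.addCases with
    | left i => simpa using hmD i
    | right i => simpa using hmE i
  · intro i j hij
    induction i using Fin.addCases with
    | left i =>
      induction j using Fin.addCases with
      | left j =>
        have : i ≠ j := fun hEq => hij (by rw [hEq])
        simpa [Function.onFun] using hdD this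
      | right j =>
        simpa [Function.onFun] using Set.disjoint_of_subset (hsD i) (hsE j) h
    | right i =>
      induction j using Fin.addCases with
      | left j =>
        simpa [Function.onFun] using (Set.disjoint_of_subset (hsD j) (hsE i) h).symm
      | right j =>
        have : i ≠ j := fun hEq => hij (by rw [hEq])
        simpa [Function.onFun] using hdE this
  · intro i
    induction i using Fin.addCases with
    | left i => simpa using (hsD i).trans Set.subset_union_left
    | right i => simpa using (hsE i).trans Set.subset_union_right
  · rw [Fin.sum_univ_add]
    simp

lemma variation_superadd (μ : ComplexMeasure α) {A B : Set α} (h : Disjoint A B) :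
    variation μ A + variation μ B ≤ variation μ (A ∪ B) := by
  have key : ∀ r ∈ vSet μ A, ∀ r' ∈ vSet μ B, r + r' ≤ variation μ (A ∪ B) :=
    fun r hr r' hr' => le_variation μ (add_mem_vSet μ h hr hr')
  have h1 : variation μ A ≤ variation μ (A ∪ B) - variation μ B := by
    refine Real.sSup_le (fun r hr => ?_) ?_
    · have h2 : variation μ B ≤ variation μ (A ∪ B) - r := by
        refine Real.sSup_le (fun r' hr' => by linarith [key r hr r' hr']) ?_
        have : r ≤ variation μ (A ∪ B) :=
          le_variation μ (vSet_mono μ Set.subset_union_left hr)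
        linarith
      linarith
    · have := variation_mono μ (Set.subset_union_right (s := A) (t := B))
      have := variation_nonneg μ B
      linarith
  linarith

lemma sum_variation_le (μ : ComplexMeasure α) (S : ℕ → Set α)
    (hd : ∀ i j, i ≠ j → Disjoint (S i) (S j)) (T : ℕ) :
    ∑ i ∈ Finset.range T, variation μ (S i) ≤ variation μ Set.univ := by
  have main : ∀ T : ℕ, ∑ i ∈ Finset.range T, variation μ (S i) ≤
      variation μ (⋃ i ∈ Finset.range T, S i) := by
    intro T
    induction T with
    | zero => simpa using variation_nonneg μ _
    | succ T ih =>
      rw [Finset.range_add_one, Finset.sum_insert (by simp), Finset.set_biUnion_insert _ _ _]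
      have hdisj : Disjoint (S T) (⋃ i ∈ Finset.range T, S i) := by
        rw [Set.disjoint_iUnion_right]
        intro i
        rw [Set.disjoint_iUnion_right]
        intro hi
        exact (hd i T (by simp at hi; omega)).symm
      calc variation μ (S T) + ∑ i ∈ Finset.range T, variation μ (S i)
          ≤ variation μ (S T) + variation μ (⋃ i ∈ Finset.range T, S i) := by linarith
        _ ≤ _ := variation_superadd μ hdisj
  exact (main T).trans (variation_mono μ (Set.subset_univ _))


/-- Finitely many pairwise disjoint compact sets in a Hausdorff space can be
separated by pairwise disjoint open sets. -/
lemma finSep {Ω : Type*} [TopologicalSpace Ω] [T2Space Ω] (K : ℕ → Set Ω)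
    (hK : ∀ i, IsCompact (K i)) (hd : ∀ i j, i ≠ j → Disjoint (K i) (K j)) (T : ℕ) :
    ∃ V : ℕ → Set Ω, (∀ i, i < T → IsOpen (V i) ∧ K i ⊆ V i) ∧
      (∀ i j, i < T → j < T → i ≠ j → Disjoint (V i) (V j)) := by
  induction T with
  | zero => exact ⟨fun _ => ∅, fun i hi => absurd hi (by omega), fun i j hi => absurd hi (by omega)⟩
  | succ T ih =>
    obtain ⟨V, hVo, hVd⟩ := ih
    have hsep : ∀ i, ∃ a b : Set Ω, IsOpen a ∧ IsOpen b ∧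
        (i < T → (K T ⊆ a ∧ K i ⊆ b ∧ Disjoint a b)) := by
      intro i
      by_cases hi : i < T
      · obtain ⟨a, b, ha, hb, hKa, hKb, hab⟩ :=
          SeparatedNhds.of_isCompact_isCompact (hK T) (hK i) (hd T i (by omega))
        exact ⟨a, b, ha, hb, fun _ => ⟨hKa, hKb, hab⟩⟩
      · exact ⟨univ, univ, isOpen_univ, isOpen_univ, fun h => absurd h hi⟩
    choose a b ha hb hcond using hsep
    refine ⟨fun i => if i < T then V i ∩ b i else ⋂ j ∈ Finset.range T, a j, ?_, ?_⟩
    · intro i hi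
      by_cases h : i < T
      · simp only [if_pos h]
        exact ⟨((hVo i h).1).inter (hb i),
          Set.subset_inter (hVo i h).2 (hcond i h).2.1⟩
      · have hiT : i = T := by omega
        simp only [if_neg h]
        refine ⟨isOpen_biInter_finset fun j _ => ha j, ?_⟩
        subst hiT
        exact Set.subset_iInter₂ fun j hj => (hcond j (Finset.mem_range.1 hj)).1
    · intro i j hi hj hij
      by_cases h1 : i < T <;> by_cases h2 : j < T
      · simp only [if_pos h1, if_pos h2]
        exact (hVd i j h1 h2 hij).mono Set.inter_subset_left Set.inter_subset_left
      · simp only [if_pos h1, if_neg h2]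
        have : (⋂ j ∈ Finset.range T, a j) ⊆ a i :=
          Set.biInter_subset_of_mem (Finset.mem_range.2 h1)
        exact ((hcond i h1).2.2.symm.mono Set.inter_subset_right this).symm.symm
      · simp only [if_neg h1, if_pos h2]
        have : (⋂ l ∈ Finset.range T, a l) ⊆ a j :=
          Set.biInter_subset_of_mem (Finset.mem_range.2 h2)
        exact ((hcond j h2).2.2.mono this Set.inter_subset_right)
      · omega
/-- Selection lemma: one can find an index `n` in the infinite set `M` and an
open neighbourhood `W` of `F n` such that infinitely many `m ∈ M` give small
variation to `W \ F n`. -/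
lemma selection {Ω : Type*} [TopologicalSpace Ω] [T2Space Ω]
    [MeasurableSpace Ω] [BorelSpace Ω]
    (μ : ℕ → ComplexMeasure Ω) (C : ℝ) (hC : ∀ k, variation (μ k) Set.univ ≤ C)
    (F : ℕ → Set Ω) (hFcpt : ∀ k, IsCompact (F k)) (hFdisj : Pairwise (Disjoint on F))
    (M : Set ℕ) (hM : M.Infinite) (η : ℝ) (hη : 0 < η) :
    ∃ n ∈ M, ∃ W : Set Ω, IsOpen W ∧ F n ⊆ W ∧
      {m | m ∈ M ∧ variation (μ m) (W \ F n) < η}.Infinite := by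
  by_contra hcon
  push_neg at hcon
  set T : ℕ := ⌊C / η⌋₊ + 1 with hT
  -- pick T distinct indices in M
  let e : ℕ ↪ M := Set.Infinite.natEmbedding M hM
  have einj : ∀ i j : ℕ, i ≠ j → (e i : ℕ) ≠ (e j : ℕ) := by
    intro i j hij hEq
    exact hij (e.injective (Subtype.ext hEq))
  set K : ℕ → Set Ω := fun i => F (e i) with hKdef
  obtain ⟨V, hVo, hVd⟩ := finSep K (fun i => hFcpt _)
    (fun i j hij => hFdisj (einj i j hij)) T
  -- the bad sets are finite
  have hbad : ∀ i, i < T → {m | m ∈ M ∧ variation (μ m) (V i \ K i) < η}.Finite := by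
    intro i hi
    exact hcon (e i) (e i).2 (V i) (hVo i hi).1 (hVo i hi).2
  -- pick m avoiding all bad sets
  have hfin : (⋃ i ∈ Finset.range T, {m | m ∈ M ∧ variation (μ m) (V i \ K i) < η}).Finite :=
    Set.Finite.biUnion (Finset.range T).finite_toSet
      (fun i hi => hbad i (Finset.mem_range.1 hi))
  obtain ⟨m, hmM, hmbad⟩ : ∃ m, m ∈ M ∧
      m ∉ ⋃ i ∈ Finset.range T, {m | m ∈ M ∧ variation (μ m) (V i \ K i) < η} := by
    obtain ⟨m, hm1, hm2⟩ := (hM.diff hfin).nonempty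
    exact ⟨m, hm1, hm2⟩
  have hge : ∀ i, i < T → η ≤ variation (μ m) (V i \ K i) := by
    intro i hi
    by_contra hlt
    push_neg at hlt
    exact hmbad (Set.mem_biUnion (Finset.mem_range.2 hi) ⟨hmM, hlt⟩)
  -- the sets V i \ K i, i < T, are pairwise disjoint
  set S : ℕ → Set Ω := fun i => if i < T then V i \ K i else ∅ with hSdef
  have hSdisj : ∀ i j, i ≠ j → Disjoint (S i) (S j) := by
    intro i j hij
    simp only [hSdef]
    by_cases h1 : i < T <;> by_cases h2 : j < T <;>
      simp only [if_pos, if_neg, h1, h2, if_true, if_false]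
    · exact (hVd i j h1 h2 hij).mono Set.diff_subset Set.diff_subset
    · exact Set.disjoint_empty _
    · exact (Set.disjoint_empty _).symm
    · exact Set.disjoint_empty _
  have hsum := sum_variation_le (μ m) S hSdisj T
  have hterm : ∀ i ∈ Finset.range T, η ≤ variation (μ m) (S i) := by
    intro i hi
    have h := hge i (Finset.mem_range.1 hi)
    simp only [hSdef, if_pos (Finset.mem_range.1 hi)]
    exact h
  have hTsum : (T : ℝ) * η ≤ ∑ i ∈ Finset.range T, variation (μ m) (S i) := by
    calc (T : ℝ) * η = ∑ _i ∈ Finset.range T, η := by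
          rw [Finset.sum_const, Finset.card_range, nsmul_eq_mul]
      _ ≤ _ := Finset.sum_le_sum hterm
  have hCT : C < (T : ℝ) * η := by
    have h1 : C / η < (⌊C / η⌋₊ : ℝ) + 1 := Nat.lt_floor_add_one _
    have h2 : (T : ℝ) = (⌊C / η⌋₊ : ℝ) + 1 := by rw [hT]; push_cast; ring
    rw [h2]
    calc C = (C / η) * η := by field_simp
      _ < ((⌊C / η⌋₊ : ℝ) + 1) * η := by
          exact mul_lt_mul_of_pos_right h1 hη
  have := hC m
  linarith

/-- State of the inductive construction. -/
structure DState (Ω : Type*) where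
  l : ℕ
  lastU : Set Ω
  B : Set Ω
  M : Set ℕ
  b : ℝ

section Main

variable {Ω : Type*} [TopologicalSpace Ω] [T2Space Ω] [LocallyCompactSpace Ω]
  [MeasurableSpace Ω] [BorelSpace Ω]

/-- Invariant of the construction. -/
def Good (μ : ℕ → ComplexMeasure Ω) (F : ℕ → Set Ω) (ε : ℝ) (x : DState Ω) : Prop :=
  IsClosed x.B ∧ x.M.Infinite ∧ 0 < x.b ∧ (∀ m ∈ x.M, x.l < m) ∧
    ∀ m ∈ x.M, variation (μ m) (F m ∩ x.B) + x.b ≤ ε / 2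

/-- Relation between consecutive states. -/
def StepRel (μ : ℕ → ComplexMeasure Ω) (c ε : ℝ) (x y : DState Ω) : Prop :=
  x.l < y.l ∧ IsOpen y.lastU ∧ Disjoint (closure y.lastU) x.B ∧
    y.B = x.B ∪ closure y.lastU ∧ c - ε < ‖(μ y.l) y.lastU‖

lemma step_exists (μ : ℕ → ComplexMeasure Ω)
    (hRadon : ∀ k, IsRadonVM (μ k))
    (C : ℝ) (hC : ∀ k, variation (μ k) Set.univ ≤ C)
    (F : ℕ → Set Ω) (hFcpt : ∀ k, IsCompact (F k)) (hFdisj : Pairwise (Disjoint on F))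
    (c : ℝ) (hμF : ∀ k, c < ‖(μ k) (F k)‖)
    (ε : ℝ) (hε : 0 < ε)
    (x : DState Ω) (hx : Good μ F ε x) :
    ∃ y : DState Ω, Good μ F ε y ∧ StepRel μ c ε x y := by
  obtain ⟨hBcl, hMinf, hb, hMgt, hinv⟩ := hx
  -- select the next index and a controlled neighbourhood
  obtain ⟨n, hnM, W, hWo, hFW, hWinf⟩ := selection μ C hC F hFcpt hFdisj x.M hMinf
    (x.b / 2) (by linarith)
  have hFmeas : ∀ k, MeasurableSet (F k) := fun k => ((hFcpt k).isClosed).measurableSet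
  have hBmeas : MeasurableSet x.B := hBcl.measurableSet
  -- the compact chunk of F n outside B
  set A : Set Ω := F n \ x.B with hAdef
  have hAmeas : MeasurableSet A := (hFmeas n).diff hBmeas
  have hmassA : c - ε / 2 < ‖(μ n) A‖ := by
    have hsplit : (μ n) (F n) = (μ n) A + (μ n) (F n ∩ x.B) := by
      conv_lhs => rw [show F n = A ∪ (F n ∩ x.B) from (Set.diff_union_inter _ _).symm]
      refine VectorMeasure.of_union ?_ hAmeas ((hFmeas n).inter hBmeas)
      exact Set.disjoint_left.2 fun a ha hb => ha.2 hb.2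
    have hnorm : ‖(μ n) (F n ∩ x.B)‖ ≤ variation (μ n) (F n ∩ x.B) :=
      norm_le_variation (μ n) ((hFmeas n).inter hBmeas) le_rfl
    have h2 := hinv n hnM
    have h3 := hμF n
    have h4 : ‖(μ n) (F n)‖ ≤ ‖(μ n) A‖ + ‖(μ n) (F n ∩ x.B)‖ := by
      rw [hsplit]; exact norm_add_le _ _
    linarith
  -- inner regularity: a compact K inside A with almost full mass
  obtain ⟨⟨K, hKA, hKcpt, hKvar⟩, -⟩ := hRadon n A hAmeas (ε / 4) (by linarith)
  have hKmeas : MeasurableSet K := hKcpt.isClosed.measurableSet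
  have hmassK : c - ε / 2 - ε / 4 < ‖(μ n) K‖ := by
    have hsplit : (μ n) A = (μ n) K + (μ n) (A \ K) := by
      conv_lhs => rw [show A = K ∪ (A \ K) from (Set.union_diff_cancel hKA).symm]
      exact VectorMeasure.of_union Set.disjoint_sdiff_right hKmeas (hAmeas.diff hKmeas)
    have hnorm : ‖(μ n) (A \ K)‖ ≤ variation (μ n) (A \ K) :=
      norm_le_variation (μ n) (hAmeas.diff hKmeas) le_rfl
    have h4 : ‖(μ n) A‖ ≤ ‖(μ n) K‖ + ‖(μ n) (A \ K)‖ := by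
      rw [hsplit]; exact norm_add_le _ _
    linarith
  -- outer regularity at K
  obtain ⟨-, Y, hKY, hYo, hYvar⟩ := hRadon n K hKmeas (ε / 4) (by linarith)
  -- the open set
  have hKO : K ⊆ Y ∩ x.Bᶜ ∩ W := by
    intro z hz
    exact ⟨⟨hKY hz, (hKA hz).2⟩, hFW (hKA hz).1⟩
  have hOopen : IsOpen (Y ∩ x.Bᶜ ∩ W) := ((hYo.inter hBcl.isOpen_compl).inter hWo)
  obtain ⟨L, hLcpt, hKL, hLO⟩ := exists_compact_between hKcpt hOopen hKO
  set U : Set Ω := interior L with hUdef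
  have hUopen : IsOpen U := isOpen_interior
  have hclU : closure U ⊆ L := hLcpt.isClosed.closure_subset_iff.2 interior_subset
  have hUO : U ⊆ Y ∩ x.Bᶜ ∩ W := interior_subset.trans hLO
  have hUmeas : MeasurableSet U := hUopen.measurableSet
  -- mass of U
  have hmassU : c - ε < ‖(μ n) U‖ := by
    have hKU : K ⊆ U := hKL
    have hsplit : (μ n) U = (μ n) K + (μ n) (U \ K) := by
      conv_lhs => rw [show U = K ∪ (U \ K) from (Set.union_diff_cancel hKU).symm]
      exact VectorMeasure.of_union Set.disjoint_sdiff_right hKmeas (hUmeas.diff hKmeas)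
    have hsub : U \ K ⊆ Y \ K := fun z hz =>
      ⟨(hUO hz.1).1.1, hz.2⟩
    have hnorm : ‖(μ n) (U \ K)‖ ≤ variation (μ n) (Y \ K) :=
      norm_le_variation (μ n) (hUmeas.diff hKmeas) hsub
    have h4 : ‖(μ n) K‖ ≤ ‖(μ n) U‖ + ‖(μ n) (U \ K)‖ := by
      have heq : (μ n) K = (μ n) U - (μ n) (U \ K) := by rw [hsplit]; ring
      rw [heq]; exact norm_sub_le _ _
    -- ‖μ K‖ - ‖μ (U\K)‖ ≤ ‖μ U‖
    linarith
  -- new candidate set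
  set M' : Set ℕ := {m | m ∈ x.M ∧ variation (μ m) (W \ F n) < x.b / 2} \ Set.Iic n
    with hM'def
  have hM'inf : M'.Infinite := hWinf.diff (Set.finite_Iic n)
  refine ⟨⟨n, U, x.B ∪ closure U, M', x.b / 2⟩, ?_, ?_⟩
  · refine ⟨hBcl.union isClosed_closure, hM'inf, by linarith, ?_, ?_⟩
    · intro m hm
      simpa using hm.2
    · intro m hm
      obtain ⟨⟨hmM, hmW⟩, hmgt⟩ := hm
      have hmn : m ≠ n := by
        intro h
        exact hmgt (by simp [h])
      have hsplitset : F m ∩ (x.B ∪ closure U) = (F m ∩ x.B) ∪ (F m ∩ closure U) :=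
        Set.inter_union_distrib_left _ _ _
      have h1 : variation (μ m) (F m ∩ (x.B ∪ closure U)) ≤
          variation (μ m) (F m ∩ x.B) + variation (μ m) (F m ∩ closure U) := by
        rw [hsplitset]
        exact variation_union_le (μ m) ((hFmeas m).inter hBmeas)
      have hsub : F m ∩ closure U ⊆ W \ F n := by
        intro z hz
        refine ⟨(hLO (hclU hz.2)).2, fun hzF => ?_⟩
        exact (Set.disjoint_left.1 (hFdisj hmn)) hz.1 hzF
      have h2 : variation (μ m) (F m ∩ closure U) ≤ variation (μ m) (W \ F n) :=
        variation_mono (μ m) hsub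
      have h3 := hinv m hmM
      simp only [DState.b, DState.M, DState.B] at *
      linarith
  · refine ⟨hMgt n hnM, hUopen, ?_, rfl, hmassU⟩
    have : closure U ⊆ x.Bᶜ := fun z hz => (hLO (hclU hz)).1.2
    exact Set.disjoint_left.2 fun z hz hzB => (this hz) hzB

end Main

end VarAux

/-- Let `(μ_k)` be a bounded sequence of finite complex Radon measures on a
locally compact Hausdorff space `Ω`, `(F_k)` pairwise disjoint compact sets
with `|μ_k(F_k)| > c > 0`. Then for every `ε > 0` there are a subsequence
`(μ_{k_n})` and pairwise disjoint open sets `(U_n)` with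
`|μ_{k_n}(U_n)| > c - ε` for all `n`. -/
theorem exists_subseq_disjoint_open_of_disjoint_compact
    {Ω : Type*} [TopologicalSpace Ω] [T2Space Ω] [LocallyCompactSpace Ω]
    [MeasurableSpace Ω] [BorelSpace Ω]
    (μ : ℕ → ComplexMeasure Ω)
    (hRadon : ∀ k, IsRadonVM (μ k))
    (hbdd : ∃ C : ℝ, ∀ k, variation (μ k) univ ≤ C)
    (F : ℕ → Set Ω) (hFcpt : ∀ k, IsCompact (F k)) (hFdisj : Pairwise (Disjoint on F))
    (c : ℝ) (hc : 0 < c) (hμF : ∀ k, c < ‖(μ k) (F k)‖) :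
    ∀ ε > 0, ∃ k : ℕ → ℕ, StrictMono k ∧ ∃ U : ℕ → Set Ω,
      (∀ n, IsOpen (U n)) ∧ Pairwise (Disjoint on U) ∧
      ∀ n, c - ε < ‖(μ (k n)) (U n)‖ := by
  intro ε hε
  obtain ⟨C, hC⟩ := hbdd
  -- initial good state
  have hgood₀ : VarAux.Good μ F ε ⟨0, ∅, ∅, Set.Ioi 0, ε / 4⟩ := by
    refine ⟨isClosed_empty, Set.Ioi_infinite 0, by linarith, fun m hm => hm, fun m hm => ?_⟩
    simp only [Set.inter_empty]
    rw [VarAux.variation_empty]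
    linarith
  -- the step function
  have key : ∀ x : {x : VarAux.DState Ω // VarAux.Good μ F ε x},
      ∃ y : {y : VarAux.DState Ω // VarAux.Good μ F ε y}, VarAux.StepRel μ c ε x.1 y.1 := by
    rintro ⟨x, hx⟩
    obtain ⟨y, hy, hrel⟩ := VarAux.step_exists μ hRadon C hC F hFcpt hFdisj c hμF ε hε x hx
    exact ⟨⟨y, hy⟩, hrel⟩
  choose stepf hstep using key
  set f : ℕ → {x : VarAux.DState Ω // VarAux.Good μ F ε x} :=
    fun t => stepf^[t] ⟨_, hgood₀⟩ with hfdef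
  have hfsucc : ∀ t, f (t + 1) = stepf (f t) := by
    intro t
    simp only [hfdef, Function.iterate_succ_apply']
  have hφ : ∀ t, VarAux.StepRel μ c ε (f t).1 (f (t + 1)).1 := by
    intro t
    rw [hfsucc t]
    exact hstep (f t)
  set k : ℕ → ℕ := fun t => (f (t + 1)).1.l with hkdef
  set U : ℕ → Set Ω := fun t => (f (t + 1)).1.lastU with hUdef
  -- B is monotone along the orbit
  have hBsucc : ∀ t, (f t).1.B ⊆ (f (t + 1)).1.B := by
    intro t
    rw [(hφ t).2.2.2.1]
    exact Set.subset_union_left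
  have hBmono : ∀ s t, s ≤ t → (f s).1.B ⊆ (f t).1.B := by
    intro s t hst
    induction t with
    | zero => simp_all
    | succ t ih =>
      rcases Nat.lt_or_ge s (t + 1) with h | h
      · exact (ih (by omega)).trans (hBsucc t)
      · have : s = t + 1 := by omega
        subst this; rfl
  have hUB : ∀ t, U t ⊆ (f (t + 1)).1.B := by
    intro t
    rw [(hφ t).2.2.2.1]
    exact subset_closure.trans Set.subset_union_right
  have hUdisj : ∀ i j, i < j → Disjoint (U i) (U j) := by
    intro i j hij
    have h1 : U i ⊆ (f j).1.B := (hUB i).trans (hBmono (i + 1) j (by omega))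
    have h2 : Disjoint (closure (U j)) ((f j).1.B) := (hφ j).2.2.1
    exact (h2.mono_left subset_closure).symm.mono_left h1
  refine ⟨k, ?_, U, ?_, ?_, ?_⟩
  · refine strictMono_nat_of_lt_succ fun t => ?_
    exact (hφ (t + 1)).1
  · intro n
    exact (hφ n).2.1
  · intro i j hij
    rcases lt_or_gt_of_ne hij with h | h
    · exact hUdisj i j h
    · exact (hUdisj j i h).symm
  · intro n
    exact (hφ n).2.2.2.2

end
end

section
/- Let X be a Banach space and A ⊆ X* a nonempty bounded set. Then (1/8)·χ_m(A) ≤ sup{ limsup_{k→∞} sup_{x*∈A} |x*(x_k)| : (x_k) is a weakly null sequence in B_X } ≤ χ_m(A). -/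
open Filter Metric Set NormedSpace
open scoped Topology

noncomputable section

section Helpers

variable {𝕜 : Type*} [RCLike 𝕜] {X : Type*} [NormedAddCommGroup X] [NormedSpace 𝕜 X]

lemma myLimsupLe {u : ℕ → ℝ} {a b : ℝ} (h0 : ∀ k, a ≤ u k) (h : ∀ᶠ k in atTop, u k ≤ b) :
    Filter.limsup u atTop ≤ b :=
  Filter.limsup_le_of_le (Filter.isCoboundedUnder_le_of_le atTop (x := a) h0) h

lemma myLeLimsup {u : ℕ → ℝ} {a b : ℝ} (h : ∀ᶠ k in atTop, a ≤ u k) (hb : ∀ k, u k ≤ b) :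
    a ≤ Filter.limsup u atTop :=
  Filter.le_limsup_of_frequently_le h.frequently
    (Filter.isBoundedUnder_of ⟨b, fun k => hb k⟩)

lemma myAnn (Y : Submodule 𝕜 X) (hY : IsClosed (Y : Set X)) {u : X} (hu : u ∉ Y) :
    ∃ φ : StrongDual 𝕜 X, (∀ z ∈ Y, φ z = 0) ∧ φ u ≠ 0 := by
  haveI : IsClosed ((Y : Set X)) := hY
  let Q : X →L[𝕜] X ⧸ Y := LinearMap.mkContinuous Y.mkQ 1
    (fun m => by simpa using Submodule.Quotient.norm_mk_le Y m)
  have hQu : Q u ≠ 0 := by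
    simpa [Q, Submodule.Quotient.mk_eq_zero] using hu
  obtain ⟨g, -, hg⟩ := exists_dual_vector 𝕜 (Q u) (norm_ne_zero_iff.mpr hQu)
  refine ⟨g.comp Q, fun z hz => ?_, ?_⟩
  · have : Q z = 0 := by simpa [Q, Submodule.Quotient.mk_eq_zero] using hz
    simp [this]
  · have hn : ‖Q u‖ ≠ 0 := norm_ne_zero_iff.mpr hQu
    simp only [ContinuousLinearMap.comp_apply, hg]
    exact_mod_cast hn

lemma mySepSeq {α : Type*} (P : α → α → Prop)
    (h : ∀ l : List α, ∃ a, ∀ b ∈ l, P a b) :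
    ∃ Φ : ℕ → α, ∀ n i, i < n → P (Φ n) (Φ i) := by
  choose f hf using h
  let g : ℕ → List α := fun n => Nat.rec [] (fun _ ih => f ih :: ih) n
  have hg : ∀ n, g (n + 1) = f (g n) :: g n := fun n => rfl
  refine ⟨fun n => f (g n), ?_⟩
  have hmem : ∀ n i, i < n → f (g i) ∈ g n := by
    intro n
    induction n with
    | zero => intro i hi; omega
    | succ m ih =>
      intro i hi
      rw [hg]
      rcases Nat.lt_succ_iff_lt_or_eq.mp hi with h' | h'
      · exact List.mem_cons_of_mem _ (ih i h')
      · subst h'; exact List.mem_cons_self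
  intro n i hi
  exact hf (g n) _ (hmem n i hi)

lemma myNorming (w : ℕ → X) :
    ∃ (Y : Submodule 𝕜 X) (u : ℕ → X) (g : ℕ → StrongDual 𝕜 X),
      IsClosed (Y : Set X) ∧ (∀ n, w n ∈ Y) ∧ (∀ i, ‖g i‖ ≤ 1) ∧
      (∀ z ∈ Y, ∀ ε > 0, ∃ i, ‖z - u i‖ < ε) ∧
      (∀ z ∈ Y, ∀ ε > 0, ∃ i, ‖z‖ ≤ ‖g i z‖ + ε) := by
  haveI : ProperSpace 𝕜 := FiniteDimensional.proper_rclike 𝕜 𝕜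
  haveI : TopologicalSpace.SeparableSpace 𝕜 := inferInstance
  set Y : Submodule 𝕜 X := (Submodule.span 𝕜 (Set.range w)).topologicalClosure with hYdef
  have hsep : TopologicalSpace.IsSeparable (Y : Set X) := by
    have h1 : TopologicalSpace.IsSeparable (Set.range w) :=
      (Set.countable_range w).isSeparable
    have h2 := h1.span (R := 𝕜)
    have : (Y : Set X) = closure ((Submodule.span 𝕜 (Set.range w) : Submodule 𝕜 X) : Set X) := rfl
    rw [this]
    exact h2.closure
  obtain ⟨c, hc_count, hc_sub⟩ := hsep
  have hc_ne : c.Nonempty := by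
    rcases c.eq_empty_or_nonempty with h | h
    · exfalso
      have : (0 : X) ∈ closure c := hc_sub (Submodule.zero_mem Y)
      rw [h] at this; simpa using this
    · exact h
  obtain ⟨u, hu⟩ := Set.Countable.exists_eq_range hc_count hc_ne
  have hdual : ∀ i : ℕ, ∃ f : StrongDual 𝕜 X, ‖f‖ ≤ 1 ∧ f (u i) = (‖u i‖ : 𝕜) :=
    fun i => exists_dual_vector'' 𝕜 (u i)
  choose g hg1 hg2 using hdual
  have hdense : ∀ z ∈ Y, ∀ ε > 0, ∃ i : ℕ, ‖z - u i‖ < ε := by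
    intro z hz ε hε
    have hzc : z ∈ closure c := hc_sub hz
    rw [hu] at hzc
    obtain ⟨_, ⟨i, rfl⟩, hi⟩ := Metric.mem_closure_iff.mp hzc ε hε
    exact ⟨i, by rwa [dist_eq_norm] at hi⟩
  refine ⟨Y, u, g, Submodule.isClosed_topologicalClosure _, ?_, hg1, hdense, ?_⟩
  · intro n
    exact Submodule.le_topologicalClosure _ (Submodule.subset_span (Set.mem_range_self n))
  · intro z hz ε hε
    have hzc : z ∈ closure c := hc_sub hz
    rw [hu] at hzc
    obtain ⟨_, ⟨i, rfl⟩, hi⟩ := Metric.mem_closure_iff.mp hzc (ε/2) (by linarith)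
    refine ⟨i, ?_⟩
    have h1 : ‖z - u i‖ < ε/2 := by rwa [dist_eq_norm] at hi
    have h2 : ‖g i (u i)‖ = ‖u i‖ := by rw [hg2]; simp
    have h3 : ‖g i z - g i (u i)‖ ≤ ‖z - u i‖ := by
      calc ‖g i z - g i (u i)‖ = ‖g i (z - u i)‖ := by rw [map_sub]
        _ ≤ ‖g i‖ * ‖z - u i‖ := (g i).le_opNorm _
        _ ≤ 1 * ‖z - u i‖ := by
            exact mul_le_mul_of_nonneg_right (hg1 i) (norm_nonneg _)
        _ = ‖z - u i‖ := one_mul _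
    have h4 : ‖u i‖ ≥ ‖z‖ - ε/2 := by
      have := norm_sub_norm_le z (u i)  -- ‖z‖ - ‖u i‖ ≤ ‖z - u i‖
      linarith
    have h5 : ‖g i z‖ ≥ ‖g i (u i)‖ - ‖z - u i‖ := by
      have := norm_sub_norm_le (g i (u i)) (g i z)
      have h6 : ‖g i (u i) - g i z‖ ≤ ‖z - u i‖ := by rwa [norm_sub_rev] at h3
      linarith
    rw [h2] at h5
    linarith

lemma mySubseq {C : ℕ → ℝ} (f : ℕ → ℕ → 𝕜) (hf : ∀ n i, ‖f n i‖ ≤ C i) :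
    ∃ (σ : ℕ → ℕ) (g : ℕ → 𝕜), StrictMono σ ∧
      ∀ i, Tendsto (fun k => f (σ k) i) atTop (𝓝 (g i)) := by
  haveI : ProperSpace 𝕜 := FiniteDimensional.proper_rclike 𝕜 𝕜
  have hcomp : IsCompact (Set.univ.pi fun i : ℕ => closedBall (0 : 𝕜) (C i)) :=
    isCompact_univ_pi fun i => isCompact_closedBall _ _
  have hmem : ∀ n, f n ∈ Set.univ.pi fun i : ℕ => closedBall (0 : 𝕜) (C i) := by
    intro n
    rw [Set.mem_univ_pi]
    intro i
    rw [mem_closedBall_zero_iff]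
    exact hf n i
  obtain ⟨g, -, σ, hσ, hconv⟩ := hcomp.tendsto_subseq hmem
  exact ⟨σ, g, hσ, fun i => by
    have := (tendsto_pi_nhds.mp hconv) i
    exact this⟩

lemma myUniqueCluster {Z : Type*} [TopologicalSpace Z] {K : Set Z} (hK : IsCompact K)
    {v : ℕ → Z} (hv : ∀ n, v n ∈ K) {a : Z}
    (h : ∀ b ∈ K, ClusterPt b (map v atTop) → b = a) :
    Tendsto v atTop (𝓝 a) := by
  by_contra hcon
  rw [tendsto_iff_forall_eventually_mem] at hcon
  push_neg at hcon
  obtain ⟨U, hU, hnot⟩ := hcon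
  obtain ⟨U', hU'sub, hU'open, haU'⟩ := mem_nhds_iff.mp hU
  have hfreq : ∃ᶠ n in atTop, v n ∈ U'ᶜ := by
    exact hnot.mono fun n hn => fun h' => hn (hU'sub h')
  haveI : NeBot (atTop ⊓ 𝓟 {n | v n ∈ U'ᶜ}) := frequently_iff_neBot.mp hfreq
  set F : Filter Z := map v (atTop ⊓ 𝓟 {n | v n ∈ U'ᶜ}) with hF
  have hFK : F ≤ 𝓟 (K ∩ U'ᶜ) := by
    rw [le_principal_iff, hF, mem_map]
    filter_upwards [inf_le_right (a := (atTop : Filter ℕ))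
      (b := 𝓟 {n | v n ∈ U'ᶜ}) (mem_principal_self _)] with n hn
    exact ⟨hv n, hn⟩
  have hKU : IsCompact (K ∩ U'ᶜ) := hK.inter_right hU'open.isClosed_compl
  obtain ⟨b, hbmem, hbcl⟩ := hKU.exists_clusterPt hFK
  have hble : F ≤ map v atTop := map_mono inf_le_left
  have : ClusterPt b (map v atTop) := hbcl.mono hble
  have hba := h b hbmem.1 this
  exact hbmem.2 (hba ▸ haU')

lemma myWeakLimit {L : Set X} (hLc : IsWeaklyCompact 𝕜 L) (hL1 : L ⊆ closedBall (0:X) 1)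
    (Y : Submodule 𝕜 X) (hYc : IsClosed (Y : Set X)) (g : ℕ → StrongDual 𝕜 X)
    (hg1 : ∀ i, ‖g i‖ ≤ 1) (hgn : ∀ z ∈ Y, ∀ ε > 0, ∃ i, ‖z‖ ≤ ‖g i z‖ + ε)
    (v : ℕ → X) (hvL : ∀ n, v n ∈ L) (hvY : ∀ n, v n ∈ Y) :
    ∃ (σ : ℕ → ℕ) (y : X), StrictMono σ ∧ y ∈ L ∧ (y ∈ Y) ∧
      ∀ φ : StrongDual 𝕜 X, Tendsto (fun k => φ (v (σ k))) atTop (𝓝 (φ y)) := by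
  -- Step 1: subsequence making all g i converge
  have hbound : ∀ n i, ‖g i (v n)‖ ≤ 1 := by
    intro n i
    calc ‖g i (v n)‖ ≤ ‖g i‖ * ‖v n‖ := (g i).le_opNorm _
      _ ≤ 1 * 1 := by
          apply mul_le_mul (hg1 i) _ (norm_nonneg _) zero_le_one
          simpa [mem_closedBall_zero_iff] using hL1 (hvL n)
      _ = 1 := one_mul 1
  obtain ⟨σ, d, hσ, hconv⟩ := mySubseq (𝕜 := 𝕜) (C := fun _ => 1)
    (fun n i => g i (v n)) hbound
  -- eval maps are continuous on the weak space
  have hev : ∀ φ : StrongDual 𝕜 X, Continuous fun w : WeakSpace 𝕜 X => φ ((toWeakSpace 𝕜 X).symm w) :=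
    fun φ => WeakBilin.eval_continuous ((topDualPairing 𝕜 X).flip) φ
  have hevapp : ∀ (φ : StrongDual 𝕜 X) (x : X), φ ((toWeakSpace 𝕜 X).symm (toWeakSpace 𝕜 X x)) = φ x :=
    fun φ x => by simp
  -- the sequence in the weak space
  set vw : ℕ → WeakSpace 𝕜 X := fun k => toWeakSpace 𝕜 X (v (σ k)) with hvw
  have hvwK : ∀ k, vw k ∈ toWeakSpace 𝕜 X '' L := fun k => ⟨v (σ k), hvL _, rfl⟩
  -- analysis of an arbitrary cluster point
  have hcl : ∀ b ∈ toWeakSpace 𝕜 X '' L, ClusterPt b (map vw atTop) →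
      ((toWeakSpace 𝕜 X).symm b ∈ L ∧ (toWeakSpace 𝕜 X).symm b ∈ Y ∧
        ∀ i, g i ((toWeakSpace 𝕜 X).symm b) = d i) := by
    rintro b ⟨y', hy'L, rfl⟩ hb
    have key : ∀ (φ : StrongDual 𝕜 X) (c : 𝕜),
        Tendsto (fun k => φ (v (σ k))) atTop (𝓝 c) → φ y' = c := by
      intro φ c hc
      have h1 : ClusterPt (φ ((toWeakSpace 𝕜 X).symm (toWeakSpace 𝕜 X y')))
          (map (fun w : WeakSpace 𝕜 X => φ ((toWeakSpace 𝕜 X).symm w)) (map vw atTop)) :=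
        hb.map (hev φ).continuousAt Filter.tendsto_map
      rw [Filter.map_map] at h1
      have h2 : (fun w : WeakSpace 𝕜 X => φ ((toWeakSpace 𝕜 X).symm w)) ∘ vw
          = fun k => φ (v (σ k)) := by
        funext k
        simp [hvw, hevapp]
      rw [h2, hevapp] at h1
      have h4 : ClusterPt (φ y') (𝓝 c) := h1.mono hc
      exact eq_of_nhds_neBot h4
    constructor
    · simpa using hy'L
    constructor
    · by_contra hyY
      obtain ⟨φ, hφY, hφy⟩ := myAnn Y hYc (by simpa using hyY)
      have : φ y' = 0 := key φ 0 (by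
        have : (fun k => φ (v (σ k))) = fun _ => (0:𝕜) := funext fun k => hφY _ (hvY _)
        rw [this]; exact tendsto_const_nhds)
      exact hφy (by simpa using this)
    · intro i
      have := key (g i) (d i) (hconv i)
      simpa using this
  -- existence of a cluster point
  haveI : NeBot (map vw atTop) := Filter.map_neBot (m := vw) (f := atTop)
  obtain ⟨b₀, hb₀K, hb₀cl⟩ := hLc.exists_clusterPt (f := map vw atTop)
    (le_principal_iff.mpr (Filter.mem_map.mpr (Eventually.of_forall hvwK)))
  set y : X := (toWeakSpace 𝕜 X).symm b₀ with hy
  obtain ⟨hyL, hyY, hyg⟩ := hcl b₀ hb₀K hb₀cl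
  have huniq : ∀ b ∈ toWeakSpace 𝕜 X '' L, ClusterPt b (map vw atTop) → b = b₀ := by
    intro b hbK hbcl
    obtain ⟨hbL, hbY, hbg⟩ := hcl b hbK hbcl
    have hzero : (toWeakSpace 𝕜 X).symm b - y = 0 := by
      by_contra hne
      have hpos : 0 < ‖(toWeakSpace 𝕜 X).symm b - y‖ := norm_pos_iff.mpr hne
      obtain ⟨i, hi⟩ := hgn _ (Submodule.sub_mem Y hbY hyY)
        (‖(toWeakSpace 𝕜 X).symm b - y‖ / 2) (by linarith)
      rw [map_sub, hbg i, hyg i, sub_self, norm_zero] at hi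
      linarith
    have heq : (toWeakSpace 𝕜 X).symm b = y := by
      have := sub_eq_zero.mp hzero; exact this
    calc b = toWeakSpace 𝕜 X ((toWeakSpace 𝕜 X).symm b) := by simp
      _ = toWeakSpace 𝕜 X y := by rw [heq]
      _ = b₀ := by simp [hy]
  have htend : Tendsto vw atTop (𝓝 b₀) := myUniqueCluster hLc hvwK huniq
  refine ⟨σ, y, hσ, hyL, hyY, ?_⟩
  intro φ
  have h5 : Tendsto ((fun w : WeakSpace 𝕜 X => φ ((toWeakSpace 𝕜 X).symm w)) ∘ vw) atTop
      (𝓝 (φ ((toWeakSpace 𝕜 X).symm b₀))) := ((hev φ).tendsto b₀).comp htend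
  have h6 : (fun w : WeakSpace 𝕜 X => φ ((toWeakSpace 𝕜 X).symm w)) ∘ vw
      = fun k => φ (v (σ k)) := by
    funext k
    simp [hvw, hevapp]
  rw [h6] at h5
  exact h5

lemma myChi0Bound {A : Set (StrongDual 𝕜 X)} (hA : A.Nonempty) {M : ℝ} (hM : ∀ φ ∈ A, ‖φ‖ ≤ M)
    {L : Set X} (hL1 : L ⊆ closedBall (0:X) 1) :
    chi0D (fun u v : ↥L → 𝕜 => ⨆ y : L, ‖u y - v y‖)
      ((fun φ : StrongDual 𝕜 X => fun y : L => φ (y : X)) '' A) ≤ 2 * M := by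
  obtain ⟨φ₀, hφ₀⟩ := hA
  have hM0 : 0 ≤ M := le_trans (norm_nonneg φ₀) (hM φ₀ hφ₀)
  set dL : (↥L → 𝕜) → (↥L → 𝕜) → ℝ := fun u v => ⨆ y : L, ‖u y - v y‖ with hdL
  set res : StrongDual 𝕜 X → (↥L → 𝕜) := fun φ => fun y : L => φ (y : X) with hres
  set AL : Set (↥L → 𝕜) := res '' A with hAL
  have hL1' : ∀ w : ↥L, ‖(w : X)‖ ≤ 1 := fun w => by
    simpa [mem_closedBall_zero_iff] using hL1 w.2
  have hdL2M : ∀ a b : ↥L → 𝕜, a ∈ AL → b ∈ AL → dL a b ≤ 2 * M := by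
    rintro _ _ ⟨ψ, hψ, rfl⟩ ⟨χ, hχ, rfl⟩
    apply Real.iSup_le _ (by linarith)
    intro w
    calc ‖res ψ w - res χ w‖ = ‖(ψ - χ) (w : X)‖ := by simp [hres]
      _ ≤ ‖ψ - χ‖ * ‖(w : X)‖ := ContinuousLinearMap.le_opNorm _ _
      _ ≤ (‖ψ‖ + ‖χ‖) * 1 := by
          apply mul_le_mul (norm_sub_le _ _) (hL1' w) (norm_nonneg _)
          positivity
      _ ≤ 2 * M := by
          have := hM ψ hψ; have := hM χ hχ; linarith
  have hmem : res φ₀ ∈ AL := ⟨φ₀, hφ₀, rfl⟩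
  have hub : hdD dL AL {res φ₀} ≤ 2 * M := by
    apply Real.iSup_le _ (by linarith)
    intro a
    calc (⨅ b : ({res φ₀} : Set (↥L → 𝕜)), dL (a : ↥L → 𝕜) (b : ↥L → 𝕜))
        ≤ dL (a : ↥L → 𝕜) ((⟨res φ₀, rfl⟩ : ({res φ₀} : Set (↥L → 𝕜))) : ↥L → 𝕜) :=
          ciInf_le ⟨0, by rintro _ ⟨b, rfl⟩; exact Real.iSup_nonneg fun _ => norm_nonneg _⟩ _
      _ ≤ 2 * M := hdL2M _ _ a.2 hmem
  have h1 : chi0D dL AL ≤ hdD dL AL {res φ₀} := by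
    apply csInf_le
    · refine ⟨0, ?_⟩
      rintro q ⟨F, -, -, -, rfl⟩
      exact Real.iSup_nonneg fun a => Real.iInf_nonneg fun b => Real.iSup_nonneg
        fun _ => norm_nonneg _
    · exact ⟨{res φ₀}, Set.singleton_subset_iff.mpr hmem, Set.finite_singleton _,
        Set.singleton_nonempty _, rfl⟩
  linarith

lemma myChi0Empty {A : Set (StrongDual 𝕜 X)} (hA : A.Nonempty) :
    chi0D (fun u v : ↥(∅ : Set X) → 𝕜 => ⨆ y : (∅ : Set X), ‖u y - v y‖)
      ((fun φ : StrongDual 𝕜 X => fun y : (∅ : Set X) => φ (y : X)) '' A) = 0 := by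
  set dE : (↥(∅ : Set X) → 𝕜) → (↥(∅ : Set X) → 𝕜) → ℝ :=
    fun u v => ⨆ y : (∅ : Set X), ‖u y - v y‖ with hdE
  set res : StrongDual 𝕜 X → (↥(∅ : Set X) → 𝕜) := fun φ => fun y : (∅ : Set X) => φ (y : X) with hres
  set AL : Set (↥(∅ : Set X) → 𝕜) := res '' A with hAL
  haveI : Nonempty ↥AL := (hA.image res).to_subtype
  haveI : IsEmpty ↥(∅ : Set X) := by
    rw [Set.isEmpty_coe_sort]
  obtain ⟨φ₀, hφ₀⟩ := hA
  have hd0 : ∀ u v : ↥(∅ : Set X) → 𝕜, dE u v = 0 := fun u v => Real.iSup_of_isEmpty _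
  have hq0 : ∀ F : Set (↥(∅ : Set X) → 𝕜), F.Nonempty → hdD dE AL F = 0 := by
    intro F hFne
    haveI : Nonempty ↥F := hFne.to_subtype
    have h1 : (fun a : ↥AL => ⨅ b : F, dE (a : ↥(∅:Set X) → 𝕜) (b : ↥(∅:Set X) → 𝕜))
        = fun _ => (0:ℝ) := by
      funext a
      have h2 : (fun b : ↥F => dE (a : ↥(∅:Set X) → 𝕜) (b : ↥(∅:Set X) → 𝕜))
          = fun _ => (0:ℝ) := funext fun b => hd0 _ _
      rw [show (⨅ b : ↥F, dE (a : ↥(∅:Set X) → 𝕜) (b : ↥(∅:Set X) → 𝕜))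
        = ⨅ _ : ↥F, (0:ℝ) from congrArg iInf h2]
      exact ciInf_const
    rw [hdD, show (fun a : ↥AL => ⨅ b : F, dE (a : ↥(∅:Set X) → 𝕜) (b : ↥(∅:Set X) → 𝕜))
      = fun _ => (0:ℝ) from h1]
    exact ciSup_const
  have hmem0 : (0:ℝ) ∈ {r | ∃ F : Set (↥(∅:Set X) → 𝕜),
      F ⊆ AL ∧ F.Finite ∧ F.Nonempty ∧ r = hdD dE AL F} := by
    refine ⟨{res φ₀}, Set.singleton_subset_iff.mpr ⟨φ₀, hφ₀, rfl⟩, Set.finite_singleton _,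
      Set.singleton_nonempty _, (hq0 _ (Set.singleton_nonempty _)).symm⟩
  apply le_antisymm
  · apply csInf_le ⟨0, ?_⟩ hmem0
    rintro q ⟨F, -, -, hFne, rfl⟩
    exact (hq0 F hFne).ge
  · apply le_csInf ⟨0, hmem0⟩
    rintro q ⟨F, -, -, hFne, rfl⟩
    exact (hq0 F hFne).ge

lemma myHard {A : Set (StrongDual 𝕜 X)} (hA : A.Nonempty) {M : ℝ} (hM : ∀ φ ∈ A, ‖φ‖ ≤ M)
    {L : Set X} (hL1 : L ⊆ closedBall (0:X) 1) (hLc : IsWeaklyCompact 𝕜 L)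
    {s : ℝ} (hs0 : 0 ≤ s)
    (hS : ∀ z : ℕ → X, (∀ k, z k ∈ closedBall (0:X) 1) →
      (∀ φ : StrongDual 𝕜 X, Tendsto (fun k => φ (z k)) atTop (𝓝 0)) →
      Filter.limsup (fun k => ⨆ φ : A, ‖(φ : StrongDual 𝕜 X) (z k)‖) atTop ≤ s) :
    chi0D (fun u v : ↥L → 𝕜 => ⨆ y : L, ‖u y - v y‖)
      ((fun φ : StrongDual 𝕜 X => fun y : L => φ (y : X)) '' A) ≤ 8 * s := by
  haveI : Nonempty ↥A := hA.to_subtype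
  set dL : (↥L → 𝕜) → (↥L → 𝕜) → ℝ := fun u v => ⨆ y : L, ‖u y - v y‖ with hdL
  set res : StrongDual 𝕜 X → (↥L → 𝕜) := fun φ => fun y : L => φ (y : X) with hres
  set AL : Set (↥L → 𝕜) := res '' A with hAL
  haveI : Nonempty ↥AL := (hA.image res).to_subtype
  by_contra hcon
  push_neg at hcon
  set c := chi0D dL AL with hc
  have h8s : 8 * s < c := hcon
  set t : ℝ := (s + c / 8) / 2 with ht
  have hts : s < t := by rw [ht]; linarith
  have h8t : 8 * t < c := by rw [ht]; linarith
  have ht0 : 0 < t := lt_of_le_of_lt hs0 hts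
  obtain ⟨φ₀, hφ₀⟩ := hA
  -- basic bound on dL between restrictions of elements of A
  have hM0 : 0 ≤ M := le_trans (norm_nonneg φ₀) (hM φ₀ hφ₀)
  have hdL_nonneg : ∀ u v, 0 ≤ dL u v := fun u v => Real.iSup_nonneg fun _ => norm_nonneg _
  -- chi0D is a lower bound for each hausdorff distance
  have hFle : ∀ F : Set (↥L → 𝕜), F ⊆ AL → F.Finite → F.Nonempty → c ≤ hdD dL AL F := by
    intro F h1 h2 h3
    apply csInf_le
    · exact ⟨0, fun q hq => by
        obtain ⟨F', -, -, -, rfl⟩ := hq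
        exact Real.iSup_nonneg fun a => Real.iInf_nonneg fun b => hdL_nonneg _ _⟩
    · exact ⟨F, h1, h2, h3, rfl⟩
  -- L is nonempty
  have hLne : L.Nonempty := by
    by_contra hL
    rw [Set.not_nonempty_iff_eq_empty] at hL
    haveI : IsEmpty ↥L := by rw [hL]; infer_instance
    have h0 : hdD dL AL {res φ₀} ≤ 0 := by
      apply Real.iSup_le _ le_rfl
      intro a
      have : dL (a : ↥L → 𝕜) (res φ₀) = 0 := Real.iSup_of_isEmpty _
      calc ⨅ b : ({res φ₀} : Set (↥L → 𝕜)), dL (a : ↥L → 𝕜) (b : ↥L → 𝕜)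
          ≤ dL (a : ↥L → 𝕜) (⟨res φ₀, rfl⟩ : ({res φ₀} : Set (↥L → 𝕜))) :=
            ciInf_le ⟨0, by rintro q ⟨b, rfl⟩; exact hdL_nonneg _ _⟩ _
        _ = 0 := this
    have := hFle {res φ₀} (by simp [hAL]; exact ⟨φ₀, hφ₀, rfl⟩) (Set.finite_singleton _)
      (Set.singleton_nonempty _)
    linarith
  obtain ⟨y₀, hy₀⟩ := hLne
  haveI : Nonempty ↥L := ⟨⟨y₀, hy₀⟩⟩
  -- selection of far functionals
  have hsel : ∀ G : Set (StrongDual 𝕜 X), G ⊆ A → G.Finite → G.Nonempty →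
      ∃ ψ ∈ A, ∀ χ ∈ G, 8 * t < dL (res ψ) (res χ) := by
    intro G hGA hGfin hGne
    set F : Set (↥L → 𝕜) := res '' G with hF
    haveI : Nonempty ↥F := (hGne.image res).to_subtype
    have h1 : 8 * t < hdD dL AL F :=
      lt_of_lt_of_le h8t (hFle F (Set.image_mono hGA) (hGfin.image res) (hGne.image res))
    rw [hdD] at h1
    obtain ⟨a, ha⟩ := exists_lt_of_lt_ciSup h1
    obtain ⟨ψ, hψA, hψeq⟩ := a.2
    refine ⟨ψ, hψA, fun χ hχ => ?_⟩
    have h2 : (⨅ b : F, dL (a : ↥L → 𝕜) (b : ↥L → 𝕜)) ≤ dL (a : ↥L → 𝕜) (res χ) :=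
      ciInf_le ⟨0, by rintro q ⟨b, rfl⟩; exact hdL_nonneg _ _⟩
        (⟨res χ, Set.mem_image_of_mem res hχ⟩ : ↥F)
    have := lt_of_lt_of_le ha h2
    rwa [← hψeq] at this
  -- construct the separated sequence in A
  have hlist : ∀ l : List {φ : StrongDual 𝕜 X // φ ∈ A}, ∃ a : {φ : StrongDual 𝕜 X // φ ∈ A},
      ∀ b ∈ l, 8 * t < dL (res (a : StrongDual 𝕜 X)) (res (b : StrongDual 𝕜 X)) := by
    intro l
    rcases l.eq_nil_or_concat with rfl | -
    · exact ⟨⟨φ₀, hφ₀⟩, by simp⟩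
    · set G : Set (StrongDual 𝕜 X) := (fun b : {φ : StrongDual 𝕜 X // φ ∈ A} => (b : StrongDual 𝕜 X)) '' {b | b ∈ l}
        with hG
      rcases Set.eq_empty_or_nonempty G with hGe | hGne
      · refine ⟨⟨φ₀, hφ₀⟩, fun b hb => ?_⟩
        exfalso
        exact (Set.eq_empty_iff_forall_notMem.mp hGe) b (⟨b, hb, rfl⟩)
      · obtain ⟨ψ, hψA, hψ⟩ := hsel G
          (by rintro _ ⟨b, -, rfl⟩; exact b.2)
          ((l.finite_toSet).image _) hGne
        exact ⟨⟨ψ, hψA⟩, fun b hb => hψ (b : StrongDual 𝕜 X) ⟨b, hb, rfl⟩⟩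
  obtain ⟨Φ, hΦ⟩ := mySepSeq _ hlist
  -- witnesses
  have hWex : ∀ n i : ℕ, ∃ x : X, x ∈ L ∧
      (i < n → 8 * t < ‖(Φ n : StrongDual 𝕜 X) x - (Φ i : StrongDual 𝕜 X) x‖) := by
    intro n i
    by_cases h : i < n
    · have h1 := hΦ n i h
      rw [hdL] at h1
      have hbdd : BddAbove (Set.range fun y : ↥L =>
          ‖res (Φ n : StrongDual 𝕜 X) y - res (Φ i : StrongDual 𝕜 X) y‖) := by
        refine ⟨‖(Φ n : StrongDual 𝕜 X)‖ + ‖(Φ i : StrongDual 𝕜 X)‖, ?_⟩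
        rintro q ⟨y, rfl⟩
        have hy1 : ‖(y : X)‖ ≤ 1 := by
          simpa [mem_closedBall_zero_iff] using hL1 y.2
        calc ‖res (Φ n : StrongDual 𝕜 X) y - res (Φ i : StrongDual 𝕜 X) y‖
            = ‖((Φ n : StrongDual 𝕜 X) - (Φ i : StrongDual 𝕜 X)) (y : X)‖ := by simp [hres]
          _ ≤ ‖(Φ n : StrongDual 𝕜 X) - (Φ i : StrongDual 𝕜 X)‖ * ‖(y : X)‖ :=
              ContinuousLinearMap.le_opNorm _ _
          _ ≤ (‖(Φ n : StrongDual 𝕜 X)‖ + ‖(Φ i : StrongDual 𝕜 X)‖) * 1 := by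
              apply mul_le_mul (norm_sub_le _ _) hy1 (norm_nonneg _)
              positivity
          _ = _ := mul_one _
      obtain ⟨y, hy⟩ := exists_lt_of_lt_ciSup h1
      exact ⟨(y : X), y.2, fun _ => by simpa [hres] using hy⟩
    · exact ⟨y₀, hy₀, fun h' => absurd h' h⟩
  choose W hWL hWsep using hWex
  -- separable closed subspace containing all witnesses
  obtain ⟨Y, u, g, hYc, hwY, hg1, hdense, hgn⟩ :=
    myNorming (𝕜 := 𝕜) (fun k => W (Nat.unpair k).1 (Nat.unpair k).2)
  have hWY : ∀ n i, W n i ∈ Y := by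
    intro n i
    have := hwY (Nat.pair n i)
    simpa [Nat.unpair_pair] using this
  -- first extraction: make Φ pointwise Cauchy on Y
  have hb1 : ∀ n i, ‖(Φ n : StrongDual 𝕜 X) (u i)‖ ≤ M * ‖u i‖ := by
    intro n i
    calc ‖(Φ n : StrongDual 𝕜 X) (u i)‖ ≤ ‖(Φ n : StrongDual 𝕜 X)‖ * ‖u i‖ :=
        ContinuousLinearMap.le_opNorm _ _
      _ ≤ M * ‖u i‖ := mul_le_mul_of_nonneg_right (hM _ (Φ n).2) (norm_nonneg _)
  obtain ⟨σ₁, cv, hσ₁, hconv1⟩ := mySubseq (C := fun i => M * ‖u i‖)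
    (fun n i => (Φ n : StrongDual 𝕜 X) (u i)) hb1
  have hcauchyY : ∀ z ∈ Y, CauchySeq (fun k => (Φ (σ₁ k) : StrongDual 𝕜 X) z) := by
    intro z hz
    rw [Metric.cauchySeq_iff]
    intro ε hε
    have hM1 : (0:ℝ) < M + 1 := by linarith
    obtain ⟨i, hi⟩ := hdense z hz (ε / (4 * (M + 1))) (by positivity)
    have hc1 : CauchySeq (fun k => (Φ (σ₁ k) : StrongDual 𝕜 X) (u i)) := (hconv1 i).cauchySeq
    obtain ⟨N, hN⟩ := Metric.cauchySeq_iff.mp hc1 (ε / 2) (by linarith)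
    refine ⟨N, fun m hm n hn => ?_⟩
    have key : ∀ j, ‖(Φ (σ₁ j) : StrongDual 𝕜 X) z - (Φ (σ₁ j) : StrongDual 𝕜 X) (u i)‖
        ≤ M * (ε / (4 * (M + 1))) := by
      intro j
      calc ‖(Φ (σ₁ j) : StrongDual 𝕜 X) z - (Φ (σ₁ j) : StrongDual 𝕜 X) (u i)‖
          = ‖(Φ (σ₁ j) : StrongDual 𝕜 X) (z - u i)‖ := by rw [map_sub]
        _ ≤ ‖(Φ (σ₁ j) : StrongDual 𝕜 X)‖ * ‖z - u i‖ := ContinuousLinearMap.le_opNorm _ _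
        _ ≤ M * (ε / (4 * (M + 1))) := by
            apply mul_le_mul (hM _ (Φ (σ₁ j)).2) (le_of_lt hi) (norm_nonneg _) hM0
    have hMe : M * (ε / (4 * (M + 1))) ≤ ε / 4 := by
      have h4 : (0:ℝ) < 4 * (M + 1) := by linarith
      rw [← mul_div_assoc, div_le_iff₀ h4]
      nlinarith
    have h2 := hN m hm n hn
    rw [dist_eq_norm] at *
    calc ‖(Φ (σ₁ m) : StrongDual 𝕜 X) z - (Φ (σ₁ n) : StrongDual 𝕜 X) z‖
        ≤ ‖(Φ (σ₁ m) : StrongDual 𝕜 X) z - (Φ (σ₁ m) : StrongDual 𝕜 X) (u i)‖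
          + ‖(Φ (σ₁ m) : StrongDual 𝕜 X) (u i) - (Φ (σ₁ n) : StrongDual 𝕜 X) (u i)‖
          + ‖(Φ (σ₁ n) : StrongDual 𝕜 X) (u i) - (Φ (σ₁ n) : StrongDual 𝕜 X) z‖ := by
            have := norm_add₃_le (a := (Φ (σ₁ m) : StrongDual 𝕜 X) z - (Φ (σ₁ m) : StrongDual 𝕜 X) (u i))
              (b := (Φ (σ₁ m) : StrongDual 𝕜 X) (u i) - (Φ (σ₁ n) : StrongDual 𝕜 X) (u i))
              (c := (Φ (σ₁ n) : StrongDual 𝕜 X) (u i) - (Φ (σ₁ n) : StrongDual 𝕜 X) z)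
            simpa using this
      _ < M * (ε / (4 * (M + 1))) + ε / 2 + M * (ε / (4 * (M + 1))) := by
          have k1 := key m
          have k2 := key n
          have k3 : ‖(Φ (σ₁ n) : StrongDual 𝕜 X) (u i) - (Φ (σ₁ n) : StrongDual 𝕜 X) z‖
              = ‖(Φ (σ₁ n) : StrongDual 𝕜 X) z - (Φ (σ₁ n) : StrongDual 𝕜 X) (u i)‖ := norm_sub_rev _ _
          rw [k3]
          linarith
      _ ≤ ε / 4 + ε / 2 + ε / 4 := by linarith
      _ = ε := by ring
  -- second: the witness sequence and its weak limit
  set v : ℕ → X := fun j => W (σ₁ (j + 1)) (σ₁ j) with hv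
  have hvL : ∀ j, v j ∈ L := fun j => hWL _ _
  have hvY : ∀ j, v j ∈ Y := fun j => hWY _ _
  have hvsep : ∀ j, 8 * t <
      ‖(Φ (σ₁ (j + 1)) : StrongDual 𝕜 X) (v j) - (Φ (σ₁ j) : StrongDual 𝕜 X) (v j)‖ :=
    fun j => hWsep _ _ (hσ₁ (Nat.lt_succ_self j))
  obtain ⟨σ₂, y, hσ₂, hyL, hyY, hweak⟩ := myWeakLimit hLc hL1 Y hYc g hg1 hgn v hvL hvY
  -- the weakly null sequence
  set z : ℕ → X := fun k => (2 : 𝕜)⁻¹ • (v (σ₂ k) - y) with hz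
  have hnorm2 : ‖(2:𝕜)⁻¹‖ = 2⁻¹ := by
    rw [norm_inv]
    norm_num
  have hL1' : ∀ x ∈ L, ‖x‖ ≤ 1 := fun x hx => by
    simpa [mem_closedBall_zero_iff] using hL1 hx
  have hz1 : ∀ k, z k ∈ closedBall (0:X) 1 := by
    intro k
    rw [mem_closedBall_zero_iff, hz]
    calc ‖(2 : 𝕜)⁻¹ • (v (σ₂ k) - y)‖ = 2⁻¹ * ‖v (σ₂ k) - y‖ := by
          rw [norm_smul, hnorm2]
      _ ≤ 2⁻¹ * (‖v (σ₂ k)‖ + ‖y‖) := by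
          apply mul_le_mul_of_nonneg_left (norm_sub_le _ _) (by norm_num)
      _ ≤ 2⁻¹ * (1 + 1) := by
          have := hL1' _ (hvL (σ₂ k))
          have := hL1' _ hyL
          apply mul_le_mul_of_nonneg_left (by linarith) (by norm_num)
      _ = 1 := by norm_num
  have hznull : ∀ φ : StrongDual 𝕜 X, Tendsto (fun k => φ (z k)) atTop (𝓝 0) := by
    intro φ
    have h1 : (fun k => φ (z k)) = fun k => (2:𝕜)⁻¹ * (φ (v (σ₂ k)) - φ y) := by
      funext k
      rw [hz]
      simp [map_smul, map_sub, smul_eq_mul]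
    rw [h1]
    have h2 : Tendsto (fun k => φ (v (σ₂ k)) - φ y) atTop (𝓝 0) := by
      have := (hweak φ).sub (tendsto_const_nhds (x := φ y))
      simpa using this
    have := h2.const_mul ((2:𝕜)⁻¹)
    simpa using this
  have hlimle := hS z hz1 hznull
  -- lower bound for the limsup
  obtain ⟨N, hN⟩ := Metric.cauchySeq_iff.mp (hcauchyY y hyY) (2 * t) (by linarith)
  have hSk : ∀ k, N ≤ k → 3 * t / 2 ≤ ⨆ φ : A, ‖(φ : StrongDual 𝕜 X) (z k)‖ := by
    intro k hk
    set a : {φ : StrongDual 𝕜 X // φ ∈ A} := Φ (σ₁ (σ₂ k + 1)) with ha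
    set b : {φ : StrongDual 𝕜 X // φ ∈ A} := Φ (σ₁ (σ₂ k)) with hb
    have hk1 : N ≤ σ₂ k := le_trans hk (hσ₂.le_apply)
    have h1 : 8 * t < ‖(a : StrongDual 𝕜 X) (v (σ₂ k)) - (b : StrongDual 𝕜 X) (v (σ₂ k))‖ := hvsep (σ₂ k)
    have h2 : ‖(a : StrongDual 𝕜 X) y - (b : StrongDual 𝕜 X) y‖ < 2 * t := by
      have := hN (σ₂ k + 1) (by omega) (σ₂ k) hk1
      rwa [dist_eq_norm] at this
    have h3 : 3 * t ≤ ‖(a : StrongDual 𝕜 X) (z k) - (b : StrongDual 𝕜 X) (z k)‖ := by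
      have heq : (a : StrongDual 𝕜 X) (z k) - (b : StrongDual 𝕜 X) (z k)
          = (2:𝕜)⁻¹ * (((a : StrongDual 𝕜 X) (v (σ₂ k)) - (b : StrongDual 𝕜 X) (v (σ₂ k)))
            - ((a : StrongDual 𝕜 X) y - (b : StrongDual 𝕜 X) y)) := by
        rw [hz]
        simp only [map_smul, map_sub, smul_eq_mul]
        ring
      rw [heq, norm_mul, hnorm2]
      have h4 : 6 * t ≤ ‖((a : StrongDual 𝕜 X) (v (σ₂ k)) - (b : StrongDual 𝕜 X) (v (σ₂ k)))
          - ((a : StrongDual 𝕜 X) y - (b : StrongDual 𝕜 X) y)‖ := by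
        have := norm_sub_norm_le ((a : StrongDual 𝕜 X) (v (σ₂ k)) - (b : StrongDual 𝕜 X) (v (σ₂ k)))
          ((a : StrongDual 𝕜 X) y - (b : StrongDual 𝕜 X) y)
        linarith
      linarith
    have hbddz : BddAbove (Set.range fun φ : A => ‖(φ : StrongDual 𝕜 X) (z k)‖) := by
      refine ⟨M, ?_⟩
      rintro q ⟨φ, rfl⟩
      have hzk : ‖z k‖ ≤ 1 := by simpa [mem_closedBall_zero_iff] using hz1 k
      calc ‖(φ : StrongDual 𝕜 X) (z k)‖ ≤ ‖(φ : StrongDual 𝕜 X)‖ * ‖z k‖ :=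
          ContinuousLinearMap.le_opNorm _ _
        _ ≤ M * 1 := mul_le_mul (hM _ φ.2) hzk (norm_nonneg _) hM0
        _ = M := mul_one M
    have h5 : 3 * t ≤ ‖(a : StrongDual 𝕜 X) (z k)‖ + ‖(b : StrongDual 𝕜 X) (z k)‖ :=
      le_trans h3 (norm_sub_le _ _)
    rcases le_or_gt (3 * t / 2) ‖(a : StrongDual 𝕜 X) (z k)‖ with h6 | h6
    · exact le_trans h6 (le_ciSup hbddz (⟨(a : StrongDual 𝕜 X), a.2⟩ : ↥A))
    · have h7 : 3 * t / 2 ≤ ‖(b : StrongDual 𝕜 X) (z k)‖ := by linarith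
      exact le_trans h7 (le_ciSup hbddz (⟨(b : StrongDual 𝕜 X), b.2⟩ : ↥A))
  have hup : ∀ k, (⨆ φ : A, ‖(φ : StrongDual 𝕜 X) (z k)‖) ≤ M := by
    intro k
    apply ciSup_le
    intro φ
    have hzk : ‖z k‖ ≤ 1 := by simpa [mem_closedBall_zero_iff] using hz1 k
    calc ‖(φ : StrongDual 𝕜 X) (z k)‖ ≤ ‖(φ : StrongDual 𝕜 X)‖ * ‖z k‖ := ContinuousLinearMap.le_opNorm _ _
      _ ≤ M * 1 := mul_le_mul (hM _ φ.2) hzk (norm_nonneg _) hM0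
      _ = M := mul_one M
  have hlow : 3 * t / 2 ≤ Filter.limsup (fun k => ⨆ φ : A, ‖(φ : StrongDual 𝕜 X) (z k)‖) atTop :=
    myLeLimsup (eventually_atTop.mpr ⟨N, hSk⟩) hup
  linarith

lemma myEasy {A : Set (StrongDual 𝕜 X)} (hA : A.Nonempty) {M : ℝ} (hM : ∀ φ ∈ A, ‖φ‖ ≤ M)
    (x : ℕ → X) (hx1 : ∀ k, x k ∈ closedBall (0:X) 1)
    (hxw : ∀ φ : StrongDual 𝕜 X, Tendsto (fun k => φ (x k)) atTop (𝓝 0)) :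
    ∃ L : Set X, L ⊆ closedBall (0 : X) 1 ∧ IsWeaklyCompact 𝕜 L ∧
      Filter.limsup (fun k => ⨆ φ : A, ‖(φ : StrongDual 𝕜 X) (x k)‖) atTop ≤
        chi0D (fun u v : ↥L → 𝕜 => ⨆ y : L, ‖u y - v y‖)
          ((fun φ : StrongDual 𝕜 X => fun y : L => φ (y : X)) '' A) := by
  haveI : Nonempty ↥A := hA.to_subtype
  obtain ⟨φ₀, hφ₀⟩ := hA
  have hM0 : 0 ≤ M := le_trans (norm_nonneg φ₀) (hM φ₀ hφ₀)
  set L : Set X := insert (0:X) (Set.range x) with hLdef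
  have hsub : L ⊆ closedBall (0:X) 1 :=
    Set.insert_subset (mem_closedBall_self zero_le_one) (Set.range_subset_iff.mpr hx1)
  -- weak compactness of L
  have hinj : Function.Injective ((topDualPairing 𝕜 X).flip) := by
    intro a b hab
    by_contra hne
    obtain ⟨φ, -, hφ2⟩ := exists_dual_vector 𝕜 (a - b) (norm_ne_zero_iff.mpr (sub_ne_zero.mpr hne))
    have h1 : φ a = φ b := by
      have h0 := congrArg (fun m => m φ) hab
      simpa [LinearMap.flip_apply, topDualPairing_apply] using h0
    have h2 : φ (a - b) = 0 := by rw [map_sub, h1, sub_self]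
    rw [hφ2] at h2
    have : ‖a - b‖ ≠ 0 := norm_ne_zero_iff.mpr (sub_ne_zero.mpr hne)
    exact this (by exact_mod_cast h2)
  have htw : Tendsto (fun k => toWeakSpace 𝕜 X (x k)) atTop (𝓝 (toWeakSpace 𝕜 X 0)) := by
    refine (WeakBilin.tendsto_iff_forall_eval_tendsto (topDualPairing 𝕜 X).flip hinj).mpr ?_
    intro φ
    have h := hxw φ
    rw [← map_zero φ] at h
    exact h
  have hcomp : IsWeaklyCompact 𝕜 L := by
    have himg : toWeakSpace 𝕜 X '' L
        = insert (toWeakSpace 𝕜 X 0) (Set.range fun k => toWeakSpace 𝕜 X (x k)) := by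
      rw [hLdef, Set.image_insert_eq]
      congr 1
      rw [← Set.range_comp]
      rfl
    rw [IsWeaklyCompact, himg]
    exact htw.isCompact_insert_range
  refine ⟨L, hsub, hcomp, ?_⟩
  -- notation
  set dL : (↥L → 𝕜) → (↥L → 𝕜) → ℝ := fun u v => ⨆ y : L, ‖u y - v y‖ with hdL
  set res : StrongDual 𝕜 X → (↥L → 𝕜) := fun φ => fun y : L => φ (y : X) with hres
  set AL : Set (↥L → 𝕜) := res '' A with hAL
  haveI : Nonempty ↥AL := Set.Nonempty.to_subtype ⟨res φ₀, ⟨φ₀, hφ₀, rfl⟩⟩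
  have hxL : ∀ k, x k ∈ L := fun k => Set.mem_insert_of_mem _ (Set.mem_range_self k)
  have hL1' : ∀ w : ↥L, ‖(w : X)‖ ≤ 1 := fun w => by
    simpa [mem_closedBall_zero_iff] using hsub w.2
  -- dL between elements of AL is at most 2M
  have hdL2M : ∀ a b : ↥L → 𝕜, a ∈ AL → b ∈ AL → dL a b ≤ 2 * M := by
    rintro _ _ ⟨ψ, hψ, rfl⟩ ⟨χ, hχ, rfl⟩
    apply Real.iSup_le _ (by linarith)
    intro w
    calc ‖res ψ w - res χ w‖ = ‖(ψ - χ) (w : X)‖ := by simp [hres]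
      _ ≤ ‖ψ - χ‖ * ‖(w : X)‖ := ContinuousLinearMap.le_opNorm _ _
      _ ≤ (‖ψ‖ + ‖χ‖) * 1 := by
          apply mul_le_mul (norm_sub_le _ _) (hL1' w) (norm_nonneg _)
          positivity
      _ ≤ 2 * M := by
          have := hM ψ hψ; have := hM χ hχ; linarith
  -- it suffices to bound by each Hausdorff distance
  have hbb : ∀ (G : Set (↥L → 𝕜)) (aa : ↥L → 𝕜),
      BddBelow (Set.range fun b : G => dL aa (b : ↥L → 𝕜)) := fun G aa =>
    ⟨0, by rintro _ ⟨b, rfl⟩; exact Real.iSup_nonneg fun _ => norm_nonneg _⟩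
  have hmem0 : hdD dL AL {res φ₀} ∈ {r | ∃ F : Set (↥L → 𝕜),
      F ⊆ AL ∧ F.Finite ∧ F.Nonempty ∧ r = hdD dL AL F} := by
    refine ⟨{res φ₀}, ?_, Set.finite_singleton _, Set.singleton_nonempty _, rfl⟩
    rw [Set.singleton_subset_iff]
    exact ⟨φ₀, hφ₀, rfl⟩
  apply le_csInf ⟨_, hmem0⟩
  rintro q ⟨F, hFA, hFfin, hFne, rfl⟩
  haveI : Nonempty ↥F := hFne.to_subtype
  haveI : Finite ↥F := hFfin.to_subtype
  set T : ℕ → ℝ := fun k => ⨆ f : F, ‖(f : ↥L → 𝕜) ⟨x k, hxL k⟩‖ with hT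
  -- bounded above for the sup over AL of the inf
  have hDbdd : BddAbove (Set.range fun a : ↥AL => ⨅ b : F, dL (a : ↥L → 𝕜) (b : ↥L → 𝕜)) := by
    refine ⟨2 * M, ?_⟩
    rintro _ ⟨a, rfl⟩
    obtain ⟨b₀⟩ := (inferInstance : Nonempty ↥F)
    calc (⨅ b : F, dL (a : ↥L → 𝕜) (b : ↥L → 𝕜)) ≤ dL (a : ↥L → 𝕜) (b₀ : ↥L → 𝕜) :=
        ciInf_le (hbb F _) b₀
      _ ≤ 2 * M := hdL2M _ _ a.2 (hFA b₀.2)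
  -- pointwise bound
  have hmain : ∀ k, (⨆ φ : A, ‖(φ : StrongDual 𝕜 X) (x k)‖) ≤ hdD dL AL F + T k := by
    intro k
    apply ciSup_le
    intro φ
    have h1 : ∀ f : ↥F, ‖(φ : StrongDual 𝕜 X) (x k)‖ - T k ≤ dL (res (φ : StrongDual 𝕜 X)) (f : ↥L → 𝕜) := by
      intro f
      have hfT : ‖(f : ↥L → 𝕜) ⟨x k, hxL k⟩‖ ≤ T k := by
        apply le_ciSup (f := fun f : F => ‖(f : ↥L → 𝕜) (⟨x k, hxL k⟩ : ↥L)‖)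
        refine ⟨M, ?_⟩
        rintro _ ⟨f', rfl⟩
        obtain ⟨χ, hχ, hfeq⟩ := hFA f'.2
        show ‖(f' : ↥L → 𝕜) ⟨x k, hxL k⟩‖ ≤ M
        rw [← hfeq]
        calc ‖res χ ⟨x k, hxL k⟩‖ = ‖χ (x k)‖ := rfl
          _ ≤ ‖χ‖ * ‖x k‖ := ContinuousLinearMap.le_opNorm _ _
          _ ≤ M * 1 := mul_le_mul (hM χ hχ) (hL1' ⟨x k, hxL k⟩) (norm_nonneg _) hM0
          _ = M := mul_one M
      have hφf : ‖(φ : StrongDual 𝕜 X) (x k) - (f : ↥L → 𝕜) ⟨x k, hxL k⟩‖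
          ≤ dL (res (φ : StrongDual 𝕜 X)) (f : ↥L → 𝕜) := by
        obtain ⟨χ, hχ, hfeq⟩ := hFA f.2
        apply le_ciSup (f := fun w : ↥L =>
          ‖res (φ : StrongDual 𝕜 X) w - (f : ↥L → 𝕜) w‖) _ (⟨x k, hxL k⟩ : ↥L)
        refine ⟨‖(φ : StrongDual 𝕜 X)‖ + M, ?_⟩
        rintro _ ⟨w, rfl⟩
        show ‖res (φ : StrongDual 𝕜 X) w - (f : ↥L → 𝕜) w‖ ≤ ‖(φ : StrongDual 𝕜 X)‖ + M
        rw [← hfeq]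
        calc ‖res (φ : StrongDual 𝕜 X) w - res χ w‖ = ‖((φ : StrongDual 𝕜 X) - χ) (w : X)‖ := by simp [hres]
          _ ≤ ‖(φ : StrongDual 𝕜 X) - χ‖ * ‖(w : X)‖ := ContinuousLinearMap.le_opNorm _ _
          _ ≤ (‖(φ : StrongDual 𝕜 X)‖ + M) * 1 := by
              apply mul_le_mul _ (hL1' w) (norm_nonneg _)
              · positivity
              · have := hM χ hχ
                have := norm_sub_le (φ : StrongDual 𝕜 X) χ
                linarith
          _ = _ := mul_one _
      have hsplit : ‖(φ : StrongDual 𝕜 X) (x k)‖ ≤ ‖(φ : StrongDual 𝕜 X) (x k) - (f : ↥L → 𝕜) ⟨x k, hxL k⟩‖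
          + ‖(f : ↥L → 𝕜) ⟨x k, hxL k⟩‖ := by
        have := norm_add_le ((φ : StrongDual 𝕜 X) (x k) - (f : ↥L → 𝕜) ⟨x k, hxL k⟩)
          ((f : ↥L → 𝕜) ⟨x k, hxL k⟩)
        simpa using this
      linarith
    have h2 : ‖(φ : StrongDual 𝕜 X) (x k)‖ - T k ≤ ⨅ f : F, dL (res (φ : StrongDual 𝕜 X)) (f : ↥L → 𝕜) :=
      le_ciInf h1
    have h3 : (⨅ f : F, dL (res (φ : StrongDual 𝕜 X)) (f : ↥L → 𝕜)) ≤ hdD dL AL F := by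
      apply le_ciSup (f := fun a : ↥AL => ⨅ b : F, dL (a : ↥L → 𝕜) (b : ↥L → 𝕜)) hDbdd
        (⟨res (φ : StrongDual 𝕜 X), ⟨(φ : StrongDual 𝕜 X), φ.2, rfl⟩⟩ : ↥AL)
    linarith
  -- T tends to zero
  have hT0 : ∀ k, 0 ≤ T k := fun k => Real.iSup_nonneg fun _ => norm_nonneg _
  have hTtend : Tendsto T atTop (𝓝 0) := by
    rw [Metric.tendsto_atTop]
    intro ε hε
    choose ψ hψA hψeq using fun f : ↥F => hFA f.2
    have hev : ∀ᶠ k in atTop, ∀ f : ↥F, ‖(f : ↥L → 𝕜) ⟨x k, hxL k⟩‖ ≤ ε / 2 := by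
      rw [Filter.eventually_all]
      intro f
      have h4 : Tendsto (fun k => ψ f (x k)) atTop (𝓝 0) := hxw (ψ f)
      have h5 : Tendsto (fun k => ‖ψ f (x k)‖) atTop (𝓝 0) := by
        simpa using h4.norm
      have h6 := (Metric.tendsto_atTop.mp h5) (ε / 2) (by linarith)
      obtain ⟨N, hN⟩ := h6
      rw [Filter.eventually_atTop]
      refine ⟨N, fun k hk => ?_⟩
      have := hN k hk
      rw [Real.dist_eq, sub_zero, abs_of_nonneg (norm_nonneg _)] at this
      calc ‖(f : ↥L → 𝕜) ⟨x k, hxL k⟩‖ = ‖ψ f (x k)‖ := by rw [← hψeq f]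
        _ ≤ ε / 2 := le_of_lt this
    rw [Filter.eventually_atTop] at hev
    obtain ⟨N, hN⟩ := hev
    refine ⟨N, fun k hk => ?_⟩
    have h7 : T k ≤ ε / 2 := ciSup_le (hN k hk)
    rw [Real.dist_eq, sub_zero, abs_of_nonneg (hT0 k)]
    linarith
  -- conclude via limsup
  have hS0 : ∀ k, 0 ≤ ⨆ φ : A, ‖(φ : StrongDual 𝕜 X) (x k)‖ :=
    fun k => Real.iSup_nonneg fun _ => norm_nonneg _
  apply le_of_forall_pos_le_add
  intro ε hε
  have hevT : ∀ᶠ k in atTop, T k ≤ ε := by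
    have := (Metric.tendsto_atTop.mp hTtend) ε hε
    obtain ⟨N, hN⟩ := this
    rw [Filter.eventually_atTop]
    refine ⟨N, fun k hk => ?_⟩
    have := hN k hk
    rw [Real.dist_eq, sub_zero, abs_of_nonneg (hT0 k)] at this
    linarith
  apply myLimsupLe hS0
  filter_upwards [hevT] with k hk
  calc (⨆ φ : A, ‖(φ : StrongDual 𝕜 X) (x k)‖) ≤ hdD dL AL F + T k := hmain k
    _ ≤ hdD dL AL F + ε := by linarith

end Helpers

/-- For a Banach space `X` and a nonempty bounded set `A ⊆ X*`:
`(1/8)·χ_m(A) ≤ sup { limsup_k sup_{x*∈A} |x*(x_k)| : (x_k) weakly null in B_X }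
  ≤ χ_m(A)`. -/
theorem chiMackey_equiv_sup_weaklyNull
    {𝕜 : Type*} [RCLike 𝕜] {X : Type*}
    [NormedAddCommGroup X] [NormedSpace 𝕜 X] [CompleteSpace X]
    (A : Set (StrongDual 𝕜 X)) (hA : A.Nonempty) (hbdd : Bornology.IsBounded A) :
    (1 / 8) * chiMackey 𝕜 A ≤
        sSup {r | ∃ x : ℕ → X, (∀ k, x k ∈ closedBall (0 : X) 1) ∧
          (∀ φ : StrongDual 𝕜 X, Tendsto (fun k => φ (x k)) atTop (nhds 0)) ∧
          r = Filter.limsup (fun k => ⨆ φ : A, ‖(φ : StrongDual 𝕜 X) (x k)‖) atTop} ∧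
      sSup {r | ∃ x : ℕ → X, (∀ k, x k ∈ closedBall (0 : X) 1) ∧
          (∀ φ : StrongDual 𝕜 X, Tendsto (fun k => φ (x k)) atTop (nhds 0)) ∧
          r = Filter.limsup (fun k => ⨆ φ : A, ‖(φ : StrongDual 𝕜 X) (x k)‖) atTop} ≤
        chiMackey 𝕜 A := by
  classical
  obtain ⟨M, hM⟩ := isBounded_iff_forall_norm_le.mp hbdd
  obtain ⟨φ₀, hφ₀⟩ := hA
  have hM0 : 0 ≤ M := le_trans (norm_nonneg φ₀) (hM φ₀ hφ₀)
  haveI : Nonempty ↥A := Set.Nonempty.to_subtype ⟨φ₀, hφ₀⟩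
  set S : Set ℝ := {r | ∃ x : ℕ → X, (∀ k, x k ∈ closedBall (0 : X) 1) ∧
    (∀ φ : StrongDual 𝕜 X, Tendsto (fun k => φ (x k)) atTop (nhds 0)) ∧
    r = Filter.limsup (fun k => ⨆ φ : A, ‖(φ : StrongDual 𝕜 X) (x k)‖) atTop} with hSdef
  -- 0 belongs to S
  have h0S : (0:ℝ) ∈ S := by
    refine ⟨fun _ => (0:X), fun k => mem_closedBall_self zero_le_one,
      fun φ => by simpa using (tendsto_const_nhds : Tendsto (fun _ : ℕ => (0:𝕜)) atTop (𝓝 0)),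
      ?_⟩
    have h1 : (fun k : ℕ => ⨆ φ : A, ‖(φ : StrongDual 𝕜 X) ((fun _ => (0:X)) k)‖)
        = fun _ : ℕ => (0:ℝ) := by
      funext k
      simp
    rw [h1, limsup_const]
  -- S is bounded above by M
  have hSub : ∀ r ∈ S, r ≤ M := by
    rintro r ⟨x, hx1, hxw, rfl⟩
    apply myLimsupLe (a := 0) (fun k => Real.iSup_nonneg fun _ => norm_nonneg _)
    apply Eventually.of_forall
    intro k
    apply ciSup_le
    intro φ
    have hxk : ‖x k‖ ≤ 1 := by simpa [mem_closedBall_zero_iff] using hx1 k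
    calc ‖(φ : StrongDual 𝕜 X) (x k)‖ ≤ ‖(φ : StrongDual 𝕜 X)‖ * ‖x k‖ := ContinuousLinearMap.le_opNorm _ _
      _ ≤ M * 1 := mul_le_mul (hM _ φ.2) hxk (norm_nonneg _) hM0
      _ = M := mul_one M
  have hSbdd : BddAbove S := ⟨M, fun r hr => hSub r hr⟩
  have hs0 : 0 ≤ sSup S := le_csSup hSbdd h0S
  -- the set defining chiMackey
  have hchi : chiMackey 𝕜 A = sSup {r | ∃ L : Set X, L ⊆ closedBall (0 : X) 1 ∧
      IsWeaklyCompact 𝕜 L ∧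
      r = chi0D (fun u v : ↥L → 𝕜 => ⨆ y : L, ‖u y - v y‖)
        ((fun φ : StrongDual 𝕜 X => fun y : L => φ (y : X)) '' A)} := rfl
  set R : Set ℝ := {r | ∃ L : Set X, L ⊆ closedBall (0 : X) 1 ∧ IsWeaklyCompact 𝕜 L ∧
    r = chi0D (fun u v : ↥L → 𝕜 => ⨆ y : L, ‖u y - v y‖)
      ((fun φ : StrongDual 𝕜 X => fun y : L => φ (y : X)) '' A)} with hRdef
  have h0R : (0:ℝ) ∈ R := by
    refine ⟨∅, Set.empty_subset _, ?_, (myChi0Empty ⟨φ₀, hφ₀⟩).symm⟩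
    show IsCompact (toWeakSpace 𝕜 X '' ∅)
    rw [Set.image_empty]
    exact isCompact_empty
  have hRbdd : BddAbove R := by
    refine ⟨2 * M, ?_⟩
    rintro r ⟨L, hL1, -, rfl⟩
    exact myChi0Bound ⟨φ₀, hφ₀⟩ hM hL1
  constructor
  · have h1 : chiMackey 𝕜 A ≤ 8 * sSup S := by
      rw [hchi]
      apply csSup_le ⟨0, h0R⟩
      rintro r ⟨L, hL1, hLc, rfl⟩
      exact myHard ⟨φ₀, hφ₀⟩ hM hL1 hLc hs0
        (fun z hz1 hz2 => le_csSup hSbdd ⟨z, hz1, hz2, rfl⟩)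
    linarith
  · rw [hchi]
    apply csSup_le ⟨0, h0S⟩
    rintro r ⟨x, hx1, hxw, rfl⟩
    obtain ⟨L, hL1, hLc, hle⟩ := myEasy ⟨φ₀, hφ₀⟩ hM x hx1 hxw
    exact le_trans hle (le_csSup hRbdd ⟨L, hL1, hLc, rfl⟩)
end
end
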